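/- arXiv:2510.08652 — 11 statements merged into one kernel-verified Lean document; each statement's English description precedes it below -/
import Mathlib

section
/- For real x with 0 < x < 1, the series Σ_{n=1}^∞ n·xⁿ converges, and the limit as x → 1⁻ of (Σ_{n=1}^∞ n·xⁿ − 1/(log x)²) equals −1/12. -/
open Filter Topology

private lemma hasSum_aux {x : ℝ} (h0 : 0 < x) (h1 : x < 1) :
    HasSum (fun n : ℕ => ((n + 1 : ℕ) : ℝ) * x ^ (n + 1)) (x / (1 - x) ^ 2) := by
  have hx : ‖x‖ < 1 := by rw [Real.norm_eq_abs, abs_lt]; constructor <;> linarith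
  have h := hasSum_coe_mul_geometric_of_norm_lt_one (r := x) hx
  have h2 := (hasSum_nat_add_iff (f := fun n : ℕ => (n : ℝ) * x ^ n) 1).mpr (by simpa using h)
  convert h2 using 2 with n

private lemma slopelim : Tendsto (fun t : ℝ => (Real.exp t - 1) / t) (𝓝[>] (0:ℝ)) (𝓝 1) := by
  have h := (Real.hasDerivAt_exp 0)
  rw [hasDerivAt_iff_tendsto_slope] at h
  have h2 : Tendsto (slope Real.exp 0) (𝓝[>] (0:ℝ)) (𝓝 (Real.exp 0)) :=
    h.mono_left (nhdsWithin_mono _ (fun y hy => ne_of_gt hy))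
  simp only [Real.exp_zero] at h2
  refine h2.congr (fun t => ?_)
  simp [slope_def_field, Real.exp_zero]

private lemma Nbound : ∀ t : ℝ, 0 < t → t ≤ 1 →
    |(t^2 * Real.exp t - (Real.exp t - 1)^2) / t^4 + 1/12| ≤ t := by
  intro t ht ht1
  have hb := Real.exp_bound (x := t) (by rw [abs_of_pos ht]; linarith) (n := 5) (by norm_num)
  have hsum : ∑ i ∈ Finset.range 5, t ^ i / i.factorial
      = 1 + t + t^2/2 + t^3/6 + t^4/24 := by
    simp [Finset.sum_range_succ]
    norm_num [Nat.factorial]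
  rw [hsum, abs_of_pos ht] at hb
  have hb' : |Real.exp t - (1 + t + t^2/2 + t^3/6 + t^4/24)| ≤ t^5/100 := by
    refine hb.trans (le_of_eq ?_)
    norm_num [Nat.factorial, mul_one_div]
  set r := Real.exp t - (1 + t + t^2/2 + t^3/6 + t^4/24) with hr
  clear_value r
  have hE : Real.exp t = (1 + t + t^2/2 + t^3/6 + t^4/24) + r := by rw [hr]; ring
  have key : t^2 * Real.exp t - (Real.exp t - 1)^2 + t^4/12
      = -t^5/12 - t^6/36 - t^7/72 - t^8/576 - r*(2*t + t^3/3 + t^4/12) - r^2 := by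
    rw [hE]; ring
  have ht4 : (0:ℝ) < t^4 := by positivity
  have ht5 : (0:ℝ) < t^5 := by positivity
  have h65 : t^6 ≤ t^5 := pow_le_pow_of_le_one ht.le ht1 (by norm_num)
  have h75 : t^7 ≤ t^5 := pow_le_pow_of_le_one ht.le ht1 (by norm_num)
  have h85 : t^8 ≤ t^5 := pow_le_pow_of_le_one ht.le ht1 (by norm_num)
  have h105 : t^10 ≤ t^5 := pow_le_pow_of_le_one ht.le ht1 (by norm_num)
  have hA : |r*(2*t + t^3/3 + t^4/12)| ≤ 3*(t^5/100) := by
    rw [abs_mul]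
    have h1 : |2*t + t^3/3 + t^4/12| ≤ 3 := by
      rw [abs_of_nonneg (by positivity)]
      have : t^3 ≤ 1 := pow_le_one₀ ht.le ht1
      have : t^4 ≤ 1 := pow_le_one₀ ht.le ht1
      nlinarith
    calc |r| * |2*t + t^3/3 + t^4/12| ≤ (t^5/100) * 3 := by
          apply mul_le_mul hb' h1 (abs_nonneg _) (by positivity)
      _ = 3*(t^5/100) := by ring
  have hr2 : r^2 ≤ t^5/10000 := by
    have habs2 := abs_le.mp hb'
    have h1 : r^2 ≤ (t^5/100)^2 := sq_le_sq' habs2.1 habs2.2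
    have h2 : (t^5/100)^2 = t^10/10000 := by ring
    linarith
  rw [abs_le] at hA
  have habs : |t^2 * Real.exp t - (Real.exp t - 1)^2 + t^4/12| ≤ t^5 := by
    rw [abs_le, key]
    have ht6 : (0:ℝ) ≤ t^6 := by positivity
    have ht7 : (0:ℝ) ≤ t^7 := by positivity
    have ht8 : (0:ℝ) ≤ t^8 := by positivity
    constructor
    · linarith [sq_nonneg r, hr2, hA.1, hA.2, h65, h75, h85, ht5.le]
    · linarith [sq_nonneg r, hr2, hA.1, hA.2, h65, h75, h85, ht5.le]
  have heq : (t^2 * Real.exp t - (Real.exp t - 1)^2) / t^4 + 1/12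
      = (t^2 * Real.exp t - (Real.exp t - 1)^2 + t^4/12) / t^4 := by
    field_simp
  rw [heq, abs_div, abs_of_pos ht4, div_le_iff₀ ht4]
  calc |t^2 * Real.exp t - (Real.exp t - 1)^2 + t^4/12| ≤ t^5 := habs
    _ = t * t^4 := by ring

private lemma core : Tendsto (fun t : ℝ => Real.exp t / (Real.exp t - 1)^2 - 1/t^2)
    (𝓝[>] (0:ℝ)) (𝓝 (-1/12)) := by
  have hN : Tendsto (fun t : ℝ => (t^2 * Real.exp t - (Real.exp t - 1)^2) / t^4)
      (𝓝[>] (0:ℝ)) (𝓝 (-1/12)) := by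
    have heps : Tendsto (fun t : ℝ => (t^2 * Real.exp t - (Real.exp t - 1)^2) / t^4 + 1/12)
        (𝓝[>] (0:ℝ)) (𝓝 0) := by
      apply squeeze_zero_norm'
      · filter_upwards [Ioo_mem_nhdsGT_of_mem (by norm_num : (0:ℝ) ∈ Set.Ico 0 1)] with t ht
        exact Nbound t ht.1 ht.2.le
      · exact tendsto_id.mono_left nhdsWithin_le_nhds
    have h2 := heps.sub_const (1/12)
    simp only [add_sub_cancel_right] at h2
    convert h2 using 2
    norm_num
  have hq : Tendsto (fun t : ℝ => t / (Real.exp t - 1)) (𝓝[>] (0:ℝ)) (𝓝 1) := by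
    have h2 := slopelim.inv₀ one_ne_zero
    simp only [inv_one] at h2
    refine h2.congr (fun t => ?_)
    rw [inv_div]
  have hmul := hN.mul (hq.mul hq)
  rw [show (-1/12 : ℝ) * (1 * 1) = -1/12 by norm_num] at hmul
  refine hmul.congr' ?_
  filter_upwards [self_mem_nhdsWithin] with t (ht : 0 < t)
  have h1 : Real.exp t - 1 ≠ 0 := by
    have h2 : Real.exp 0 < Real.exp t := Real.exp_lt_exp.mpr ht
    rw [Real.exp_zero] at h2
    linarith
  have ht' : t ≠ 0 := ne_of_gt ht
  field_simp

theorem ramanujan_sum_of_naturals :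
    (∀ x : ℝ, 0 < x → x < 1 → Summable (fun n : ℕ => ((n + 1 : ℕ) : ℝ) * x ^ (n + 1))) ∧
    Tendsto (fun x : ℝ =>
        (∑' n : ℕ, ((n + 1 : ℕ) : ℝ) * x ^ (n + 1)) - 1 / (Real.log x) ^ 2)
      (𝓝[Set.Ioo (0 : ℝ) 1] 1) (𝓝 (-1 / 12)) := by
  constructor
  · exact fun x h0 h1 => (hasSum_aux h0 h1).summable
  · have hlog : Tendsto (fun x : ℝ => -Real.log x) (𝓝[Set.Ioo (0:ℝ) 1] 1) (𝓝[>] (0:ℝ)) := by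
      rw [tendsto_nhdsWithin_iff]
      constructor
      · have hcont : Tendsto (fun x : ℝ => -Real.log x) (𝓝 1) (𝓝 0) := by
          have h3 : ContinuousAt (fun x : ℝ => -Real.log x) 1 :=
            (Real.continuousAt_log (by norm_num)).neg
          simpa using h3.tendsto
        exact hcont.mono_left nhdsWithin_le_nhds
      · filter_upwards [self_mem_nhdsWithin] with x hx
        have := Real.log_neg hx.1 hx.2
        simpa using this
    have hcomp := core.comp hlog
    refine hcomp.congr' ?_
    filter_upwards [self_mem_nhdsWithin] with x hx
    have hx0 := hx.1
    have hx1 := hx.2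
    have hts : (∑' n : ℕ, ((n + 1 : ℕ) : ℝ) * x ^ (n + 1)) = x / (1 - x)^2 :=
      (hasSum_aux hx0 hx1).tsum_eq
    have hexp : Real.exp (-Real.log x) = 1/x := by
      rw [Real.exp_neg, Real.exp_log hx0, one_div]
    have hx0' : x ≠ 0 := ne_of_gt hx0
    have hx1' : (1:ℝ) - x ≠ 0 := by intro h; nlinarith
    simp only [Function.comp_apply, hexp]
    rw [hts, show (-Real.log x)^2 = (Real.log x)^2 by ring]
    have hfe : (1/x) / (1/x - 1)^2 = x / (1-x)^2 := by
      rw [show 1/x - 1 = (1-x)/x by field_simp, div_pow]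
      field_simp
    rw [hfe]
end

section
/- For real x with 0 < x < 1, the series Σ_{n=1}^∞ n³·xⁿ converges, and the limit as x → 1⁻ of (Σ_{n=1}^∞ n³·xⁿ − 6/(−log x)⁴) equals 1/120. -/
open Filter Topology

noncomputable def cc (k : ℕ) : ℝ :=
  (if 4 ≤ k then ((3:ℝ)^(k-4) + 4*2^(k-4) + 1)/(Nat.factorial (k-4) : ℝ) else 0)
    - 6*((4:ℝ)^k - 4*3^k + 6*2^k - 4)/(Nat.factorial k : ℝ) - (if k = 0 then 6 else 0)

lemma hasSum_expR (x : ℝ) : HasSum (fun n : ℕ => x ^ n / (Nat.factorial n : ℝ)) (Real.exp x) := by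
  rw [Real.exp_eq_exp_ℝ]
  exact NormedSpace.expSeries_div_hasSum_exp x

noncomputable def NN (t : ℝ) : ℝ :=
  t^4*(Real.exp (3*t) + 4*Real.exp (2*t) + Real.exp t)
    - (6*Real.exp (4*t) - 24*Real.exp (3*t) + 36*Real.exp (2*t) - 24*Real.exp t) - 6

lemma hasSum_piece1 (t : ℝ) :
    HasSum (fun k : ℕ => (if 4 ≤ k then ((3:ℝ)^(k-4) + 4*2^(k-4) + 1)/(Nat.factorial (k-4) : ℝ) else 0) * t ^ k)
      (t^4*(Real.exp (3*t) + 4*Real.exp (2*t) + Real.exp t)) := by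
  set f : ℕ → ℝ := fun k =>
    (if 4 ≤ k then ((3:ℝ)^(k-4) + 4*2^(k-4) + 1)/(Nat.factorial (k-4) : ℝ) else 0) * t ^ k with hf
  have e3 := (((hasSum_expR (3*t)).add ((hasSum_expR (2*t)).mul_left 4)).add
    (hasSum_expR t)).mul_left (t^4)
  have h1 : HasSum (fun n : ℕ => f (n + 4))
      (t^4*(Real.exp (3*t) + 4*Real.exp (2*t) + Real.exp t)) := by
    convert e3 using 1
    · rfl
    · funext n
      simp only [hf, Nat.add_sub_cancel, if_pos (Nat.le_add_left 4 n)]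
      rw [mul_pow, mul_pow]
      ring
  have h2 := (hasSum_nat_add_iff (f := f) 4).1 h1
  have hz : ∑ i ∈ Finset.range 4, f i = 0 := by
    simp [hf, Finset.sum_range_succ]
  rw [hz, add_zero] at h2
  exact h2

lemma hasSum_cc (t : ℝ) : HasSum (fun k => cc k * t ^ k) (NN t) := by
  have p1 := hasSum_piece1 t
  have p2 : HasSum (fun k : ℕ => (6*((4:ℝ)^k - 4*3^k + 6*2^k - 4)/(Nat.factorial k : ℝ)) * t ^ k)
      (6*Real.exp (4*t) - 24*Real.exp (3*t) + 36*Real.exp (2*t) - 24*Real.exp t) := by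
    have h := ((((hasSum_expR (4*t)).mul_left 6).sub ((hasSum_expR (3*t)).mul_left 24)).add
      ((hasSum_expR (2*t)).mul_left 36)).sub ((hasSum_expR t).mul_left 24)
    convert h using 1
    · rfl
    · funext n
      rw [mul_pow, mul_pow, mul_pow]
      ring
  have p3 : HasSum (fun k : ℕ => (if k = 0 then (6:ℝ) else 0) * t ^ k) 6 := by
    have h : HasSum (fun k : ℕ => if k = 0 then (6:ℝ) * t ^ 0 else 0) (6 * t ^ 0) :=
      hasSum_ite_eq 0 _
    simp only [pow_zero, mul_one] at h
    convert h using 1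
    funext n
    split <;> simp_all
  have h := (p1.sub p2).sub p3
  simp only [NN]
  convert h using 1
  · rfl
  funext b
  simp only [cc]
  ring

lemma cc_eight : cc 8 = 1 / 120 := by
  norm_num [cc, Nat.factorial]

lemma cc_lt_eight {k : ℕ} (hk : k < 8) : cc k = 0 := by
  interval_cases k <;> norm_num [cc, Nat.factorial]

lemma hasSum_shift {t : ℝ} (ht : t ≠ 0) :
    HasSum (fun k : ℕ => cc (k + 8) * t ^ k) (NN t / t ^ 8) := by
  have h := hasSum_cc t
  have h8 : HasSum (fun n : ℕ => cc (n + 8) * t ^ (n + 8)) (NN t) := by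
    rw [hasSum_nat_add_iff (f := fun k => cc k * t ^ k) 8]
    have hz : ∑ i ∈ Finset.range 8, cc i * t ^ i = 0 := by
      apply Finset.sum_eq_zero
      intro i hi
      rw [cc_lt_eight (Finset.mem_range.1 hi), zero_mul]
    rw [hz, add_zero]
    exact h
  have := h8.div_const (t ^ 8)
  convert this using 2 with n
  · rfl
  rw [pow_add]
  field_simp

lemma summable_abs_cc : Summable (fun k => |cc k|) := by
  have s1 : Summable (fun k : ℕ =>
      (if 4 ≤ k then ((3:ℝ)^(k-4) + 4*2^(k-4) + 1)/(Nat.factorial (k-4) : ℝ) else 0)) := by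
    have := (hasSum_piece1 1).summable
    simpa using this
  have s2 : Summable (fun k : ℕ => 6*((4:ℝ)^k + 4*3^k + 6*2^k + 4)/(Nat.factorial k : ℝ)) := by
    have h := ((((hasSum_expR 4).mul_left 6).add ((hasSum_expR 3).mul_left 24)).add
      ((hasSum_expR 2).mul_left 36)).add ((hasSum_expR 1).mul_left 24)
    apply h.summable.congr
    intro n
    field_simp
    ring
  have s3 : Summable (fun k : ℕ => if k = 0 then (6:ℝ) else 0) :=
    (hasSum_ite_eq 0 (6:ℝ)).summable
  apply Summable.of_nonneg_of_le (fun k => abs_nonneg _) _ ((s1.add s2).add s3)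
  intro k
  have ha : (0:ℝ) ≤ if 4 ≤ k then ((3:ℝ)^(k-4) + 4*2^(k-4) + 1)/(Nat.factorial (k-4) : ℝ) else 0 := by
    split <;> positivity
  have hc : (0:ℝ) ≤ if k = 0 then (6:ℝ) else 0 := by split <;> norm_num
  have hb : |6*((4:ℝ)^k - 4*3^k + 6*2^k - 4)/(Nat.factorial k : ℝ)|
      ≤ 6*((4:ℝ)^k + 4*3^k + 6*2^k + 4)/(Nat.factorial k : ℝ) := by
    rw [abs_div, abs_of_nonneg (by positivity : (0:ℝ) ≤ (Nat.factorial k : ℝ))]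
    gcongr
    rw [abs_mul, abs_of_nonneg (by norm_num : (0:ℝ) ≤ 6)]
    have h4 : (0:ℝ) ≤ 4^k := by positivity
    have h3 : (0:ℝ) ≤ 3^k := by positivity
    have h2 : (0:ℝ) ≤ 2^k := by positivity
    have : |(4:ℝ)^k - 4*3^k + 6*2^k - 4| ≤ 4^k + 4*3^k + 6*2^k + 4 := by
      rw [abs_le]
      constructor <;> nlinarith
    nlinarith [this]
  calc |cc k| ≤ |(if 4 ≤ k then ((3:ℝ)^(k-4) + 4*2^(k-4) + 1)/(Nat.factorial (k-4) : ℝ) else 0)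
        - 6*((4:ℝ)^k - 4*3^k + 6*2^k - 4)/(Nat.factorial k : ℝ)| + |(if k = 0 then (6:ℝ) else 0)| :=
          abs_sub _ _
    _ ≤ (|(if 4 ≤ k then ((3:ℝ)^(k-4) + 4*2^(k-4) + 1)/(Nat.factorial (k-4) : ℝ) else 0)|
        + |6*((4:ℝ)^k - 4*3^k + 6*2^k - 4)/(Nat.factorial k : ℝ)|) + |(if k = 0 then (6:ℝ) else 0)| :=
          add_le_add_left (abs_sub _ _) _
    _ ≤ _ := by
          rw [abs_of_nonneg ha, abs_of_nonneg hc]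
          exact add_le_add_left (add_le_add_right hb _) _

lemma tendsto_NN_div : Tendsto (fun t : ℝ => NN t / t ^ 8) (𝓝[>] (0:ℝ)) (𝓝 (1/120)) := by
  have hsum9 : Summable fun k : ℕ => |cc (k + 9)| := (summable_nat_add_iff (f := fun k => |cc k|) 9).2 summable_abs_cc
  set M : ℝ := ∑' k : ℕ, |cc (k + 9)| with hM
  rw [← tendsto_sub_nhds_zero_iff]
  apply squeeze_zero_norm' (a := fun t : ℝ => M * t)
  · filter_upwards [Ioc_mem_nhdsGT (by norm_num : (0:ℝ) < 1)] with t ht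
    obtain ⟨ht0, ht1⟩ := ht
    have hs := hasSum_shift (ne_of_gt ht0)
    have h0 : NN t / t ^ 8 = ∑' k : ℕ, cc (k + 8) * t ^ k := hs.tsum_eq.symm
    have h1 : ∑' k : ℕ, cc (k + 8) * t ^ k
        = cc 8 * t ^ 0 + ∑' k : ℕ, cc (k + 9) * t ^ (k + 1) := by
      rw [Summable.tsum_eq_zero_add hs.summable]
    have hnn : ∀ k : ℕ, ‖cc (k + 9) * t ^ (k + 1)‖ ≤ |cc (k + 9)| * t := by
      intro k
      rw [norm_mul, norm_pow, Real.norm_eq_abs, Real.norm_eq_abs,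
        abs_of_nonneg ht0.le]
      have : t ^ (k + 1) ≤ t ^ 1 := pow_le_pow_of_le_one ht0.le ht1 (by omega)
      have h2 : (0:ℝ) ≤ |cc (k+9)| := abs_nonneg _
      nlinarith [pow_nonneg ht0.le (k+1)]
    have hsn : Summable fun k : ℕ => ‖cc (k + 9) * t ^ (k + 1)‖ := by
      apply Summable.of_nonneg_of_le (fun k => norm_nonneg _) hnn (hsum9.mul_right t)
    calc ‖NN t / t ^ 8 - 1/120‖ = ‖∑' k : ℕ, cc (k + 9) * t ^ (k + 1)‖ := by
          rw [h0, h1, cc_eight]; simp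
      _ ≤ ∑' k : ℕ, ‖cc (k + 9) * t ^ (k + 1)‖ := norm_tsum_le_tsum_norm hsn
      _ ≤ ∑' k : ℕ, |cc (k + 9)| * t := Summable.tsum_le_tsum hnn hsn (hsum9.mul_right t)
      _ = M * t := by rw [tsum_mul_right]
  · have : Tendsto (fun t : ℝ => M * t) (𝓝 (0:ℝ)) (𝓝 (M * 0)) :=
      (continuous_const.mul continuous_id).tendsto 0
    simpa using this.mono_left nhdsWithin_le_nhds

lemma hasSum_cubes {x : ℝ} (hx : |x| < 1) :
    HasSum (fun n : ℕ => ((n + 1 : ℕ) : ℝ) ^ 3 * x ^ (n + 1))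
      (x * (x^2 + 4*x + 1) / (1 - x)^4) := by
  have hx' : ‖x‖ < 1 := by rwa [Real.norm_eq_abs]
  have h3 := (hasSum_choose_mul_geometric_of_norm_lt_one 3 hx').mul_left 6
  have h2 := (hasSum_choose_mul_geometric_of_norm_lt_one 2 hx').mul_left 6
  have h1 := hasSum_choose_mul_geometric_of_norm_lt_one 1 hx'
  have h := ((h3.sub h2).add h1).mul_left x
  have hx1 : (1:ℝ) - x ≠ 0 := by
    intro h'
    rw [sub_eq_zero] at h'
    rw [← h'] at hx
    simp at hx
  have hval : x * (6 * (1 / (1 - x) ^ (3+1)) - 6 * (1 / (1 - x) ^ (2+1)) + 1 / (1-x)^(1+1))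
      = x * (x^2 + 4*x + 1) / (1 - x)^4 := by
    field_simp
    ring
  rw [← hval]
  convert h using 1
  · rfl
  funext n
  have d3 : (n+3).descFactorial 3 = (n+1)*((n+2)*(n+3)) := by
    simp [Nat.descFactorial_succ]
  have d2 : (n+2).descFactorial 2 = (n+1)*(n+2) := by
    simp [Nat.descFactorial_succ]
  have hn3 : (n+1)*((n+2)*(n+3)) = 6 * (n+3).choose 3 := by
    rw [← d3, Nat.descFactorial_eq_factorial_mul_choose]
    norm_num [Nat.factorial]
  have hn2 : (n+1)*(n+2) = 2 * (n+2).choose 2 := by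
    rw [← d2, Nat.descFactorial_eq_factorial_mul_choose]
    norm_num [Nat.factorial]
  have e3 : ((n+1:ℝ))*((n+2)*(n+3)) = 6 * (((n + 3).choose 3 : ℕ) : ℝ) := by
    exact_mod_cast congrArg (Nat.cast : ℕ → ℝ) hn3
  have e2 : ((n+1:ℝ))*(n+2) = 2 * (((n + 2).choose 2 : ℕ) : ℝ) := by
    exact_mod_cast congrArg (Nat.cast : ℕ → ℝ) hn2
  have e1 : (((n + 1).choose 1 : ℕ) : ℝ) = (n+1) := by
    rw [Nat.choose_one_right]
    push_cast
    ring
  push_cast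
  push_cast at e3 e2 e1
  rw [pow_succ]
  linear_combination (x^n*x)*e3 - 3*(x^n*x)*e2 - (x^n*x)*e1

lemma NN_eq (t : ℝ) :
    NN t = t^4*((Real.exp t)^3 + 4*(Real.exp t)^2 + Real.exp t) - 6*(Real.exp t - 1)^4 := by
  have h4 : Real.exp (4*t) = (Real.exp t)^4 := by
    rw [← Real.exp_nat_mul]; norm_num
  have h3 : Real.exp (3*t) = (Real.exp t)^3 := by
    rw [← Real.exp_nat_mul]; norm_num
  have h2 : Real.exp (2*t) = (Real.exp t)^2 := by
    rw [← Real.exp_nat_mul]; norm_num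
  simp only [NN, h4, h3, h2]
  ring

lemma tendsto_exp_slope : Tendsto (fun t : ℝ => (Real.exp t - 1)/t) (𝓝[>] (0:ℝ)) (𝓝 1) := by
  have h := Real.hasDerivAt_exp 0
  rw [hasDerivAt_iff_tendsto_slope] at h
  have h' := h.mono_left (nhdsWithin_mono _ (by intro y hy; exact ne_of_gt hy : Set.Ioi (0:ℝ) ⊆ {(0:ℝ)}ᶜ))
  simp only [Real.exp_zero] at h'
  apply h'.congr
  intro t
  simp [slope_def_field]

lemma alg {x : ℝ} (hx0 : 0 < x) (hx1 : x < 1) :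
    x*(x^2+4*x+1)/(1-x)^4 - 6/(-Real.log x)^4
      = (NN (-Real.log x) / (-Real.log x)^8)
          / (((Real.exp (-Real.log x) - 1)/(-Real.log x))^4) := by
  set t := -Real.log x with htdef
  have ht : 0 < t := by
    have := Real.log_neg hx0 hx1
    simp only [htdef]
    linarith
  have hxe : Real.exp t = x⁻¹ := by
    rw [htdef, Real.exp_neg, Real.exp_log hx0]
  have hxne : x ≠ 0 := ne_of_gt hx0
  have h1x : (1:ℝ) - x ≠ 0 := sub_ne_zero.2 (ne_of_gt (by linarith))
  have htne : t ≠ 0 := ne_of_gt ht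
  rw [NN_eq, hxe]
  rw [show x⁻¹ - 1 = (1-x)/x by field_simp]
  field_simp
  ring

lemma tendsto_neg_log : Tendsto (fun x : ℝ => -Real.log x)
    (𝓝[Set.Ioo (0:ℝ) 1] 1) (𝓝[>] (0:ℝ)) := by
  apply tendsto_nhdsWithin_of_tendsto_nhds_of_eventually_within
  · have h := (Real.continuousAt_log one_ne_zero).neg.tendsto
    simp only [Pi.neg_apply, Real.log_one, neg_zero] at h
    exact h.mono_left nhdsWithin_le_nhds
  · filter_upwards [self_mem_nhdsWithin] with x hx
    have := Real.log_neg hx.1 hx.2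
    simp only [Set.mem_Ioi]
    linarith

theorem ramanujan_sum_of_cubes :
    (∀ x : ℝ, 0 < x → x < 1 → Summable (fun n : ℕ => ((n + 1 : ℕ) : ℝ) ^ 3 * x ^ (n + 1))) ∧
    Tendsto (fun x : ℝ =>
        (∑' n : ℕ, ((n + 1 : ℕ) : ℝ) ^ 3 * x ^ (n + 1)) - 6 / (-Real.log x) ^ 4)
      (𝓝[Set.Ioo (0 : ℝ) 1] 1) (𝓝 (1 / 120)) := by
  constructor
  · intro x hx0 hx1
    exact (hasSum_cubes (by rw [abs_of_pos hx0]; exact hx1)).summable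
  · have hG : Tendsto (fun t : ℝ => (NN t / t^8) / (((Real.exp t - 1)/t)^4))
        (𝓝[>] (0:ℝ)) (𝓝 (1/120)) := by
      have := tendsto_NN_div.div (tendsto_exp_slope.pow 4) (by norm_num : (1:ℝ)^4 ≠ 0)
      simpa [Pi.div_def] using this
    have hcomp := hG.comp tendsto_neg_log
    apply hcomp.congr'
    filter_upwards [self_mem_nhdsWithin] with x hx
    obtain ⟨hx0, hx1⟩ := hx
    have habs : |x| < 1 := by rw [abs_of_pos hx0]; exact hx1
    rw [Function.comp_apply, (hasSum_cubes habs).tsum_eq, ← alg hx0 hx1]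
end

section
/- For every integer k ≥ 1, the limit as x → 1⁻ (x real, 0 < x < 1) of (Σ_{n=1}^∞ n^{k−1}·xⁿ − (k−1)!/(−log x)^k) equals (−1)^{k−1}·B_k/k, where B_k is the k-th Bernoulli number. -/
open Filter Topology Finset
open scoped NNReal ENNReal

namespace RamanujanAux


lemma two_pow_le_factorial_succ (j : ℕ) : 2 ^ j ≤ (j + 1).factorial := by
  induction j with
  | zero => simp
  | succ j ih =>
    rw [pow_succ, Nat.factorial_succ]
    calc 2 ^ j * 2 ≤ (j+1).factorial * 2 := by gcongr
    _ ≤ (j + 1 + 1) * (j+1).factorial := by rw [mul_comm]; gcongr <;> omega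

lemma geom_four_le (m : ℕ) : ∑ k ∈ range m, 4 ^ k ≤ 4 ^ m := by
  induction m with
  | zero => simp
  | succ m ih =>
    rw [Finset.sum_range_succ, pow_succ]
    omega

lemma nat_term_bound {m k : ℕ} (hk : k ≤ m) :
    (m+1).choose k * k.factorial * 2 ^ (m + k) ≤ (m+1).factorial * 4 ^ k := by
  have h1 : (m+1).choose k * k.factorial * (m + 1 - k).factorial = (m+1).factorial :=
    Nat.choose_mul_factorial_mul_factorial (by omega)
  have h2 : 2 ^ (m - k) ≤ (m + 1 - k).factorial := by
    have h := two_pow_le_factorial_succ (m - k)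
    rwa [show m - k + 1 = m + 1 - k by omega] at h
  calc (m+1).choose k * k.factorial * 2 ^ (m + k)
      = ((m+1).choose k * k.factorial * 2 ^ (m - k)) * 4 ^ k := by
        have hpow : (2:ℕ) ^ (m + k) = 2 ^ (m - k) * 4 ^ k := by
          rw [show m + k = (m - k) + 2 * k by omega, pow_add, pow_mul]; norm_num
        rw [hpow]; ring
    _ ≤ ((m+1).choose k * k.factorial * (m + 1 - k).factorial) * 4 ^ k := by gcongr
    _ = (m+1).factorial * 4 ^ k := by rw [h1]

lemma nat_sum_bound (m : ℕ) :
    (∑ k ∈ range m, (m+1).choose k * (2 ^ k * k.factorial)) * 2 ^ m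
      ≤ (m+1).factorial * 4 ^ m := by
  rw [Finset.sum_mul]
  calc ∑ k ∈ range m, (m+1).choose k * (2 ^ k * k.factorial) * 2 ^ m
      = ∑ k ∈ range m, (m+1).choose k * k.factorial * 2 ^ (m + k) := by
        refine Finset.sum_congr rfl fun k _ => ?_
        rw [pow_add]; ring
    _ ≤ ∑ k ∈ range m, (m+1).factorial * 4 ^ k := by
        refine Finset.sum_le_sum fun k hk => nat_term_bound (by simpa using (Finset.mem_range.1 hk).le)
    _ = (m+1).factorial * ∑ k ∈ range m, 4 ^ k := by rw [Finset.mul_sum]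
    _ ≤ (m+1).factorial * 4 ^ m := by
        have := geom_four_le m
        exact Nat.mul_le_mul_left _ this

lemma bernoulli_bound : ∀ m : ℕ, |bernoulli m| ≤ 2 ^ m * m.factorial := by
  intro m
  induction m using Nat.strong_induction_on with
  | _ m ih =>
    match m with
    | 0 => simp
    | (m+1) =>
      have hrec := sum_bernoulli (m + 1 + 1)
      rw [if_neg (by omega), Finset.sum_range_succ, Nat.choose_succ_self_right] at hrec
      -- (∑ k in range (m+1), C(m+2,k) B_k) + (m+2) * B_(m+1) = 0
      have hB : ((m:ℚ) + 1 + 1) * bernoulli (m+1)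
          = -∑ k ∈ range (m+1), ((m+1+1).choose k : ℚ) * bernoulli k := by
        push_cast at hrec ⊢
        linarith
      have habs : ((m:ℚ) + 1 + 1) * |bernoulli (m+1)|
          ≤ ∑ k ∈ range (m+1), ((m+1+1).choose k : ℚ) * (2 ^ k * k.factorial) := by
        have h1 : |((m:ℚ) + 1 + 1) * bernoulli (m+1)|
            ≤ ∑ k ∈ range (m+1), |((m+1+1).choose k : ℚ) * bernoulli k| := by
          rw [hB, abs_neg]
          exact Finset.abs_sum_le_sum_abs _ _
        have h2 : ∀ k ∈ range (m+1), |((m+1+1).choose k : ℚ) * bernoulli k|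
            ≤ ((m+1+1).choose k : ℚ) * (2 ^ k * k.factorial) := by
          intro k hk
          rw [abs_mul, abs_of_nonneg (by positivity)]
          exact mul_le_mul_of_nonneg_left (ih k (by simpa using Finset.mem_range.1 hk)) (by positivity)
        have h3 := le_trans h1 (Finset.sum_le_sum h2)
        rwa [abs_mul, abs_of_nonneg (show (0:ℚ) ≤ (m:ℚ) + 1 + 1 by positivity)] at h3
      have hsum : (∑ k ∈ range (m+1), ((m+1+1).choose k : ℚ) * (2 ^ k * k.factorial))
          ≤ (m+1+1).factorial * 2 ^ (m+1) := by
        have hn := nat_sum_bound (m+1)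
        have hc : ((∑ k ∈ range (m+1), (m+1+1).choose k * (2 ^ k * k.factorial)) * 2 ^ (m+1) : ℚ)
            ≤ ((m+1+1).factorial * 4 ^ (m+1) : ℚ) := by exact_mod_cast hn
        push_cast at hc
        have h4 : (4 : ℚ) ^ (m+1) = 2 ^ (m+1) * 2 ^ (m+1) := by
          rw [← mul_pow]; norm_num
        rw [h4, ← mul_assoc] at hc
        exact le_of_mul_le_mul_right hc (by positivity)
      have hfin : ((m:ℚ) + 1 + 1) * |bernoulli (m+1)|
          ≤ ((m:ℚ) + 1 + 1) * (2 ^ (m+1) * (m+1).factorial) := by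
        refine habs.trans (hsum.trans (le_of_eq ?_))
        rw [Nat.factorial_succ]
        push_cast
        ring
      have := le_of_mul_le_mul_left hfin (show (0:ℚ) < (m:ℚ) + 1 + 1 by positivity)
      exact_mod_cast this




noncomputable def cB (m : ℕ) : ℝ := (bernoulli m : ℝ) / m.factorial

noncomputable def aC (j : ℕ) : ℝ := if j = 0 then 0 else 1 / j.factorial

lemma cB_bound (m : ℕ) : |cB m| ≤ 2 ^ m := by
  have h : |(bernoulli m : ℝ)| ≤ 2 ^ m * m.factorial := by
    have := bernoulli_bound m
    have h2 : ((|bernoulli m| : ℚ) : ℝ) ≤ ((2 ^ m * m.factorial : ℚ) : ℝ) := by exact_mod_cast this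
    push_cast at h2
    exact h2
  rw [cB, abs_div, abs_of_nonneg (show (0:ℝ) ≤ m.factorial by positivity),
    div_le_iff₀ (show (0:ℝ) < m.factorial by positivity)]
  exact h

lemma summable_cB_norm {t : ℝ} (ht : |t| < 1/2) : Summable fun m => ‖cB m * t ^ m‖ := by
  refine Summable.of_nonneg_of_le (fun m => norm_nonneg _) (fun m => ?_)
    (summable_geometric_of_lt_one (r := 2 * |t|) (by positivity) (by linarith))
  rw [norm_mul, norm_pow, mul_pow, Real.norm_eq_abs, Real.norm_eq_abs]
  exact mul_le_mul_of_nonneg_right (cB_bound m) (by positivity)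

lemma summable_aC_norm (t : ℝ) : Summable fun j => ‖aC j * t ^ j‖ := by
  refine Summable.of_nonneg_of_le (fun m => norm_nonneg _) (fun m => ?_)
    (Real.summable_pow_div_factorial |t|)
  rw [norm_mul, norm_pow, Real.norm_eq_abs, Real.norm_eq_abs]
  rcases eq_or_ne m 0 with h | h
  · simp [aC, h]
  · rw [aC, if_neg h, abs_of_nonneg (by positivity)]
    exact le_of_eq (by ring)

lemma exp_tsum (t : ℝ) : Real.exp t = ∑' n : ℕ, t ^ n / n.factorial := by
  rw [Real.exp_eq_exp_ℝ, NormedSpace.exp_eq_tsum_div]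

lemma tsum_aC (t : ℝ) : ∑' j : ℕ, aC j * t ^ j = Real.exp t - 1 := by
  have hs1 : Summable fun j : ℕ => aC j * t ^ j := (summable_aC_norm t).of_norm
  have hs2 : Summable fun n : ℕ => t ^ n / n.factorial := Real.summable_pow_div_factorial t
  have hcongr : ∀ j : ℕ, aC (j+1) * t ^ (j+1) = t ^ (j+1) / (j+1).factorial := by
    intro j
    rw [aC, if_neg (Nat.succ_ne_zero j)]
    ring
  rw [Summable.tsum_eq_zero_add hs1, exp_tsum, Summable.tsum_eq_zero_add hs2, tsum_congr hcongr]
  simp [aC]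

lemma coeff_ident (n : ℕ) :
    ∑ p ∈ Finset.HasAntidiagonal.antidiagonal n, cB p.1 * aC p.2 = if n = 1 then 1 else 0 := by
  rw [Finset.Nat.sum_antidiagonal_eq_sum_range_succ_mk, Finset.sum_range_succ]
  have h0 : aC (n - n) = 0 := by simp [aC]
  rw [h0, mul_zero, add_zero]
  have key : ∀ k ∈ range n, cB k * aC (n - k)
      = (((n.choose k : ℚ) * bernoulli k : ℚ) : ℝ) / n.factorial := by
    intro k hk
    have hkn : k < n := Finset.mem_range.1 hk
    have hfac : ((n.choose k : ℝ)) * k.factorial * (n-k).factorial = n.factorial := by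
      exact_mod_cast congrArg (Nat.cast (R := ℝ)) (Nat.choose_mul_factorial_mul_factorial hkn.le)
    rw [cB, aC, if_neg (Nat.sub_ne_zero_of_lt hkn)]
    push_cast
    have hk0 : (k.factorial : ℝ) ≠ 0 := by positivity
    have hnk0 : ((n-k).factorial : ℝ) ≠ 0 := by positivity
    have hn0 : (n.factorial : ℝ) ≠ 0 := by positivity
    field_simp
    linear_combination (-(bernoulli k : ℝ)) * hfac
  rw [Finset.sum_congr rfl key, ← Finset.sum_div]
  have : ∑ k ∈ range n, (((n.choose k : ℚ) * bernoulli k : ℚ) : ℝ)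
      = ((∑ k ∈ range n, (n.choose k : ℚ) * bernoulli k : ℚ) : ℝ) := by
    push_cast
    rfl
  rw [this, sum_bernoulli]
  rcases eq_or_ne n 1 with h | h
  · simp [h]
  · simp [h]

lemma gf {t : ℝ} (ht : |t| < 1/2) : (∑' m : ℕ, cB m * t ^ m) * (Real.exp t - 1) = t := by
  rw [← tsum_aC t,
    tsum_mul_tsum_eq_tsum_sum_antidiagonal_of_summable_norm (summable_cB_norm ht)
      (summable_aC_norm t)]
  have h1 : ∀ n : ℕ, ∑ p ∈ Finset.HasAntidiagonal.antidiagonal n, (cB p.1 * t ^ p.1) * (aC p.2 * t ^ p.2)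
      = (if n = 1 then 1 else 0) * t ^ n := by
    intro n
    rw [← coeff_ident n, Finset.sum_mul]
    refine Finset.sum_congr rfl fun p hp => ?_
    rw [← Finset.HasAntidiagonal.mem_antidiagonal.1 hp, pow_add]
    ring
  rw [tsum_congr h1, tsum_eq_single 1 (fun b hb => by simp [hb])]
  simp





noncomputable def c (m : ℕ) : ℝ := cB (m + 1)

noncomputable def phi (t : ℝ) : ℝ := ∑' m : ℕ, c m * t ^ m

lemma summable_c_norm {t : ℝ} (ht : |t| < 1/2) : Summable fun m => ‖c m * t ^ m‖ := by
  refine Summable.of_nonneg_of_le (fun m => norm_nonneg _) (fun m => ?_)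
    ((summable_geometric_of_lt_one (r := 2 * |t|) (by positivity) (by linarith)).mul_left 2)
  rw [norm_mul, norm_pow, Real.norm_eq_abs, Real.norm_eq_abs]
  calc |c m| * |t| ^ m ≤ 2 ^ (m + 1) * |t| ^ m :=
        mul_le_mul_of_nonneg_right (cB_bound (m+1)) (by positivity)
    _ = 2 * (2 * |t|) ^ m := by rw [mul_pow]; ring

lemma tsum_cB_split {t : ℝ} (ht : |t| < 1/2) : ∑' m : ℕ, cB m * t ^ m = 1 + t * phi t := by
  have hs : Summable fun m : ℕ => cB m * t ^ m := (summable_cB_norm ht).of_norm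
  rw [Summable.tsum_eq_zero_add hs]
  have h0 : cB 0 = 1 := by simp [cB]
  have hcongr : ∀ m : ℕ, cB (m+1) * t ^ (m+1) = t * (c m * t ^ m) := by
    intro m
    rw [c, pow_succ]
    ring
  rw [tsum_congr hcongr, tsum_mul_left, h0, pow_zero, mul_one, phi]

lemma phi_eq {t : ℝ} (ht0 : t ≠ 0) (ht : |t| < 1/2) :
    phi t = (Real.exp t - 1)⁻¹ - t⁻¹ := by
  have hg := gf ht
  rw [tsum_cB_split ht] at hg
  have he : Real.exp t - 1 ≠ 0 := by
    intro h
    exact ht0 ((Real.exp_eq_one_iff _).1 (by linarith [sub_eq_zero.1 h]))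
  field_simp
  linear_combination hg

noncomputable def pSeries : FormalMultilinearSeries ℝ ℝ ℝ :=
  FormalMultilinearSeries.ofScalars ℝ c

lemma hasFPS : HasFPowerSeriesOnBall phi pSeries 0 ((1/4 : ℝ≥0) : ℝ≥0∞) := by
  constructor
  · refine pSeries.le_radius_of_summable_norm (r := (1/4 : ℝ≥0)) ?_
    have hnorm : ∀ n, ‖pSeries n‖ = |c n| := by
      intro n
      have h1 : pSeries n = c n • ContinuousMultilinearMap.mkPiAlgebraFin ℝ n ℝ := rfl
      rw [h1, norm_smul (c n) (ContinuousMultilinearMap.mkPiAlgebraFin ℝ n ℝ),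
        ContinuousMultilinearMap.norm_mkPiAlgebraFin, Real.norm_eq_abs, mul_one]
    refine Summable.of_nonneg_of_le (fun n => by positivity) (fun n => ?_)
      ((summable_geometric_of_lt_one (r := (1/2 : ℝ)) (by norm_num) (by norm_num)).mul_left 2)
    rw [hnorm n]
    calc |c n| * ((1/4 : ℝ≥0) : ℝ) ^ n ≤ 2 ^ (n+1) * (1/4 : ℝ) ^ n := by
          push_cast
          refine mul_le_mul (cB_bound (n+1)) (by norm_num) (by positivity) (by positivity)
      _ = 2 * (1/2 : ℝ) ^ n := by
          have : ((1:ℝ)/4) ^ n = (1/2 : ℝ) ^ n * (1/2 : ℝ) ^ n := by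
            rw [← mul_pow]; norm_num
          rw [pow_succ, this]
          have h2 : (2:ℝ) ^ n * (1/2 : ℝ) ^ n = 1 := by rw [← mul_pow]; norm_num
          linear_combination (2 * (1/2:ℝ) ^ n) * h2
  · exact ENNReal.coe_pos.2 (by norm_num)
  · intro y hy
    rw [mem_emetric_ball_zero_iff, enorm_eq_nnnorm, ENNReal.coe_lt_coe] at hy
    have hy' : |y| < 1/4 := by
      rw [← Real.norm_eq_abs, ← coe_nnnorm]
      exact_mod_cast hy
    have hsum : Summable fun n : ℕ => c n * y ^ n := (summable_c_norm (by linarith)).of_norm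
    have hfn : (fun n => pSeries n fun _ => y) = fun n => c n * y ^ n := by
      funext n
      rw [pSeries, FormalMultilinearSeries.ofScalars_apply_eq, smul_eq_mul]
    rw [zero_add, hfn, phi]
    exact hsum.hasSum

lemma iteratedDeriv_phi_zero_c (n : ℕ) : iteratedDeriv n phi 0 = n.factorial * c n := by
  have h := hasFPS.factorial_smul (1 : ℝ) n
  rw [iteratedDeriv_eq_iteratedFDeriv]
  rw [← h]
  have h1 : pSeries n = c n • ContinuousMultilinearMap.mkPiAlgebraFin ℝ n ℝ := rfl
  rw [h1]
  simp [smul_eq_mul]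

lemma contAt (n : ℕ) : ContinuousAt (iteratedDeriv n phi) 0 := by
  have h := hasFPS.analyticOnNhd.iterated_deriv n
  have h0 : (0:ℝ) ∈ EMetric.ball (0:ℝ) ((1/4 : ℝ≥0) : ℝ≥0∞) :=
    EMetric.mem_ball_self (by exact_mod_cast ENNReal.coe_pos.2 (by norm_num))
  have := (h 0 h0).continuousAt
  rwa [iteratedDeriv_eq_iterate]


lemma iteratedDeriv_phi_zero (n : ℕ) :
    iteratedDeriv n phi 0 = n.factorial * ((bernoulli (n+1) : ℝ) / (n+1).factorial) := by
  rw [iteratedDeriv_phi_zero_c, c, cB]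

lemma ball_subset : Set.Ioo (0:ℝ) (1/4) ⊆ Metric.eball (0:ℝ) ((1/4 : ℝ≥0) : ℝ≥0∞) := by
  intro x hx
  rw [mem_emetric_ball_zero_iff, enorm_eq_nnnorm, ENNReal.coe_lt_coe, ← NNReal.coe_lt_coe, coe_nnnorm,
    Real.norm_eq_abs, abs_of_pos hx.1]
  have : ((1/4 : ℝ≥0) : ℝ) = 1/4 := by norm_num
  rw [this]
  exact hx.2

lemma contDiffOnPhi (n : ℕ) : ContDiffOn ℝ n phi (Set.Ioo (0:ℝ) (1/4)) :=
  (hasFPS.analyticOnNhd.mono ball_subset).contDiffOn isOpen_Ioo.uniqueDiffOn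



noncomputable def S (j : ℕ) (t : ℝ) : ℝ :=
  ∑' n : ℕ, (-((n:ℝ)+1)) ^ j * Real.exp (-((n:ℝ)+1) * t)

lemma summable_aux (j : ℕ) {t : ℝ} (ht : 0 < t) :
    Summable fun n : ℕ => ((n:ℝ)+1) ^ j * Real.exp (-((n:ℝ)+1) * t) := by
  have hr : ‖Real.exp (-t)‖ < 1 := by
    rw [Real.norm_eq_abs, abs_of_pos (Real.exp_pos _)]
    exact Real.exp_lt_one_iff.2 (by linarith)
  have h := (summable_pow_mul_geometric_of_norm_lt_one (R := ℝ) j hr).comp_injective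
    (add_left_injective 1)
  refine h.congr fun n => ?_
  simp only [Function.comp]
  rw [← Real.exp_nat_mul]
  push_cast
  ring_nf

lemma summable_S (j : ℕ) {t : ℝ} (ht : 0 < t) :
    Summable fun n : ℕ => (-((n:ℝ)+1)) ^ j * Real.exp (-((n:ℝ)+1) * t) := by
  have h := (summable_aux j ht).mul_left ((-1:ℝ) ^ j)
  refine h.congr fun n => ?_
  rw [← mul_assoc, ← neg_pow]

lemma S_eq_sign (j : ℕ) (t : ℝ) :
    S j t = (-1) ^ j * ∑' n : ℕ, ((n:ℝ)+1) ^ j * Real.exp (-((n:ℝ)+1) * t) := by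
  rw [S, ← tsum_mul_left]
  refine tsum_congr fun n => ?_
  rw [← mul_assoc, ← neg_pow]

lemma hasDerivAt_S (j : ℕ) {t : ℝ} (ht : 0 < t) : HasDerivAt (S j) (S (j+1) t) t := by
  have key : HasDerivAt (fun z => ∑' n : ℕ, (-((n:ℝ)+1)) ^ j * Real.exp (-((n:ℝ)+1) * z))
      (∑' n : ℕ, (-((n:ℝ)+1)) ^ (j+1) * Real.exp (-((n:ℝ)+1) * t)) t := by
    refine hasDerivAt_tsum_of_isPreconnected
      (u := fun n : ℕ => ((n:ℝ)+1) ^ (j+1) * Real.exp (-((n:ℝ)+1) * (t/2)))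
      (g := fun (n : ℕ) (z : ℝ) => (-((n:ℝ)+1)) ^ j * Real.exp (-((n:ℝ)+1) * z))
      (g' := fun (n : ℕ) (z : ℝ) => (-((n:ℝ)+1)) ^ (j+1) * Real.exp (-((n:ℝ)+1) * z))
      (t := Set.Ioi (t/2)) (y₀ := t) (y := t)
      (summable_aux (j+1) (by linarith)) (isOpen_Ioi) (isPreconnected_Ioi)
      (fun n y _ => ?_) (fun n y hy => ?_) (Set.mem_Ioi.2 (by linarith [half_lt_self ht]))
      (summable_S j ht) (Set.mem_Ioi.2 (by linarith [half_lt_self ht]))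
    · have h1 : HasDerivAt (fun z : ℝ => -((n:ℝ)+1) * z) (-((n:ℝ)+1)) y := by
        simpa using (hasDerivAt_id y).const_mul (-((n:ℝ)+1))
      have h2 := (h1.exp).const_mul ((-((n:ℝ)+1)) ^ j)
      convert h2 using 1
      show (-((n:ℝ)+1)) ^ (j+1) * Real.exp (-((n:ℝ)+1) * y) = _
      rw [pow_succ]
      ring
      rfl
    · rw [norm_mul, norm_pow, Real.norm_eq_abs, Real.norm_eq_abs, abs_neg,
        abs_of_nonneg (by positivity : (0:ℝ) ≤ (n:ℝ)+1),
        abs_of_pos (Real.exp_pos _)]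
      have hmono : Real.exp (-((n:ℝ)+1) * y) ≤ Real.exp (-((n:ℝ)+1) * (t/2)) := by
        apply Real.exp_le_exp.2
        have : t/2 ≤ y := le_of_lt (Set.mem_Ioi.1 hy)
        nlinarith
      exact mul_le_mul_of_nonneg_left hmono (by positivity)
  exact key

lemma iteratedDeriv_S (j : ℕ) : ∀ {t : ℝ}, 0 < t → iteratedDeriv j (S 0) t = S j t := by
  induction j with
  | zero => intro t _; rw [iteratedDeriv_zero]
  | succ j ih =>
    intro t ht
    rw [iteratedDeriv_succ]
    have heq : iteratedDeriv j (S 0) =ᶠ[𝓝 t] S j := by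
      filter_upwards [Ioi_mem_nhds ht] with s hs
      exact ih hs
    rw [heq.deriv_eq]
    exact (hasDerivAt_S j ht).deriv

lemma S_zero_eq {t : ℝ} (ht : 0 < t) : S 0 t = (Real.exp t - 1)⁻¹ := by
  have hr0 : (0:ℝ) < Real.exp (-t) := Real.exp_pos _
  have hr1 : Real.exp (-t) < 1 := Real.exp_lt_one_iff.2 (by linarith)
  have hgeom : ∑' n : ℕ, Real.exp (-t) ^ n = (1 - Real.exp (-t))⁻¹ :=
    tsum_geometric_of_lt_one hr0.le hr1
  have hcongr : ∀ n : ℕ, (-((n:ℝ)+1)) ^ 0 * Real.exp (-((n:ℝ)+1) * t)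
      = Real.exp (-t) * Real.exp (-t) ^ n := by
    intro n
    rw [pow_zero, one_mul, ← Real.exp_nat_mul, ← Real.exp_add]
    ring_nf
  rw [S, tsum_congr hcongr, tsum_mul_left, hgeom]
  have he : Real.exp t ≠ 1 := by
    intro h
    have := (Real.exp_eq_one_iff t).1 h
    linarith
  have he0 : Real.exp t ≠ 0 := (Real.exp_pos t).ne'
  have hne : 1 - Real.exp (-t) ≠ 0 := by
    intro h
    have : Real.exp (-t) = 1 := by linarith
    linarith
  have hne2 : Real.exp t - 1 ≠ 0 := sub_ne_zero.2 he
  rw [Real.exp_neg]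
  field_simp

lemma neg_prod (j : ℕ) : ∏ i ∈ range j, (-1 - (i:ℝ)) = (-1) ^ j * j.factorial := by
  induction j with
  | zero => simp
  | succ j ih =>
    rw [Finset.prod_range_succ, ih, Nat.factorial_succ, pow_succ]
    push_cast
    ring

lemma iteratedDeriv_inv (j : ℕ) {t : ℝ} (ht : 0 < t) :
    iteratedDeriv j (fun s : ℝ => s⁻¹) t = (-1) ^ j * j.factorial * (t ^ (j+1))⁻¹ := by
  rw [iteratedDeriv_eq_iterate]
  have h := iter_deriv_inv (𝕜 := ℝ) j t
  have h2 : (deriv^[j] fun s : ℝ => s⁻¹) t = deriv^[j] Inv.inv t := by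
    congr
  rw [h2, h]
  congr 1
  rw [zpow_sub₀ (ne_of_gt ht), zpow_neg, zpow_one, zpow_natCast]
  field_simp
  rw [pow_succ]
  ring



lemma phi_add_inv {t : ℝ} (ht : t ∈ Set.Ioo (0:ℝ) (1/4)) :
    S 0 t = phi t + t⁻¹ := by
  obtain ⟨h1, h2⟩ := ht
  rw [S_zero_eq h1, phi_eq h1.ne' (by rw [abs_of_pos h1]; linarith)]
  ring

lemma main_ident (j : ℕ) {t : ℝ} (ht : t ∈ Set.Ioo (0:ℝ) (1/4)) :
    S j t = iteratedDeriv j phi t + (-1) ^ j * j.factorial * (t ^ (j+1))⁻¹ := by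
  have hO : IsOpen (Set.Ioo (0:ℝ) (1/4)) := isOpen_Ioo
  have hU : UniqueDiffOn ℝ (Set.Ioo (0:ℝ) (1/4)) := hO.uniqueDiffOn
  have hwithin : ∀ f : ℝ → ℝ, iteratedDerivWithin j f (Set.Ioo (0:ℝ) (1/4)) t
      = iteratedDeriv j f t := by
    intro f
    rw [iteratedDerivWithin_eq_iteratedFDerivWithin, iteratedDeriv_eq_iteratedFDeriv,
      iteratedFDerivWithin_of_isOpen j hO ht]
  have h1 : S j t = iteratedDeriv j (S 0) t := (iteratedDeriv_S j ht.1).symm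
  have heq : Set.EqOn (S 0) (phi + fun s => s⁻¹) (Set.Ioo (0:ℝ) (1/4)) := fun s hs => by
    rw [Pi.add_apply]; exact phi_add_inv hs
  have h3 := iteratedDerivWithin_congr (n := j) heq ht
  have hφ : ContDiffOn ℝ j phi (Set.Ioo (0:ℝ) (1/4)) := contDiffOnPhi j
  have hinv : ContDiffOn ℝ j (fun s : ℝ => s⁻¹) (Set.Ioo (0:ℝ) (1/4)) :=
    fun s hs => (contDiffAt_inv ℝ (ne_of_gt hs.1)).contDiffWithinAt
  have h4 := iteratedDerivWithin_add ht hU (hφ t ht) (hinv t ht)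
  rw [h1, ← hwithin (S 0), h3, h4, hwithin phi, hwithin (fun s : ℝ => s⁻¹),
    iteratedDeriv_inv j ht.1]


end RamanujanAux

open RamanujanAux in
theorem ramanujan_sum_of_powers (k : ℕ) (hk : 1 ≤ k) :
    Tendsto (fun x : ℝ =>
        (∑' n : ℕ, ((n + 1 : ℕ) : ℝ) ^ (k - 1) * x ^ (n + 1)) -
          ((k - 1).factorial : ℝ) / (-Real.log x) ^ k)
      (𝓝[Set.Ioo (0 : ℝ) 1] 1)
      (𝓝 ((-1 : ℝ) ^ (k - 1) * (bernoulli k : ℝ) / k)) := by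
  obtain ⟨K, rfl⟩ : ∃ K, k = K + 1 := ⟨k - 1, by omega⟩
  simp only [Nat.add_sub_cancel]
  have h0 : Tendsto (fun x : ℝ => -Real.log x) (𝓝[Set.Ioo (0:ℝ) 1] 1) (𝓝 0) := by
    have h := ((Real.continuousAt_log one_ne_zero).neg).tendsto
    rw [Pi.neg_apply, Real.log_one, neg_zero] at h
    exact h.mono_left nhdsWithin_le_nhds
  have hmem : ∀ᶠ x in 𝓝[Set.Ioo (0:ℝ) 1] 1, -Real.log x ∈ Set.Ioo (0:ℝ) (1/4) := by
    have h1 : ∀ᶠ x in 𝓝[Set.Ioo (0:ℝ) 1] 1, x ∈ Set.Ioo (0:ℝ) 1 := self_mem_nhdsWithin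
    have h2 : ∀ᶠ x in 𝓝[Set.Ioo (0:ℝ) 1] 1, -Real.log x < 1/4 :=
      h0.eventually_lt_const (by norm_num)
    filter_upwards [h1, h2] with x hx hlt
    exact ⟨by simpa using neg_pos.2 (Real.log_neg hx.1 hx.2), hlt⟩
  have hlog : Tendsto (fun x : ℝ => -Real.log x) (𝓝[Set.Ioo (0:ℝ) 1] 1)
      (𝓝[Set.Ioo (0:ℝ) (1/4)] 0) := by
    rw [tendsto_nhdsWithin_iff]
    exact ⟨h0, hmem⟩
  have hval : iteratedDeriv K phi 0 = (bernoulli (K+1) : ℝ) / ((K:ℝ)+1) := by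
    rw [iteratedDeriv_phi_zero, Nat.factorial_succ]
    push_cast
    have hK : ((K:ℝ)+1) ≠ 0 := by positivity
    have hKf : ((K.factorial : ℝ)) ≠ 0 := by positivity
    field_simp
  have hcont : Tendsto (iteratedDeriv K phi) (𝓝[Set.Ioo (0:ℝ) (1/4)] 0)
      (𝓝 ((bernoulli (K+1):ℝ)/((K:ℝ)+1))) := by
    rw [← hval]
    exact ((contAt K).tendsto).mono_left nhdsWithin_le_nhds
  have hfinal := (hcont.comp hlog).const_mul ((-1:ℝ)^K)
  have hlim : ((-1:ℝ)^K) * ((bernoulli (K+1):ℝ)/((K:ℝ)+1))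
      = (-1 : ℝ) ^ K * (bernoulli (K+1) : ℝ) / ((K+1 : ℕ) : ℝ) := by
    push_cast
    ring
  rw [hlim] at hfinal
  refine Tendsto.congr' ?_ hfinal
  filter_upwards [hmem, self_mem_nhdsWithin] with x hm hx
  have ht0 : 0 < -Real.log x := hm.1
  have hxt : ∀ n : ℕ, Real.exp (-((n:ℝ)+1) * (-Real.log x)) = x ^ (n+1) := by
    intro n
    have h1 : -((n:ℝ)+1) * (-Real.log x) = ((n+1 : ℕ) : ℝ) * Real.log x := by
      push_cast
      ring
    rw [h1, Real.exp_nat_mul, Real.exp_log hx.1]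
  have hsumeq : ∑' n : ℕ, ((n + 1 : ℕ) : ℝ) ^ K * x ^ (n+1)
      = (-1:ℝ)^K * S K (-Real.log x) := by
    rw [S_eq_sign, ← mul_assoc, ← pow_add]
    have hev : (-1:ℝ) ^ (K + K) = 1 := by
      rw [Even.neg_one_pow ⟨K, rfl⟩]
    rw [hev, one_mul]
    refine tsum_congr fun n => ?_
    rw [hxt n]
    push_cast
    ring
  have hmain := main_ident K hm
  simp only [Function.comp]
  rw [hsumeq, hmain]
  have hsq : (-1:ℝ) ^ K * (-1:ℝ) ^ K = 1 := by
    rw [← pow_add]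
    exact Even.neg_one_pow ⟨K, rfl⟩
  linear_combination (-(K.factorial : ℝ) * ((-Real.log x) ^ (K+1))⁻¹) * hsq
end

section
/- For every integer k ≥ 1, the Abel sum of the alternating series 1^{k−1} − 2^{k−1} + 3^{k−1} − ⋯ exists: the limit as x → 1⁻ (x real, 0 < x < 1) of Σ_{n=1}^∞ (−1)^{n+1} n^{k−1} xⁿ equals (−1)^{k−1}·B_k·(1 − 2^k)/k, where B_k is the k-th Bernoulli number. -/
open Filter Topology Finset Nat PowerSeries

/- ### Part 1: power series identity -/

lemma abel_exp_sub_one_ne_zero : exp ℚ - 1 ≠ 0 := by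
  intro h
  have := congrArg (coeff (R := ℚ) 1) h
  simp [coeff_exp] at this

lemma abel_exp_sq : exp ℚ ^ 2 = rescale (2:ℚ) (exp ℚ) := by
  rw [exp_pow_eq_rescale_exp]; norm_num

lemma abel_aux_ps :
    (rescale (2:ℚ) (bernoulli'PowerSeries ℚ) - bernoulli'PowerSeries ℚ) * (exp ℚ + 1)
    = X * exp ℚ := by
  have hB := bernoulli'PowerSeries_mul_exp_sub_one ℚ
  have h2 : rescale (2:ℚ) (bernoulli'PowerSeries ℚ) * (exp ℚ ^ 2 - 1)
      = (C (R := ℚ) 2 * X) * exp ℚ ^ 2 := by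
    have := congrArg (rescale (2:ℚ)) hB
    rw [map_mul, map_mul, map_sub, map_one, rescale_X, ← abel_exp_sq] at this
    exact this
  apply mul_right_cancel₀ abel_exp_sub_one_ne_zero
  have hC : (C (R := ℚ) 2 : PowerSeries ℚ) = 2 := by simp [map_ofNat]
  rw [hC] at h2
  linear_combination h2 - (exp ℚ + 1) * hB

lemma abel_coeff_G (i : ℕ) :
    coeff (R := ℚ) i (rescale (2:ℚ) (bernoulli'PowerSeries ℚ) - bernoulli'PowerSeries ℚ)
      = (2^i - 1) * bernoulli' i / i ! := by
  simp [coeff_rescale, bernoulli'PowerSeries, coeff_mk]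
  ring

/- ### Part 2: the Bernoulli identity -/

lemma abel_key (n : ℕ) :
    (∑ i ∈ Finset.range (n+1), (n.choose i : ℚ) * ((2^i - 1) * bernoulli' i))
      + (2^n - 1) * bernoulli' n = n := by
  have hfac : ∀ m : ℕ, (m ! : ℚ) ≠ 0 := fun m => Nat.cast_ne_zero.2 m.factorial_ne_zero
  rcases n with _ | n
  · simp
  have h := congrArg (coeff (R := ℚ) (n+1)) abel_aux_ps
  rw [coeff_succ_X_mul, coeff_mul] at h
  rw [Finset.Nat.sum_antidiagonal_eq_sum_range_succ_mk] at h
  simp only [abel_coeff_G, map_add, coeff_exp, coeff_one, Algebra.algebraMap_self,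
    RingHom.id_apply] at h
  have hL : ∑ x ∈ Finset.range (n+1).succ,
        (2 ^ x - 1) * bernoulli' x / (x ! : ℚ) *
          (1 / ((n + 1 - x)! : ℚ) + if n + 1 - x = 0 then 1 else 0)
      = (∑ x ∈ Finset.range (n+2), ((n+1).choose x : ℚ) * ((2^x - 1) * bernoulli' x)) / (n+1)!
        + (2^(n+1) - 1) * bernoulli' (n+1) / (n+1)! := by
    simp only [mul_add, Finset.sum_add_distrib]
    congr 1
    · rw [Finset.sum_div]
      refine Finset.sum_congr rfl fun x hx => ?_
      have hx' : x ≤ n+1 := Nat.lt_succ_iff.mp (Finset.mem_range.mp hx)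
      rw [Nat.cast_choose ℚ hx']
      field_simp
    · have e2 : ∀ x ∈ Finset.range (n+2),
          ((2 ^ x - 1) * bernoulli' x / (x ! : ℚ) * if n + 1 - x = 0 then 1 else 0)
            = if x = n+1 then (2 ^ (n+1) - 1) * bernoulli' (n+1) / (((n+1)! : ℕ) : ℚ) else 0 := by
        intro x hx
        by_cases hc : x = n+1
        · subst hc; simp
        · have h0 : n + 1 - x ≠ 0 := by
            have := Finset.mem_range.mp hx; omega
          simp [h0, hc]
      rw [Finset.sum_congr rfl e2, Finset.sum_ite_eq' (Finset.range (n+2)) (n+1), if_pos (by simp)]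
  rw [hL, ← add_div, div_eq_iff (hfac (n+1))] at h
  rw [h, Nat.factorial_succ]
  push_cast
  field_simp

/- ### Part 3: the recurrence for the limit values -/

noncomputable def abelAq (m : ℕ) : ℚ := (2^(m+1) - 1) * bernoulli' (m+1) / (m+1)

lemma abel_recAq (m : ℕ) :
    2 * abelAq m + ∑ j ∈ Finset.range m, (m.choose j : ℚ) * abelAq j = 1 := by
  have hm1 : ((m : ℚ) + 1) ≠ 0 := by positivity
  have hk := abel_key (m+1)
  rw [Finset.sum_range_succ', Finset.sum_range_succ] at hk
  simp only [Nat.choose_zero_right, Nat.cast_one, pow_zero, bernoulli'_zero, Nat.choose_self,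
    one_mul] at hk
  apply mul_left_cancel₀ hm1
  rw [mul_add, Finset.mul_sum, mul_one]
  have hterm : ∀ j ∈ Finset.range m,
      ((m:ℚ)+1) * ((m.choose j : ℚ) * abelAq j)
        = ((m+1).choose (j+1) : ℚ) * ((2^(j+1) - 1) * bernoulli' (j+1)) := by
    intro j hj
    have hc : (m+1) * m.choose j = (m+1).choose (j+1) * (j+1) := Nat.add_one_mul_choose_eq m j
    have hc' : ((m:ℚ)+1) * (m.choose j : ℚ) = ((m+1).choose (j+1) : ℚ) * ((j:ℚ)+1) := by
      exact_mod_cast congrArg (Nat.cast (R := ℚ)) hc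
    have hj1 : ((j:ℚ)+1) ≠ 0 := by positivity
    rw [abelAq]
    push_cast
    field_simp
    linear_combination ((2:ℚ)^(j+1) - 1) * bernoulli' (j+1) * hc'
  rw [Finset.sum_congr rfl hterm]
  have e : ((m:ℚ)+1) * (2 * abelAq m) = 2 * ((2^(m+1) - 1) * bernoulli' (m+1)) := by
    rw [abelAq]; push_cast; field_simp
  rw [e]
  push_cast at hk
  linear_combination hk

/- ### Part 4: the generating functions -/

noncomputable def abelG (m : ℕ) (x : ℝ) : ℝ := ∑' n : ℕ, (-1:ℝ)^n * ((n+1:ℕ):ℝ)^m * x^(n+1)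

lemma abel_summable (m : ℕ) {x : ℝ} (hx : |x| < 1) :
    Summable (fun n : ℕ => (-1:ℝ)^n * ((n+1:ℕ):ℝ)^m * x^(n+1)) := by
  have h : Summable (fun n : ℕ => ((n:ℝ))^m * |x|^n) :=
    summable_pow_mul_geometric_of_norm_lt_one m (by rwa [Real.norm_eq_abs, abs_abs])
  have h2 : Summable (fun n : ℕ => ((n+1:ℕ):ℝ)^m * |x|^(n+1)) :=
    h.comp_injective Nat.succ_injective
  refine Summable.of_norm_bounded h2 (fun n => ?_)
  rw [norm_mul, norm_mul, norm_pow, norm_pow, norm_neg, norm_one, one_pow, one_mul]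
  simp [Real.norm_eq_abs, abs_pow, Nat.abs_cast]
  rw [abs_of_nonneg (by positivity : (0:ℝ) ≤ (n:ℝ)+1)]

lemma abelG_eq (m : ℕ) {x : ℝ} (hx : |x| < 1) :
    (1 + x) * abelG m x
      = x * (1 - ∑ j ∈ Finset.range m, (m.choose j : ℝ) * abelG j x) := by
  have hsum := abel_summable m hx
  have step1 : abelG m x = x + ∑' n : ℕ, (-1:ℝ)^(n+1) * ((n+2:ℕ):ℝ)^m * x^(n+2) := by
    rw [abelG, hsum.tsum_eq_zero_add]
    norm_num
    congr 1
    funext n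
    ring
  have step2 : x * ∑ j ∈ Finset.range (m+1), (m.choose j : ℝ) * abelG j x
      = ∑' n : ℕ, (-1:ℝ)^n * ((n+2:ℕ):ℝ)^m * x^(n+2) := by
    rw [Finset.mul_sum]
    have e1 : ∀ j ∈ Finset.range (m+1), x * ((m.choose j : ℝ) * abelG j x)
        = ∑' n : ℕ, (m.choose j : ℝ) * ((-1:ℝ)^n * ((n+1:ℕ):ℝ)^j * x^(n+2)) := by
      intro j hj
      rw [abelG, ← tsum_mul_left, ← tsum_mul_left]
      congr 1; funext n; ring
    rw [Finset.sum_congr rfl e1, ← Summable.tsum_finsetSum (fun j hj =>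
      (((abel_summable j hx).mul_left ((m.choose j : ℝ) * x)).congr (fun n => by ring)))]
    congr 1; funext n
    have hb : (((n+2:ℕ)):ℝ)^m = ∑ j ∈ Finset.range (m+1), ((n+1:ℕ):ℝ)^j * (m.choose j : ℝ) := by
      have := add_pow (((n+1:ℕ)):ℝ) 1 m
      simp only [one_pow, mul_one] at this
      rw [show (((n+2:ℕ)):ℝ) = ((n+1:ℕ):ℝ) + 1 by push_cast; ring, this]
    rw [hb, Finset.mul_sum, Finset.sum_mul]
    refine Finset.sum_congr rfl fun j hj => by ring
  have step3 : ∑' n : ℕ, (-1:ℝ)^n * ((n+2:ℕ):ℝ)^m * x^(n+2) = x - abelG m x := by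
    have : ∑' n : ℕ, (-1:ℝ)^(n+1) * ((n+2:ℕ):ℝ)^m * x^(n+2)
        = -∑' n : ℕ, (-1:ℝ)^n * ((n+2:ℕ):ℝ)^m * x^(n+2) := by
      rw [← tsum_neg]; congr 1; funext n; ring
    rw [this] at step1
    linarith
  rw [Finset.sum_range_succ, Nat.choose_self, Nat.cast_one, one_mul] at step2
  rw [step3] at step2
  rw [mul_add] at step2
  ring_nf
  ring_nf at step2
  linarith

/- ### Part 5: the limit -/

noncomputable def abelA (m : ℕ) : ℝ := ((abelAq m : ℚ) : ℝ)

lemma abel_recA (m : ℕ) :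
    2 * abelA m + ∑ j ∈ Finset.range m, (m.choose j : ℝ) * abelA j = 1 := by
  have := abel_recAq m
  have h := congrArg (fun q : ℚ => (q : ℝ)) this
  push_cast at h
  simpa [abelA] using h

lemma abel_tendsto (m : ℕ) :
    Tendsto (abelG m) (𝓝[Set.Ioo (0:ℝ) 1] 1) (𝓝 (abelA m)) := by
  induction m using Nat.strong_induction_on with
  | _ m ih =>
  have hx0 : Tendsto (fun x : ℝ => x) (𝓝[Set.Ioo (0:ℝ) 1] 1) (𝓝 1) :=
    tendsto_id.mono_left nhdsWithin_le_nhds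
  have hsum : Tendsto (fun x => ∑ j ∈ Finset.range m, (m.choose j : ℝ) * abelG j x)
      (𝓝[Set.Ioo (0:ℝ) 1] 1) (𝓝 (∑ j ∈ Finset.range m, (m.choose j : ℝ) * abelA j)) := by
    refine tendsto_finset_sum _ fun j hj => ((ih j (Finset.mem_range.mp hj)).const_mul _)
  have hden : Tendsto (fun x : ℝ => 1 + x) (𝓝[Set.Ioo (0:ℝ) 1] 1) (𝓝 2) := by
    have h2 : Tendsto (fun x : ℝ => 1 + x) (𝓝[Set.Ioo (0:ℝ) 1] 1) (𝓝 (1+1)) :=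
      tendsto_const_nhds.add hx0
    exact (by norm_num : (1:ℝ)+1 = 2) ▸ h2
  have main : Tendsto (fun x : ℝ =>
        x * (1 - ∑ j ∈ Finset.range m, (m.choose j : ℝ) * abelG j x) / (1 + x))
      (𝓝[Set.Ioo (0:ℝ) 1] 1)
      (𝓝 (1 * (1 - ∑ j ∈ Finset.range m, (m.choose j : ℝ) * abelA j) / 2)) :=
    (hx0.mul (tendsto_const_nhds.sub hsum)).div hden (by norm_num)
  have hval : 1 * (1 - ∑ j ∈ Finset.range m, (m.choose j : ℝ) * abelA j) / 2 = abelA m := by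
    have := abel_recA m
    linarith
  rw [hval] at main
  refine main.congr' ?_
  filter_upwards [self_mem_nhdsWithin] with x hx
  have h1x : (1:ℝ) + x ≠ 0 := by have := hx.1; linarith
  have := abelG_eq m (x := x) (abs_lt.2 ⟨by linarith [hx.1], hx.2⟩)
  field_simp
  linarith [this]

/- ### Main theorem -/

theorem abel_sum_alternating_powers (k : ℕ) (hk : 1 ≤ k) :
    Tendsto (fun x : ℝ =>
        ∑' n : ℕ, (-1 : ℝ) ^ ((n + 1) + 1) * ((n + 1 : ℕ) : ℝ) ^ (k - 1) * x ^ (n + 1))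
      (𝓝[Set.Ioo (0 : ℝ) 1] 1)
      (𝓝 ((-1 : ℝ) ^ (k - 1) * (bernoulli k : ℝ) * (1 - 2 ^ k) / k)) := by
  obtain ⟨m, rfl⟩ : ∃ m, k = m + 1 := ⟨k - 1, (Nat.succ_pred_eq_of_pos hk).symm⟩
  have hm : m + 1 - 1 = m := rfl
  have hfun : (fun x : ℝ =>
      ∑' n : ℕ, (-1 : ℝ) ^ ((n + 1) + 1) * ((n + 1 : ℕ) : ℝ) ^ (m + 1 - 1) * x ^ (n + 1))
      = abelG m := by
    funext x
    rw [abelG]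
    congr 1; funext n
    rw [hm]
    congr 1
    rw [show (n+1)+1 = n+2 by ring, pow_add]
    norm_num
  have hval : ((-1 : ℝ) ^ (m + 1 - 1) * (bernoulli (m+1) : ℝ) * (1 - 2 ^ (m+1)) / (m+1 : ℕ))
      = abelA m := by
    rw [hm, abelA, abelAq]
    push_cast [bernoulli'_eq_bernoulli]
    rw [pow_succ]
    ring
  rw [hfun, hval]
  exact abel_tendsto m
end

section
/- For all integers k ≥ 1 and n ≥ 0, letting c_n(f) denote the n-th Taylor coefficient at 0 of an analytic function f, one has (k−1) · c_n( t ↦ (t/(eᵗ−1))^k · e^{(k−1)t} ) = (k−n−1) · c_n( t ↦ (t/(eᵗ−1))^{k−1} · e^{(k−1)t} ). Equivalently, in terms of generalized Bernoulli polynomials of order k, (k−1)·B_n^{(k)}(k−1) = (k−n−1)·B_n^{(k−1)}(k−1). -/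
/-- The `n`-th Taylor coefficient at `0` of a function `f : ℝ → ℝ`. -/
noncomputable def taylorCoeff (n : ℕ) (f : ℝ → ℝ) : ℝ :=
  iteratedDeriv n f 0 / n.factorial

/-- The function `t ↦ t / (eᵗ − 1)`, extended by the value `1` at `t = 0`. -/
noncomputable def bernoulliGen (t : ℝ) : ℝ :=
  if t = 0 then 1 else t / (Real.exp t - 1)

lemma exp_sub_one_ne {t : ℝ} (ht : t ≠ 0) : Real.exp t - 1 ≠ 0 :=
  sub_ne_zero.mpr (fun h => ht ((Real.exp_eq_one_iff t).mp h))

lemma analyticAt_bernoulliGen : AnalyticAt ℝ bernoulliGen 0 := by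
  have hE : AnalyticAt ℝ (fun t => Real.exp t - 1) 0 := analyticAt_rexp.sub analyticAt_const
  have hne : ¬ (∀ᶠ t in nhds (0:ℝ), Real.exp t - 1 = 0) := by
    intro h
    rw [Metric.eventually_nhds_iff] at h
    obtain ⟨ε, hε, H⟩ := h
    have h1 := H (y := ε/2)
      (by rw [dist_zero_right, Real.norm_eq_abs, abs_of_pos (by linarith)]; linarith)
    exact exp_sub_one_ne (by positivity) h1
  have horder : analyticOrderAt (fun t => Real.exp t - 1) 0 ≠ ⊤ := fun h => hne (analyticOrderAt_eq_top.mp h)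
  obtain ⟨m, hm⟩ := WithTop.ne_top_iff_exists.mp horder
  obtain ⟨w, hw, hw0, hww⟩ := (hE.analyticOrderAt_eq_natCast (n := m)).mp hm.symm
  simp only [sub_zero, smul_eq_mul] at hww
  have hslope : Filter.Tendsto (fun t : ℝ => (Real.exp t - 1)/t) (nhdsWithin 0 {0}ᶜ) (nhds 1) := by
    have := hasDerivAt_iff_tendsto_slope.mp (Real.hasDerivAt_exp 0)
    rw [Real.exp_zero] at this
    refine this.congr' ?_
    filter_upwards [self_mem_nhdsWithin] with t ht
    simp [slope_def_field, Real.exp_zero]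
  have hcont : Filter.Tendsto w (nhdsWithin 0 {0}ᶜ) (nhds (w 0)) :=
    (hw.continuousAt.continuousWithinAt).tendsto
  have h2 : Filter.Tendsto (fun t : ℝ => (Real.exp t - 1)/t) (nhdsWithin 0 {0}ᶜ)
      (nhds ((0:ℝ)^(m-1) * w 0)) := by
    have hpow : Filter.Tendsto (fun t : ℝ => t^(m-1) * w t) (nhdsWithin 0 {0}ᶜ)
        (nhds ((0:ℝ)^(m-1) * w 0)) :=
      ((continuousAt_id.pow (m-1)).continuousWithinAt.tendsto).mul hcont
    refine hpow.congr' ?_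
    filter_upwards [self_mem_nhdsWithin, nhdsWithin_le_nhds hww] with t ht h't
    have hm1 : m ≠ 0 := by
      rintro rfl
      have := hww.self_of_nhds
      simp [Real.exp_zero] at this
      exact hw0 this.symm
    rw [h't]
    obtain ⟨j, rfl⟩ := Nat.exists_eq_succ_of_ne_zero hm1
    have ht' : t ≠ 0 := ht
    rw [Nat.succ_sub_one, pow_succ, mul_comm (t^j) t, mul_assoc, mul_div_cancel_left₀ _ ht']
  have hlim : (0:ℝ)^(m-1) * w 0 = 1 := tendsto_nhds_unique h2 hslope
  have hm1 : m = 1 := by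
    rcases Nat.lt_or_ge m 2 with h | h
    · interval_cases m
      · exfalso
        have h0 := hww.self_of_nhds
        simp [Real.exp_zero] at h0
        exact hw0 h0.symm
      · rfl
    · exfalso
      rw [zero_pow (by omega)] at hlim
      simp at hlim
  subst hm1
  simp only [pow_one] at hww hlim
  rw [pow_zero, one_mul] at hlim
  have hwne : ∀ᶠ t in nhds (0:ℝ), w t ≠ 0 := hw.continuousAt.eventually_ne (hlim ▸ one_ne_zero)
  have heq : (fun t => (w t)⁻¹) =ᶠ[nhds (0:ℝ)] bernoulliGen := by
    filter_upwards [hww, hwne] with t ht hwt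
    by_cases h0 : t = 0
    · subst h0; simp [bernoulliGen, hlim]
    · simp [bernoulliGen, h0, ht]
      field_simp
  exact (hw.inv (hlim ▸ one_ne_zero)).congr heq

lemma contDiff_bernoulliGen : ContDiff ℝ (⊤ : ℕ∞) bernoulliGen := by
  rw [contDiff_iff_contDiffAt]
  intro x
  by_cases hx : x = 0
  · subst hx; exact analyticAt_bernoulliGen.contDiffAt
  · have h1 : ContDiffAt ℝ (⊤ : ℕ∞) (fun t : ℝ => t / (Real.exp t - 1)) x :=
      contDiffAt_id.div ((Real.contDiff_exp.contDiffAt).sub contDiffAt_const)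
        (exp_sub_one_ne hx)
    apply h1.congr_of_eventuallyEq
    filter_upwards [isOpen_compl_singleton.mem_nhds hx] with t ht
    have ht' : t ≠ 0 := ht
    unfold bernoulliGen
    rw [if_neg ht']

lemma iter_mul_id {h : ℝ → ℝ} (hh : ContDiff ℝ (⊤ : ℕ∞) h) (m : ℕ) (x : ℝ) :
    iteratedDeriv m (fun t => t * h t) x
      = x * iteratedDeriv m h x + m * iteratedDeriv (m-1) h x := by
  have hdiff : ∀ j : ℕ, Differentiable ℝ (iteratedDeriv j h) := fun j =>
    hh.differentiable_iteratedDeriv j (by exact_mod_cast lt_top_iff_ne_top.mpr (by simp))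
  induction m generalizing x with
  | zero => simp
  | succ m IH =>
    rw [iteratedDeriv_succ]
    have hrw : iteratedDeriv m (fun t => t * h t)
        = fun t => t * iteratedDeriv m h t + m * iteratedDeriv (m-1) h t := funext IH
    rw [hrw]
    have Hm : HasDerivAt (iteratedDeriv m h) (iteratedDeriv (m+1) h x) x := by
      rw [iteratedDeriv_succ]; exact (hdiff m x).hasDerivAt
    have Hm1 : HasDerivAt (iteratedDeriv (m-1) h) (iteratedDeriv (m-1+1) h x) x := by
      rw [iteratedDeriv_succ]; exact (hdiff (m-1) x).hasDerivAt
    have H : HasDerivAt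
        (fun t => t * iteratedDeriv m h t + (m:ℝ) * iteratedDeriv (m-1) h t)
        ((1 * iteratedDeriv m h x + x * iteratedDeriv (m+1) h x)
          + (m:ℝ) * iteratedDeriv (m-1+1) h x) x :=
      ((hasDerivAt_id x).mul Hm).add (Hm1.const_mul _)
    rw [H.deriv]
    have hm : (m:ℝ) * iteratedDeriv (m-1+1) h x = (m:ℝ) * iteratedDeriv m h x := by
      cases m with
      | zero => simp
      | succ j => rfl
    rw [hm]
    simp only [Nat.add_sub_cancel]
    push_cast
    ring

lemma iter_const_mul {F : ℝ → ℝ} (hF : ContDiff ℝ (⊤ : ℕ∞) F) (c : ℝ) (n : ℕ) (x : ℝ) :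
    iteratedDeriv n (fun t => c * F t) x = c * iteratedDeriv n F x := by
  simp only [← iteratedDerivWithin_univ]
  exact iteratedDerivWithin_const_mul (Set.mem_univ x) uniqueDiffOn_univ c
    (hF.contDiffWithinAt.of_le (by exact_mod_cast le_top))

lemma iter_sub {F G : ℝ → ℝ} (hF : ContDiff ℝ (⊤ : ℕ∞) F) (hG : ContDiff ℝ (⊤ : ℕ∞) G)
    (n : ℕ) (x : ℝ) :
    iteratedDeriv n (fun t => F t - G t) x = iteratedDeriv n F x - iteratedDeriv n G x := by
  simp only [← iteratedDerivWithin_univ]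
  have : (fun t => F t - G t) = F - G := rfl
  rw [this]
  exact iteratedDerivWithin_sub (Set.mem_univ x) uniqueDiffOn_univ
    (hF.contDiffWithinAt.of_le (by exact_mod_cast le_top))
    (hG.contDiffWithinAt.of_le (by exact_mod_cast le_top))

lemma key_identity (m : ℕ) (t : ℝ) :
    (m:ℝ) * (bernoulliGen t ^ (m+1) * Real.exp ((m:ℝ) * t)) =
      (m:ℝ) * (bernoulliGen t ^ m * Real.exp ((m:ℝ) * t)) -
        t * deriv (fun s => bernoulliGen s ^ m * Real.exp ((m:ℝ) * s)) t := by
  rcases eq_or_ne t 0 with rfl | ht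
  · simp [bernoulliGen]
  rcases Nat.eq_zero_or_pos m with rfl | hmpos
  · simp
  obtain ⟨j, rfl⟩ : ∃ j, m = j + 1 := ⟨m - 1, (Nat.succ_pred_eq_of_pos hmpos).symm⟩
  set m := j + 1 with hmdef
  have hD := exp_sub_one_ne ht
  have hB : HasDerivAt (fun s : ℝ => s / (Real.exp s - 1))
      ((1 * (Real.exp t - 1) - t * Real.exp t) / (Real.exp t - 1)^2) t :=
    (hasDerivAt_id t).div ((Real.hasDerivAt_exp t).sub_const 1) hD
  have hQ : HasDerivAt (fun s : ℝ => Real.exp ((m:ℝ) * s))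
      (Real.exp ((m:ℝ) * t) * ((m:ℝ) * 1)) t :=
    ((hasDerivAt_id t).const_mul (m:ℝ)).exp
  have hG : HasDerivAt (fun s : ℝ => (s / (Real.exp s - 1)) ^ m * Real.exp ((m:ℝ) * s)) _ t :=
    (hB.pow m).mul hQ
  have hloc : (fun s => bernoulliGen s ^ m * Real.exp ((m:ℝ) * s)) =ᶠ[nhds t]
      (fun s : ℝ => (s / (Real.exp s - 1)) ^ m * Real.exp ((m:ℝ) * s)) := by
    filter_upwards [isOpen_compl_singleton.mem_nhds ht] with s hs
    have hs' : s ≠ 0 := hs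
    unfold bernoulliGen
    rw [if_neg hs']
  rw [hloc.deriv_eq, hG.deriv]
  simp only [bernoulliGen, if_neg ht, hmdef, Nat.add_sub_cancel, Pi.pow_apply]
  push_cast
  simp only [div_pow]
  field_simp
  ring

theorem genBernoulli_order_lowering (k : ℕ) (hk : 1 ≤ k) (n : ℕ) :
    ((k : ℝ) - 1) *
        taylorCoeff n (fun t => bernoulliGen t ^ k * Real.exp (((k : ℝ) - 1) * t)) =
      ((k : ℝ) - n - 1) *
        taylorCoeff n (fun t => bernoulliGen t ^ (k - 1) * Real.exp (((k : ℝ) - 1) * t)) := by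
  obtain ⟨m, rfl⟩ : ∃ m, k = m + 1 := ⟨k - 1, (Nat.succ_pred_eq_of_pos hk).symm⟩
  have hcast : ((m + 1 : ℕ) : ℝ) - 1 = (m : ℝ) := by push_cast; ring
  have hsub : m + 1 - 1 = m := by omega
  rw [hcast, hsub]
  set g : ℝ → ℝ := fun t => bernoulliGen t ^ m * Real.exp ((m:ℝ) * t) with hgdef
  set f : ℝ → ℝ := fun t => bernoulliGen t ^ (m+1) * Real.exp ((m:ℝ) * t) with hfdef
  have hexp : ContDiff ℝ (⊤ : ℕ∞) (fun t : ℝ => Real.exp ((m:ℝ) * t)) :=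
    Real.contDiff_exp.comp (contDiff_const.mul contDiff_id)
  have hg : ContDiff ℝ (⊤ : ℕ∞) g := (contDiff_bernoulliGen.pow m).mul hexp
  have hf : ContDiff ℝ (⊤ : ℕ∞) f := (contDiff_bernoulliGen.pow (m+1)).mul hexp
  have hg' : ContDiff ℝ (⊤ : ℕ∞) (deriv g) := (contDiff_infty_iff_deriv.mp hg).2
  have hid : ContDiff ℝ (⊤ : ℕ∞) (fun t => t * deriv g t) := contDiff_id.mul hg'
  have key : (m:ℝ) * iteratedDeriv n f 0 = ((m:ℝ) - n) * iteratedDeriv n g 0 := by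
    have e1 : (fun t => (m:ℝ) * f t) = fun t => (m:ℝ) * g t - t * deriv g t :=
      funext fun t => key_identity m t
    calc (m:ℝ) * iteratedDeriv n f 0
        = iteratedDeriv n (fun t => (m:ℝ) * f t) 0 := (iter_const_mul hf _ n 0).symm
      _ = iteratedDeriv n (fun t => (m:ℝ) * g t - t * deriv g t) 0 := by rw [e1]
      _ = iteratedDeriv n (fun t => (m:ℝ) * g t) 0
            - iteratedDeriv n (fun t => t * deriv g t) 0 :=
          iter_sub (contDiff_const.mul hg) hid n 0
      _ = (m:ℝ) * iteratedDeriv n g 0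
            - (0 * iteratedDeriv n (deriv g) 0 + n * iteratedDeriv (n-1) (deriv g) 0) := by
          rw [iter_const_mul hg _ n 0, iter_mul_id hg' n 0]
      _ = (m:ℝ) * iteratedDeriv n g 0 - n * iteratedDeriv n g 0 := by
          cases n with
          | zero => simp
          | succ j =>
            have h5 : iteratedDeriv (j + 1 - 1) (deriv g) 0 = iteratedDeriv (j+1) g 0 := by
              simp only [Nat.add_sub_cancel, iteratedDeriv_succ']
            rw [h5]
            ring
      _ = ((m:ℝ) - n) * iteratedDeriv n g 0 := by ring
  simp only [taylorCoeff, ← hgdef, ← hfdef, ← mul_div_assoc]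
  rw [key]
  push_cast
  ring
end

section
/- Let Ḡ_n denote the n-th Taylor coefficient at 0 of the function x ↦ x/(−log(1−x)) (extended by value 1 at x = 0). Then Ḡ₀ = 1 and for every n ≥ 1 one has the recursion Ḡ_n = −Σ_{k=1}^{n} Ḡ_{n−k}/(k+1). -/
/-- The function `x ↦ x / (−log (1 − x))`, extended by the value `1` at `x = 0`;
its Taylor coefficients at `0` are the signed Gregory coefficients `Ḡₙ`. -/
noncomputable def gregoryGenNeg (x : ℝ) : ℝ :=
  if x = 0 then 1 else x / (-Real.log (1 - x))

open FormalMultilinearSeries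


/-- The function `x ↦ -log(1-x)/x` extended by `1` at `0`. -/
noncomputable def gregoryAux (x : ℝ) : ℝ := if x = 0 then 1 else -Real.log (1 - x) / x

lemma hasSum_gregoryAux {x : ℝ} (hx : |x| < 1) :
    HasSum (fun k : ℕ => ((k : ℝ) + 1)⁻¹ * x ^ k) (gregoryAux x) := by
  rcases eq_or_ne x 0 with rfl | hx0
  · have h0 : (fun k : ℕ => ((k : ℝ) + 1)⁻¹ * (0 : ℝ) ^ k)
        = fun k : ℕ => if k = 0 then (1 : ℝ) else 0 := by
      funext k
      rcases Nat.eq_zero_or_pos k with rfl | hk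
      · simp
      · simp [hk.ne']
    rw [h0]
    simpa [gregoryAux] using hasSum_ite_eq (0 : ℕ) (1 : ℝ)
  · have h := (Real.hasSum_pow_div_log_of_abs_lt_one hx).mul_right x⁻¹
    have heq : (fun n : ℕ => x ^ (n + 1) / (n + 1) * x⁻¹)
        = fun n : ℕ => ((n : ℝ) + 1)⁻¹ * x ^ n := by
      funext n
      field_simp [pow_succ]
      ring
    rw [heq] at h
    simpa [gregoryAux, hx0, div_eq_mul_inv] using h

noncomputable def Lser : FormalMultilinearSeries ℝ ℝ ℝ :=
  ofScalars ℝ (fun k => ((k : ℝ) + 1)⁻¹)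

lemma hasFPowerSeries_gregoryAux : HasFPowerSeriesOnBall gregoryAux Lser 0 1 := by
  constructor
  · refine Lser.le_radius_of_bound 1 fun n => ?_
    rw [Lser, ofScalars_norm]
    simp only [Real.norm_eq_abs, NNReal.coe_one, one_pow, mul_one]
    rw [abs_of_nonneg (by positivity), inv_le_one_iff₀]
    right; linarith
  · exact one_pos
  · intro y hy
    rw [mem_emetric_ball_zero_iff] at hy
    have hy1 : |y| < 1 := by
      rw [← Real.norm_eq_abs]
      rw [← ofReal_norm, ENNReal.ofReal_lt_one] at hy; exact hy
    simp only [Lser, ofScalars_apply_eq, smul_eq_mul, zero_add]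
    exact hasSum_gregoryAux hy1

lemma gregoryGenNeg_eq_inv : gregoryGenNeg = fun x => (gregoryAux x)⁻¹ := by
  funext x
  rcases eq_or_ne x 0 with rfl | hx0
  · simp [gregoryGenNeg, gregoryAux]
  · simp [gregoryGenNeg, gregoryAux, hx0, inv_div]


lemma taylorCoeff_eq_coeff {f : ℝ → ℝ} {p : FormalMultilinearSeries ℝ ℝ ℝ} {r : ENNReal}
    (h : HasFPowerSeriesOnBall f p 0 r) (n : ℕ) : taylorCoeff n f = p.coeff n := by
  have h1 := h.factorial_smul (1 : ℝ) n
  have h2 : (p n fun _ => (1 : ℝ)) = p.coeff n := by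
    rw [FormalMultilinearSeries.apply_eq_pow_smul_coeff, one_pow, one_smul]
  unfold taylorCoeff
  rw [iteratedDeriv_eq_iteratedFDeriv, ← h1, h2, nsmul_eq_mul, mul_comm, mul_div_assoc,
    div_self, mul_one]
  exact_mod_cast Nat.factorial_ne_zero n

set_option maxHeartbeats 1000000 in
theorem signed_gregory_recursion :
    taylorCoeff 0 gregoryGenNeg = 1 ∧
    ∀ n : ℕ, 1 ≤ n →
      taylorCoeff n gregoryGenNeg =
        -∑ k ∈ Finset.Icc 1 n, taylorCoeff (n - k) gregoryGenNeg / ((k : ℝ) + 1) := by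
  have hA : AnalyticAt ℝ gregoryAux 0 :=
    hasFPowerSeries_gregoryAux.hasFPowerSeriesAt.analyticAt
  have hganal : AnalyticAt ℝ gregoryGenNeg 0 := by
    rw [gregoryGenNeg_eq_inv]
    exact hA.inv (by simp [gregoryAux])
  obtain ⟨q, hq⟩ := hganal
  obtain ⟨r0, hr0⟩ := hq
  set c : ℕ → ℝ :=
    fun n => ∑ kl ∈ Finset.HasAntidiagonal.antidiagonal n, q.coeff kl.1 * (((kl.2 : ℕ) : ℝ) + 1)⁻¹ with hc
  -- basic facts for `x` in the small ball
  have hball : ∀ x : ℝ, (‖x‖₊ : ENNReal) < min r0 1 →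
      Summable (fun n => ‖q.coeff n * x ^ n‖) ∧
      Summable (fun k : ℕ => ‖((k : ℝ) + 1)⁻¹ * x ^ k‖) ∧
      (∀ n : ℕ, ∑ kl ∈ Finset.HasAntidiagonal.antidiagonal n,
          (q.coeff kl.1 * x ^ kl.1) * ((((kl.2 : ℕ) : ℝ) + 1)⁻¹ * x ^ kl.2) = c n * x ^ n) ∧
      HasSum (fun n => c n * x ^ n) 1 := by
    intro x hx
    have hxr : x ∈ EMetric.ball (0 : ℝ) r0 :=
      mem_emetric_ball_zero_iff.mpr (hx.trans_le (min_le_left _ _))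
    have hx1 : |x| < 1 := by
      have h1 : (‖x‖₊ : ENNReal) < 1 := hx.trans_le (min_le_right _ _)
      rw [← Real.norm_eq_abs]
      exact_mod_cast h1
    have Sq : Summable fun n => ‖q.coeff n * x ^ n‖ := by
      have := q.summable_norm_apply (EMetric.ball_subset_ball hr0.r_le hxr)
      refine this.congr fun n => ?_
      rw [FormalMultilinearSeries.apply_eq_pow_smul_coeff, smul_eq_mul, mul_comm]
    have SL : Summable fun k : ℕ => ‖((k : ℝ) + 1)⁻¹ * x ^ k‖ := by
      have hxL : x ∈ EMetric.ball (0 : ℝ) Lser.radius := by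
        refine EMetric.ball_subset_ball hasFPowerSeries_gregoryAux.r_le ?_
        exact mem_emetric_ball_zero_iff.mpr (hx.trans_le (min_le_right _ _))
      have := Lser.summable_norm_apply hxL
      refine this.congr fun k => ?_
      rw [Lser, ofScalars_apply_eq, smul_eq_mul]
    have hinner : ∀ n : ℕ, ∑ kl ∈ Finset.HasAntidiagonal.antidiagonal n,
        (q.coeff kl.1 * x ^ kl.1) * ((((kl.2 : ℕ) : ℝ) + 1)⁻¹ * x ^ kl.2) = c n * x ^ n := by
      intro n
      rw [hc, Finset.sum_mul]
      refine Finset.sum_congr rfl fun kl hkl => ?_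
      have hn := Finset.HasAntidiagonal.mem_antidiagonal.mp hkl
      rw [← hn, pow_add]; ring
    refine ⟨Sq, SL, hinner, ?_⟩
    have hg : HasSum (fun n => q.coeff n * x ^ n) (gregoryGenNeg x) := by
      have := hr0.hasSum hxr
      rw [zero_add] at this
      refine this.congr_fun fun n => ?_
      rw [FormalMultilinearSeries.apply_eq_pow_smul_coeff, smul_eq_mul, mul_comm]
    have hh : HasSum (fun k : ℕ => ((k : ℝ) + 1)⁻¹ * x ^ k) (gregoryAux x) := hasSum_gregoryAux hx1
    have hprod1 : gregoryGenNeg x * gregoryAux x = 1 := by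
      rcases eq_or_ne x 0 with rfl | hx0
      · simp [gregoryGenNeg, gregoryAux]
      · have h1x : 0 < 1 - x := by have := abs_lt.mp hx1; linarith
        have hne : 1 - x ≠ 1 := by intro h; exact hx0 (by linarith)
        have hlog : Real.log (1 - x) ≠ 0 := by
          intro h
          rcases Real.log_eq_zero.mp h with h' | h' | h' <;> [linarith; exact hne h'; linarith]
        simp only [gregoryGenNeg, gregoryAux, if_neg hx0]
        field_simp
    have ht := tsum_mul_tsum_eq_tsum_sum_antidiagonal_of_summable_norm Sq SL
    have Scauchy : Summable fun n => ∑ kl ∈ Finset.HasAntidiagonal.antidiagonal n,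
        (q.coeff kl.1 * x ^ kl.1) * ((((kl.2 : ℕ) : ℝ) + 1)⁻¹ * x ^ kl.2) :=
      (summable_norm_sum_mul_antidiagonal_of_summable_norm Sq SL).of_norm
    have hS : Summable fun n => c n * x ^ n := Scauchy.congr hinner
    rw [hS.hasSum_iff]
    calc ∑' n, c n * x ^ n
        = ∑' n, ∑ kl ∈ Finset.HasAntidiagonal.antidiagonal n,
            (q.coeff kl.1 * x ^ kl.1) * ((((kl.2 : ℕ) : ℝ) + 1)⁻¹ * x ^ kl.2) :=
          (tsum_congr hinner).symm
      _ = (∑' n, q.coeff n * x ^ n) * (∑' k : ℕ, ((k : ℝ) + 1)⁻¹ * x ^ k) := ht.symm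
      _ = gregoryGenNeg x * gregoryAux x := by rw [hg.tsum_eq, hh.tsum_eq]
      _ = 1 := hprod1
  -- pick a positive radius inside `min r0 1`
  obtain ⟨ρ, hρ1, hρ2⟩ := ENNReal.lt_iff_exists_nnreal_btwn.mp
    (lt_min hr0.r_pos (zero_lt_one : (0 : ENNReal) < 1))
  have hρpos : (0 : ℝ) < ρ := by exact_mod_cast hρ1
  have hcoe : ∀ n, (ofScalars ℝ c).coeff n = c n := by
    intro n
    show (ofScalars ℝ c n fun _ => (1 : ℝ)) = c n
    rw [ofScalars_apply_eq]; simp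
  have P : HasFPowerSeriesAt (fun _ : ℝ => (1 : ℝ)) (ofScalars ℝ c) 0 := by
    rw [hasFPowerSeriesAt_iff]
    filter_upwards [Metric.ball_mem_nhds (0 : ℝ) hρpos] with z hz
    have hz' : (‖z‖₊ : ENNReal) < min r0 1 := by
      refine lt_trans ?_ hρ2
      rw [ENNReal.coe_lt_coe]
      rw [Metric.mem_ball, dist_zero_right] at hz
      exact_mod_cast hz
    obtain ⟨_, _, _, hsum⟩ := hball z hz'
    simpa [hcoe, smul_eq_mul, mul_comm] using hsum
  have hceq : ofScalars ℝ c = constFormalMultilinearSeries ℝ ℝ (1 : ℝ) :=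
    P.eq_formalMultilinearSeries hasFPowerSeriesAt_const
  have hc0 : ∀ n : ℕ, n ≠ 0 → c n = 0 := by
    intro n hn
    have h1 := congrFun hceq n
    have h2 : (ofScalars ℝ c n fun _ => (1 : ℝ)) = c n := by
      rw [ofScalars_apply_eq]; simp
    have h3 : (constFormalMultilinearSeries ℝ ℝ (1 : ℝ) n fun _ => (1 : ℝ)) = 0 := by
      rw [constFormalMultilinearSeries_apply_of_nonzero hn]; simp
    rw [← h2, h1, h3]
  have hcoeff : ∀ n : ℕ, taylorCoeff n gregoryGenNeg = q.coeff n :=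
    fun n => taylorCoeff_eq_coeff hr0 n
  constructor
  · simp [taylorCoeff, iteratedDeriv_zero, gregoryGenNeg]
  · intro n hn
    have hcn : ∑ kl ∈ Finset.HasAntidiagonal.antidiagonal n, q.coeff kl.1 * (((kl.2 : ℕ) : ℝ) + 1)⁻¹ = 0 :=
      hc0 n (by omega)
    rw [Finset.Nat.sum_antidiagonal_eq_sum_range_succ_mk, Finset.sum_range_succ] at hcn
    have hlast : q.coeff n * (((n - n : ℕ) : ℝ) + 1)⁻¹ = q.coeff n := by
      simp
    rw [hlast] at hcn
    have hmain : q.coeff n = -∑ k ∈ Finset.range n, q.coeff k * (((n - k : ℕ) : ℝ) + 1)⁻¹ := by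
      linarith [hcn]
    rw [hcoeff n, hmain]
    congr 1
    refine Finset.sum_nbij' (fun k => n - k) (fun k => n - k) ?_ ?_ ?_ ?_ ?_
    · intro a ha; simp only [Finset.mem_range] at ha; simp only [Finset.mem_Icc]; omega
    · intro a ha; simp only [Finset.mem_Icc] at ha; simp only [Finset.mem_range]; omega
    · intro a ha; simp only [Finset.mem_range] at ha; show n - (n - a) = a; omega
    · intro a ha; simp only [Finset.mem_Icc] at ha; show n - (n - a) = a; omega
    · intro a ha; simp only [Finset.mem_range] at ha
      have e1 : n - (n - a) = a := by omega
      rw [hcoeff, e1, div_eq_mul_inv]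
end

section
/- For every real number m, the second Taylor coefficient at 0 of the function t ↦ (t/(eᵗ−1))² · e^{(2−m)t} (equivalently, the constant term in the asymptotic expansion of e^{−mλ}/(1−e^{−λ})² as λ → 0⁺ after removing the divergent terms 1/λ² and (1−m)/λ) equals 5/12 − m + m²/2; moreover this quantity vanishes exactly when m = 1 + 1/√6 or m = 1 − 1/√6. -/
open Filter FormalMultilinearSeries

/-- Auxiliary: `(e^t - 1)/t`, extended by `1` at `0`. -/
noncomputable def Efun (t : ℝ) : ℝ := if t = 0 then 1 else (Real.exp t - 1) / t

lemma bernoulliGen_eq_inv (t : ℝ) : bernoulliGen t = (Efun t)⁻¹ := by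
  unfold bernoulliGen Efun
  split_ifs with h
  · norm_num
  · rw [inv_div]

/-- The power series of `Efun`. -/
noncomputable def Eser : FormalMultilinearSeries ℝ ℝ ℝ :=
  FormalMultilinearSeries.ofScalars ℝ (fun n => ((n + 1).factorial : ℝ)⁻¹)

lemma Eser_radius : Eser.radius = ⊤ := by
  apply ofScalars_radius_eq_top_of_tendsto
  · exact Filter.Eventually.of_forall fun n => by positivity
  · have key : ∀ n : ℕ, ‖(((n + 1 + 1).factorial : ℝ)⁻¹ : ℝ)‖ / ‖(((n + 1).factorial : ℝ)⁻¹ : ℝ)‖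
        = ((n : ℝ) + 2)⁻¹ := by
      intro n
      have h1 : ((n + 1).factorial : ℝ) > 0 := by positivity
      have h2 : (n + 1 + 1).factorial = (n + 2) * (n + 1).factorial := rfl
      rw [Real.norm_eq_abs, Real.norm_eq_abs, abs_inv, abs_inv,
        abs_of_pos (by positivity : ((n + 1 + 1).factorial : ℝ) > 0), abs_of_pos h1, h2]
      push_cast
      field_simp
    have : Filter.Tendsto (fun n : ℕ => ((n : ℝ) + 2)⁻¹) atTop (nhds 0) := by
      apply Filter.Tendsto.inv_tendsto_atTop
      exact Filter.tendsto_atTop_add_const_right _ 2 tendsto_natCast_atTop_atTop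
    exact this.congr fun n => (key n).symm

lemma Efun_hasSum (y : ℝ) :
    HasSum (fun n => (((n + 1).factorial : ℝ)⁻¹) • y ^ n) (Efun y) := by
  rcases eq_or_ne y 0 with rfl | hy
  · have h0 : (fun n : ℕ => (((n + 1).factorial : ℝ)⁻¹) • (0 : ℝ) ^ n) 0 = Efun 0 := by
      simp [Efun]
    rw [← h0]
    apply hasSum_single
    intro b hb
    simp [zero_pow hb]
  · have hexp : HasSum (fun n : ℕ => y ^ n / (n.factorial : ℝ)) (Real.exp y) := by
      rw [Real.exp_eq_exp_ℝ]
      exact NormedSpace.expSeries_div_hasSum_exp y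
    have h1 : HasSum (fun n : ℕ => y ^ (n + 1) / ((n + 1).factorial : ℝ)) (Real.exp y - 1) := by
      exact (hasSum_nat_add_iff (f := fun n => y ^ n / (n.factorial : ℝ)) 1).mpr
        (by simpa using hexp)
    have h2 := h1.mul_left y⁻¹
    have h3 : y⁻¹ * (Real.exp y - 1) = Efun y := by
      rw [Efun, if_neg hy, div_eq_inv_mul]
    rw [h3] at h2
    refine h2.congr_fun fun n => ?_
    rw [pow_succ, smul_eq_mul]
    field_simp
    try ring

lemma Efun_hasFPowerSeries : HasFPowerSeriesOnBall Efun Eser 0 ⊤ := by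
  refine ⟨Eser_radius.ge, ENNReal.zero_lt_top, fun {y} _ => ?_⟩
  rw [zero_add]
  have := Efun_hasSum y
  refine this.congr_fun fun n => ?_
  rw [Eser, ofScalars_apply_eq]

lemma Efun_analyticAt (y : ℝ) : AnalyticAt ℝ Efun y :=
  Efun_hasFPowerSeries.analyticAt_of_mem (by simp [EMetric.mem_ball, edist_lt_top])

lemma Efun_zero : Efun 0 = 1 := if_pos rfl

lemma deriv_Efun_zero : deriv Efun 0 = 1 / 2 := by
  rw [Efun_hasFPowerSeries.hasFPowerSeriesAt.deriv, Eser, ofScalars_apply_eq]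
  norm_num

lemma deriv2_Efun_zero : deriv (deriv Efun) 0 = 1 / 3 := by
  have h := Efun_hasFPowerSeries.factorial_smul (1 : ℝ) 2
  rw [Eser, ofScalars_apply_eq] at h
  have h2 : iteratedFDeriv ℝ 2 Efun 0 (fun _ => (1 : ℝ)) = iteratedDeriv 2 Efun 0 :=
    (iteratedDeriv_eq_iteratedFDeriv ..).symm
  rw [h2] at h
  have h3 : iteratedDeriv 2 Efun 0 = deriv (deriv Efun) 0 := by
    rw [iteratedDeriv_succ, iteratedDeriv_one]
  rw [h3] at h
  rw [← h]
  norm_num [Nat.factorial]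

theorem shifted_smoothed_sum_of_naturals (m : ℝ) :
    taylorCoeff 2 (fun t => bernoulliGen t ^ 2 * Real.exp ((2 - m) * t)) =
        5 / 12 - m + m ^ 2 / 2 ∧
      (5 / 12 - m + m ^ 2 / 2 = 0 ↔
        m = 1 + 1 / Real.sqrt 6 ∨ m = 1 - 1 / Real.sqrt 6) := by
  constructor
  · -- Taylor coefficient computation
    have hfeq : (fun t => bernoulliGen t ^ 2 * Real.exp ((2 - m) * t))
        = (fun t => (Efun t ^ 2)⁻¹ * Real.exp ((2 - m) * t)) := by
      funext t; rw [bernoulliGen_eq_inv, inv_pow]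
    rw [hfeq]
    set f : ℝ → ℝ := fun t => (Efun t ^ 2)⁻¹ * Real.exp ((2 - m) * t) with hf
    set F : ℝ → ℝ := fun t =>
      -((2 : ℕ) * Efun t ^ (2 - 1) * deriv Efun t) / (Efun t ^ 2) ^ 2 * Real.exp ((2 - m) * t)
        + (Efun t ^ 2)⁻¹ * (Real.exp ((2 - m) * t) * ((2 - m) * 1)) with hF
    have hne : ∀ᶠ t in nhds (0 : ℝ), Efun t ≠ 0 := by
      apply (Efun_analyticAt 0).continuousAt.eventually_ne
      rw [Efun_zero]; exact one_ne_zero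
    have hder : ∀ᶠ t in nhds (0 : ℝ), HasDerivAt f (F t) t := by
      filter_upwards [hne] with t ht
      have hEt : HasDerivAt Efun (deriv Efun t) t := (Efun_analyticAt t).differentiableAt.hasDerivAt
      have h1 : HasDerivAt (fun s => Efun s ^ 2)
          ((2 : ℕ) * Efun t ^ (2 - 1) * deriv Efun t) t := hEt.pow 2
      have h2 := h1.inv (pow_ne_zero 2 ht)
      have h3 : HasDerivAt (fun s : ℝ => Real.exp ((2 - m) * s))
          (Real.exp ((2 - m) * t) * ((2 - m) * 1)) t :=
        ((hasDerivAt_id t).const_mul (2 - m)).exp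
      exact h2.mul h3
    have hderiv_eq : deriv f =ᶠ[nhds (0 : ℝ)] F := hder.mono fun t ht => ht.deriv
    -- now compute deriv F 0
    have hE0 : HasDerivAt Efun (1 / 2) 0 := by
      have := (Efun_analyticAt 0).differentiableAt.hasDerivAt
      rwa [deriv_Efun_zero] at this
    have hD0 : HasDerivAt (deriv Efun) (1 / 3) 0 := by
      have hdd : DifferentiableAt ℝ (deriv Efun) 0 :=
        ((Efun_hasFPowerSeries.analyticOnNhd.deriv) 0
          (by simp [EMetric.mem_ball, edist_lt_top])).differentiableAt
      have := hdd.hasDerivAt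
      rwa [deriv2_Efun_zero] at this
    have hexp0 : HasDerivAt (fun s : ℝ => Real.exp ((2 - m) * s))
        (Real.exp ((2 - m) * 0) * ((2 - m) * 1)) 0 :=
      ((hasDerivAt_id 0).const_mul (2 - m)).exp
    have ha : HasDerivAt (fun s => -((2 : ℕ) * Efun s ^ (2 - 1) * deriv Efun s))
        (-(((2 : ℕ) * ((1 : ℕ) * Efun 0 ^ ((1 : ℕ) - 1) * (1 / 2))) * deriv Efun 0
          + ((2 : ℕ) * Efun 0 ^ (2 - 1)) * (1 / 3))) 0 := by
      exact (((hE0.pow 1).const_mul ((2 : ℕ) : ℝ)).mul hD0).neg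
    have hb : HasDerivAt (fun s => (Efun s ^ 2) ^ 2)
        ((2 : ℕ) * (Efun 0 ^ 2) ^ (2 - 1) * ((2 : ℕ) * Efun 0 ^ (2 - 1) * (1 / 2))) 0 :=
      (hE0.pow 2).pow 2
    have hbne : (Efun 0 ^ 2) ^ 2 ≠ 0 := by rw [Efun_zero]; norm_num
    have hq := ha.div hb hbne
    have hinv := (hE0.pow 2).inv (by rw [Pi.pow_apply, Efun_zero]; norm_num)
    have hF0 := (hq.mul hexp0).add (hinv.mul (hexp0.mul_const ((2 - m) * 1)))
    have hF0' : HasDerivAt F _ 0 := hF0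
    have hd2 : deriv F 0 = _ := hF0'.deriv
    have key : iteratedDeriv 2 f 0 = deriv F 0 := by
      rw [iteratedDeriv_succ, iteratedDeriv_one]
      exact hderiv_eq.deriv_eq
    rw [taylorCoeff, key, hd2]
    simp only [Pi.div_apply, Pi.pow_apply, Pi.inv_apply, Efun_zero, deriv_Efun_zero]
    norm_num
    ring
  · -- algebraic equivalence
    have h6 : Real.sqrt 6 ^ 2 = 6 := Real.sq_sqrt (by norm_num)
    have h6pos : (0 : ℝ) < Real.sqrt 6 := Real.sqrt_pos.mpr (by norm_num)
    have h6ne : Real.sqrt 6 ≠ 0 := ne_of_gt h6pos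
    constructor
    · intro h
      have key : (m - 1) ^ 2 = (1 / Real.sqrt 6) ^ 2 := by
        rw [div_pow, one_pow, h6]
        nlinarith [h]
      rcases sq_eq_sq_iff_eq_or_eq_neg.mp key with h1 | h1
      · left; linarith
      · right; linarith
    · rintro (rfl | rfl) <;> · field_simp; nlinarith [h6]
end

section
/- Let f be the function x ↦ x/(−log(1−x)) (extended by value 1 at x = 0) and let c_m(g) denote the m-th Taylor coefficient at 0 of an analytic function g. Then for all integers u ≥ 1 and m ≥ 1, one has u · c_m(f^{u+1}) = (u−m) · c_m(f^u) − (u−m+1) · c_{m−1}(f^u). Equivalently, the Gregory polynomials G_m^{(u)} = c_m(f^u)/u satisfy (u+1)·G_m^{(u+1)} = (u−m)·G_m^{(u)} − (u−m+1)·G_{m−1}^{(u)}. -/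
open Filter Set

lemma an_iteratedDeriv {U : Set ℝ} {H : ℝ → ℝ} (hH : AnalyticOnNhd ℝ H U) (n : ℕ) :
    AnalyticOnNhd ℝ (iteratedDeriv n H) U := by
  induction n with
  | zero => simpa [iteratedDeriv_zero] using hH
  | succ n ih => rw [iteratedDeriv_succ]; exact ih.deriv

lemma iD_cmul {U : Set ℝ} (hU : IsOpen U) {A : ℝ → ℝ} (hA : AnalyticOnNhd ℝ A U) (c : ℝ)
    (n : ℕ) : ∀ x ∈ U, iteratedDeriv n (fun y => c * A y) x = c * iteratedDeriv n A x := by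
  induction n with
  | zero => intro x hx; simp [iteratedDeriv_zero]
  | succ n ih =>
    intro x hx
    rw [iteratedDeriv_succ, iteratedDeriv_succ]
    have heq : iteratedDeriv n (fun y => c * A y) =ᶠ[nhds x]
        fun y => c * iteratedDeriv n A y :=
      eventually_of_mem (hU.mem_nhds hx) fun y hy => ih y hy
    rw [heq.deriv_eq, deriv_const_mul _ ((an_iteratedDeriv hA n x hx).differentiableAt)]

lemma iD_sub {U : Set ℝ} (hU : IsOpen U) {A B : ℝ → ℝ} (hA : AnalyticOnNhd ℝ A U)
    (hB : AnalyticOnNhd ℝ B U) (n : ℕ) :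
    ∀ x ∈ U, iteratedDeriv n (fun y => A y - B y) x
      = iteratedDeriv n A x - iteratedDeriv n B x := by
  induction n with
  | zero => intro x hx; simp [iteratedDeriv_zero]
  | succ n ih =>
    intro x hx
    rw [iteratedDeriv_succ, iteratedDeriv_succ, iteratedDeriv_succ]
    have heq : iteratedDeriv n (fun y => A y - B y) =ᶠ[nhds x]
        fun y => iteratedDeriv n A y - iteratedDeriv n B y :=
      eventually_of_mem (hU.mem_nhds hx) fun y hy => ih y hy
    rw [heq.deriv_eq, deriv_fun_sub ((an_iteratedDeriv hA n x hx).differentiableAt)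
      ((an_iteratedDeriv hB n x hx).differentiableAt)]

lemma iD_mulX {U : Set ℝ} (hU : IsOpen U) {H : ℝ → ℝ} (hH : AnalyticOnNhd ℝ H U) (n : ℕ) :
    ∀ x ∈ U, iteratedDeriv (n + 1) (fun y => y * H y) x
      = x * iteratedDeriv (n + 1) H x + ((n : ℝ) + 1) * iteratedDeriv n H x := by
  induction n with
  | zero =>
    intro x hx
    rw [iteratedDeriv_one, iteratedDeriv_one, iteratedDeriv_zero]
    rw [deriv_fun_mul differentiableAt_fun_id ((hH x hx).differentiableAt)]
    simp
    ring
  | succ n ih =>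
    intro x hx
    rw [iteratedDeriv_succ (n := n + 1)]
    have heq : iteratedDeriv (n + 1) (fun y => y * H y) =ᶠ[nhds x]
        fun y => y * iteratedDeriv (n + 1) H y + ((n : ℝ) + 1) * iteratedDeriv n H y :=
      eventually_of_mem (hU.mem_nhds hx) fun y hy => ih y hy
    have h1 := (an_iteratedDeriv hH (n + 1) x hx).differentiableAt
    have h2 := (an_iteratedDeriv hH n x hx).differentiableAt
    rw [heq.deriv_eq, deriv_fun_add (differentiableAt_fun_id.fun_mul h1) (h2.const_mul _),
      deriv_fun_mul differentiableAt_fun_id h1, deriv_const_mul _ h2,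
      ← iteratedDeriv_succ, ← iteratedDeriv_succ]
    simp
    ring

lemma gregoryGenNeg_analyticAt : AnalyticAt ℝ gregoryGenNeg 0 := by
  set c : ℕ → ℝ := fun n => ((n : ℝ) + 1)⁻¹ with hc
  set p := FormalMultilinearSeries.ofScalars ℝ c with hp
  have hrad : p.radius = 1 := by
    apply FormalMultilinearSeries.ofScalars_radius_eq_of_tendsto ℝ c one_ne_zero
    have h1 : Filter.Tendsto (fun n : ℕ => 1 + 1 / ((n : ℝ) + 1)) atTop (nhds (1 + 0)) :=
      tendsto_const_nhds.add tendsto_one_div_add_atTop_nhds_zero_nat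
    simp only [add_zero] at h1
    apply h1.congr'
    filter_upwards with n
    rw [hc]
    simp only [Nat.succ_eq_add_one, Nat.cast_add, Nat.cast_one, Real.norm_eq_abs, NNReal.coe_one]
    rw [abs_of_pos (by positivity), abs_of_pos (by positivity)]
    have hn1 : ((n : ℝ) + 1) ≠ 0 := by positivity
    have hn2 : ((n : ℝ) + 1 + 1) ≠ 0 := by positivity
    field_simp
  have hradpos : 0 < p.radius := by rw [hrad]; norm_num
  have hball := p.hasFPowerSeriesOnBall hradpos
  have hga : AnalyticAt ℝ p.sum 0 := hball.analyticAt
  have hg0 : p.sum 0 = 1 := by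
    have := FormalMultilinearSeries.ofScalarsSum_zero (E := ℝ) c
    simpa [FormalMultilinearSeries.ofScalarsSum, hc] using this
  have hne : p.sum 0 ≠ 0 := by rw [hg0]; norm_num
  have heq : (fun x => (p.sum x)⁻¹) =ᶠ[nhds (0 : ℝ)] gregoryGenNeg := by
    filter_upwards [Metric.ball_mem_nhds (0 : ℝ) one_pos] with x hx
    rw [Metric.mem_ball, Real.dist_eq, sub_zero] at hx
    by_cases hx0 : x = 0
    · simp [hx0, hg0, gregoryGenNeg]
    · have hsum : HasSum (fun n : ℕ => x ^ (n + 1) / ((n : ℝ) + 1)) (-Real.log (1 - x)) := by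
        exact_mod_cast Real.hasSum_pow_div_log_of_abs_lt_one hx
      have hfun : (fun n : ℕ => x ^ (n + 1) / ((n : ℝ) + 1) / x) = fun n => c n • x ^ n := by
        funext n
        rw [hc, pow_succ, smul_eq_mul]
        field_simp
      have hsum2 : HasSum (fun n : ℕ => c n • x ^ n) (-Real.log (1 - x) / x) :=
        hfun ▸ hsum.div_const x
      have hval : p.sum x = -Real.log (1 - x) / x := by
        have h := FormalMultilinearSeries.ofScalars_sum_eq (E := ℝ) c x
        rw [hp]
        show FormalMultilinearSeries.ofScalarsSum c x = _
        rw [h, hsum2.tsum_eq]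
      rw [hval, inv_div, gregoryGenNeg, if_neg hx0]
  exact (hga.inv hne).congr heq


lemma greg_deriv_identity (v : ℕ) :
    ∀ x ∈ Set.Ioo (-1 : ℝ) 1,
      ((v : ℝ) + 1) * gregoryGenNeg x ^ (v + 2)
        = ((v : ℝ) + 1) * (1 - x) * gregoryGenNeg x ^ (v + 1)
          - x * (1 - x) * deriv (fun y => gregoryGenNeg y ^ (v + 1)) x := by
  intro x hx
  obtain ⟨hx1, hx2⟩ := hx
  by_cases hx0 : x = 0
  · subst hx0
    simp [gregoryGenNeg]
  · have h1x : (1 : ℝ) - x ≠ 0 := by intro h; nlinarith [h]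
    have h1x' : (0 : ℝ) < 1 - x := by linarith
    have hL : Real.log (1 - x) ≠ 0 := by
      intro h
      rcases (Real.log_eq_zero).mp h with h' | h' | h' <;> [linarith; exact hx0 (by linarith); linarith]
    have hLn : -Real.log (1 - x) ≠ 0 := by simpa using hL
    have hlog : HasDerivAt (fun y : ℝ => -Real.log (1 - y)) (1 / (1 - x)) x := by
      have hsub : HasDerivAt (fun y : ℝ => 1 - y) (-1) x := (hasDerivAt_id x).const_sub 1
      have : HasDerivAt (fun y : ℝ => -Real.log (1 - y)) (-((1 - x)⁻¹ * -1)) x :=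
        ((Real.hasDerivAt_log h1x).comp x hsub).neg
      convert this using 1
      ring
    have hdf : HasDerivAt gregoryGenNeg
        ((1 * (-Real.log (1 - x)) - x * (1 / (1 - x))) / (-Real.log (1 - x)) ^ 2) x := by
      have hdiv := (hasDerivAt_id x).div hlog hLn
      apply hdiv.congr_of_eventuallyEq
      filter_upwards [eventually_ne_nhds hx0] with y hy
      rw [gregoryGenNeg, if_neg hy]; rfl
    have hdF : HasDerivAt (fun y => gregoryGenNeg y ^ (v + 1)) _ x := hdf.pow (v + 1)
    rw [hdF.deriv]
    have hval : gregoryGenNeg x = x / (-Real.log (1 - x)) := by rw [gregoryGenNeg, if_neg hx0]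
    rw [hval]
    simp only [Nat.add_sub_cancel, Nat.cast_add, Nat.cast_one]
    rw [div_pow, div_pow, div_pow]
    field_simp
    ring

theorem gregory_polynomial_recursion (u : ℕ) (hu : 1 ≤ u) (m : ℕ) (hm : 1 ≤ m) :
    (u : ℝ) * taylorCoeff m (fun x => gregoryGenNeg x ^ (u + 1)) =
      ((u : ℝ) - m) * taylorCoeff m (fun x => gregoryGenNeg x ^ u) -
        ((u : ℝ) - m + 1) * taylorCoeff (m - 1) (fun x => gregoryGenNeg x ^ u) := by
  obtain ⟨v, rfl⟩ : ∃ v, u = v + 1 := ⟨u - 1, (Nat.succ_pred_eq_of_pos hu).symm⟩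
  obtain ⟨k, rfl⟩ : ∃ k, m = k + 1 := ⟨m - 1, (Nat.succ_pred_eq_of_pos hm).symm⟩
  set F : ℝ → ℝ := fun x => gregoryGenNeg x ^ (v + 1) with hFdef
  set G : ℝ → ℝ := fun x => gregoryGenNeg x ^ (v + 1 + 1) with hGdef
  set P : ℝ → ℝ := deriv F with hPdef
  set U : Set ℝ := {x | AnalyticAt ℝ gregoryGenNeg x} with hUdef
  have hUo : IsOpen U := isOpen_analyticAt ℝ gregoryGenNeg
  have hU0 : (0 : ℝ) ∈ U := gregoryGenNeg_analyticAt
  have hFU : AnalyticOnNhd ℝ F U := fun x hx => hx.pow _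
  have hGU : AnalyticOnNhd ℝ G U := fun x hx => hx.pow _
  have hPU : AnalyticOnNhd ℝ P U := hFU.deriv
  have hxF : AnalyticOnNhd ℝ (fun y => y * F y) U := analyticOnNhd_id.mul hFU
  have hxP : AnalyticOnNhd ℝ (fun y => y * P y) U := analyticOnNhd_id.mul hPU
  have hxxP : AnalyticOnNhd ℝ (fun y => y * (y * P y)) U := analyticOnNhd_id.mul hxP
  have hA1 : AnalyticOnNhd ℝ (fun y => ((v : ℝ) + 1) * F y) U := analyticOnNhd_const.mul hFU
  have hA2 : AnalyticOnNhd ℝ (fun y => ((v : ℝ) + 1) * (y * F y)) U :=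
    analyticOnNhd_const.mul hxF
  have hA : AnalyticOnNhd ℝ
      (fun y => ((v : ℝ) + 1) * F y - ((v : ℝ) + 1) * (y * F y)) U := hA1.sub hA2
  have hB : AnalyticOnNhd ℝ (fun y => y * P y - y * (y * P y)) U := hxP.sub hxxP
  have hid : (fun x => ((v : ℝ) + 1) * G x) =ᶠ[nhds (0 : ℝ)]
      fun x => (((v : ℝ) + 1) * F x - ((v : ℝ) + 1) * (x * F x))
        - ((x * P x) - x * (x * P x)) := by
    filter_upwards [Ioo_mem_nhds (by norm_num : (-1 : ℝ) < 0) (by norm_num : (0 : ℝ) < 1)]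
      with x hx
    have h := greg_deriv_identity v x hx
    have hG2 : G x = gregoryGenNeg x ^ (v + 2) := by rw [hGdef]
    rw [hG2]
    have hP2 : P x = deriv (fun y => gregoryGenNeg y ^ (v + 1)) x := rfl
    rw [hP2]
    rw [hFdef]
    linear_combination h
  have hev := hid.iteratedDeriv_eq (k + 1)
  rw [iD_cmul hUo hGU _ (k + 1) 0 hU0, iD_sub hUo hA hB (k + 1) 0 hU0,
    iD_sub hUo hA1 hA2 (k + 1) 0 hU0, iD_sub hUo hxP hxxP (k + 1) 0 hU0,
    iD_cmul hUo hFU _ (k + 1) 0 hU0, iD_cmul hUo hxF _ (k + 1) 0 hU0] at hev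
  set a : ℝ := iteratedDeriv (k + 1) F 0 with hadef
  set b : ℝ := iteratedDeriv k F 0 with hbdef
  have hPsh : ∀ j : ℕ, iteratedDeriv j P 0 = iteratedDeriv (j + 1) F 0 := by
    intro j; rw [iteratedDeriv_succ']
  have hxF0 : iteratedDeriv (k + 1) (fun y => y * F y) 0 = ((k : ℝ) + 1) * b := by
    rw [iD_mulX hUo hFU k 0 hU0]; simp [hbdef]
  have hxP0 : iteratedDeriv (k + 1) (fun y => y * P y) 0 = ((k : ℝ) + 1) * a := by
    rw [iD_mulX hUo hPU k 0 hU0, hPsh k]; simp [hadef]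
  have hxP0' : iteratedDeriv k (fun y => y * P y) 0 = (k : ℝ) * b := by
    cases k with
    | zero => simp [iteratedDeriv_zero]
    | succ j =>
      rw [iD_mulX hUo hPU j 0 hU0, hPsh j]
      simp [hbdef]
      try push_cast
      try ring
  have hxxP0 : iteratedDeriv (k + 1) (fun y => y * (y * P y)) 0
      = ((k : ℝ) + 1) * ((k : ℝ) * b) := by
    rw [iD_mulX hUo hxP k 0 hU0, hxP0']; simp
  rw [hxF0, hxP0, hxxP0] at hev
  -- now hev : (v+1) * iD (k+1) G 0 = ((v+1)*a - (v+1)*((k+1)*b)) - ((k+1)*a - (k+1)*(k*b))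
  rw [taylorCoeff, taylorCoeff, taylorCoeff, Nat.add_sub_cancel, ← hadef, ← hbdef]
  have hkf : ((k.factorial : ℝ)) ≠ 0 := Nat.cast_ne_zero.mpr k.factorial_ne_zero
  have hk1 : ((k : ℝ) + 1) ≠ 0 := by positivity
  have hv1 : ((v : ℝ) + 1) ≠ 0 := by positivity
  have hC : iteratedDeriv (k + 1) G 0 =
      (((v : ℝ) + 1) * a - ((v : ℝ) + 1) * (((k : ℝ) + 1) * b)
        - (((k : ℝ) + 1) * a - ((k : ℝ) + 1) * ((k : ℝ) * b))) / ((v : ℝ) + 1) := by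
    rw [eq_div_iff hv1]
    linear_combination hev
  have hfac : (((k + 1).factorial : ℝ)) = ((k : ℝ) + 1) * (k.factorial : ℝ) := by
    rw [Nat.factorial_succ]; push_cast; ring
  rw [hC, hfac]
  push_cast
  field_simp
  ring
end

section
/- Let f be the function x ↦ x/(−log(1−x)) (extended by value 1 at x = 0) and let c_k(g) denote the k-th Taylor coefficient at 0 of an analytic function g. Then for every integer k ≥ 2, (k−1) · c_k(f^k) = −c_k(f^{k−1}). Equivalently, the Gregory polynomials satisfy k·G_k^{(k)} + G_k^{(k−1)} = 0. -/
set_option maxHeartbeats 1000000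

open PowerSeries Finset Filter
open scoped PowerSeries Topology NNReal ENNReal

namespace GregoryAux

/-- The series `∑ xⁿ/(n+1) = -log(1-x)/x`. -/
noncomputable def gS : PowerSeries ℝ := PowerSeries.mk fun n => ((n : ℝ) + 1)⁻¹

/-- The series `∑ xⁿ = 1/(1-x)`. -/
noncomputable def oneS : PowerSeries ℝ := PowerSeries.mk fun _ => (1 : ℝ)

lemma gS_deriv : gS + X * (d⁄dX ℝ gS) = oneS := by
  ext n
  cases n with
  | zero => simp [gS, oneS]
  | succ n =>
    rw [map_add, coeff_succ_X_mul, PowerSeries.coeff_derivative]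
    simp only [gS, oneS, PowerSeries.coeff_mk]
    have hne : ((n : ℝ) + 1 + 1) ≠ 0 := by positivity
    push_cast
    field_simp
    ring

lemma coeff_mul_oneS (Q : PowerSeries ℝ) (k : ℕ) :
    PowerSeries.coeff k (Q * oneS) = ∑ i ∈ range (k + 1), PowerSeries.coeff i Q := by
  rw [PowerSeries.coeff_mul, Finset.Nat.sum_antidiagonal_eq_sum_range_succ_mk]
  simp [oneS]

variable {A : PowerSeries ℝ} (hA : A * gS = 1)

include hA in
lemma deriv_A : d⁄dX ℝ A = -(A ^ 2 * d⁄dX ℝ gS) := by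
  have h0 : d⁄dX ℝ (A * gS) = 0 := by rw [hA]; exact Derivation.map_one_eq_zero _
  rw [Derivation.leibniz] at h0
  -- h0 : A • d⁄dX ℝ gS + gS • d⁄dX ℝ A = 0
  have h1 : A * (A * d⁄dX ℝ gS + gS * d⁄dX ℝ A) = 0 := by
    rw [show A * d⁄dX ℝ gS + gS * d⁄dX ℝ A = 0 from by simpa [smul_eq_mul] using h0]
    ring
  have h2 : A ^ 2 * d⁄dX ℝ gS + (A * gS) * d⁄dX ℝ A = 0 := by
    rw [← h1]; ring
  rw [hA, one_mul] at h2
  linear_combination h2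

include hA in
lemma X_mul_deriv_pow (m : ℕ) :
    X * d⁄dX ℝ (A ^ (m + 1)) =
      (m + 1 : ℝ⟦X⟧) * A ^ (m + 1) - (m + 1 : ℝ⟦X⟧) * (A ^ (m + 2) * oneS) := by
  have hd : d⁄dX ℝ (A ^ (m + 1)) = (m + 1 : ℝ⟦X⟧) * (A ^ m * d⁄dX ℝ A) := by
    have := Derivation.leibniz_pow (d⁄dX ℝ) (a := A) (m + 1)
    simpa [nsmul_eq_mul, smul_eq_mul, Nat.add_sub_cancel] using this
  have hXdA : X * d⁄dX ℝ A = A - A ^ 2 * oneS := by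
    rw [deriv_A hA]
    have : X * d⁄dX ℝ gS = oneS - gS := by linear_combination gS_deriv
    have h2 : A ^ 2 * gS = A := by
      calc A ^ 2 * gS = A * (A * gS) := by ring
      _ = A := by rw [hA, mul_one]
    calc X * -(A ^ 2 * d⁄dX ℝ gS) = -(A ^ 2 * (X * d⁄dX ℝ gS)) := by ring
      _ = -(A ^ 2 * (oneS - gS)) := by rw [this]
      _ = A - A ^ 2 * oneS := by rw [mul_sub, h2]; ring
  calc X * d⁄dX ℝ (A ^ (m + 1)) = (m + 1 : ℝ⟦X⟧) * (A ^ m * (X * d⁄dX ℝ A)) := by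
        rw [hd]; ring
    _ = (m + 1 : ℝ⟦X⟧) * (A ^ m * (A - A ^ 2 * oneS)) := by rw [hXdA]
    _ = _ := by ring

include hA in
lemma coeff_identity (m j : ℕ) :
    ((j : ℝ) + 1) * PowerSeries.coeff (j + 1) (A ^ (m + 1)) =
      ((m : ℝ) + 1) * PowerSeries.coeff (j + 1) (A ^ (m + 1)) -
        ((m : ℝ) + 1) * ∑ i ∈ range (j + 2), PowerSeries.coeff i (A ^ (m + 2)) := by
  have h := congrArg (PowerSeries.coeff (j + 1)) (X_mul_deriv_pow hA m)
  rw [coeff_succ_X_mul, PowerSeries.coeff_derivative, map_sub] at h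
  have hc : ∀ B : ℝ⟦X⟧, PowerSeries.coeff (j + 1) ((m + 1 : ℝ⟦X⟧) * B)
      = ((m : ℝ) + 1) * PowerSeries.coeff (j + 1) B := by
    intro B
    have : ((m + 1 : ℕ) : ℝ⟦X⟧) = PowerSeries.C ((m : ℝ) + 1) := by push_cast; simp
    rw [show (m + 1 : ℝ⟦X⟧) = ((m + 1 : ℕ) : ℝ⟦X⟧) by push_cast; ring, this, coeff_C_mul]
  rw [hc, hc, coeff_mul_oneS] at h
  push_cast at h ⊢
  linear_combination h

include hA in
lemma sum_coeff_zero (j : ℕ) :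
    ∑ i ∈ range (j + 2), PowerSeries.coeff i (A ^ (j + 2)) = 0 := by
  have h := coeff_identity hA (j + 1 - 1) j
  simp only [Nat.add_sub_cancel] at h
  -- with m = j : (j+1) c = (j+1) c - (j+1) * sum
  have h' := coeff_identity hA j j
  have : ((j : ℝ) + 1) * ∑ i ∈ range (j + 2), PowerSeries.coeff i (A ^ (j + 2)) = 0 := by
    linear_combination h'
  have hj : ((j : ℝ) + 1) ≠ 0 := by positivity
  exact (mul_eq_zero.mp this).resolve_left hj

include hA in
theorem formal_identity (k : ℕ) (hk : 2 ≤ k) :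
    ((k : ℝ) - 1) * PowerSeries.coeff k (A ^ k) =
      -PowerSeries.coeff k (A ^ (k - 1)) := by
  obtain ⟨j, rfl⟩ : ∃ j, k = j + 2 := ⟨k - 2, by omega⟩
  -- use coeff_identity with m = j (so m+1 = j+1 = k-1), at coefficient index j+2 (= (j+1)+1)
  have h := coeff_identity hA j (j + 1)
  have hs := sum_coeff_zero hA j
  -- split the sum range (j+3) = range (j+2) + top term
  have hsplit : ∑ i ∈ range (j + 3), PowerSeries.coeff i (A ^ (j + 2)) =
      (∑ i ∈ range (j + 2), PowerSeries.coeff i (A ^ (j + 2))) +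
        PowerSeries.coeff (j + 2) (A ^ (j + 2)) := by
    rw [Finset.sum_range_succ]
  rw [show j + 1 + 1 = j + 2 from rfl] at h
  rw [hsplit, hs, zero_add] at h
  have : (j + 2 : ℕ) - 1 = j + 1 := rfl
  rw [this]
  push_cast at h ⊢
  linear_combination h



/-- `f` is represented near `0` by the power series with coefficients `a`. -/
def Rep (a : ℕ → ℝ) (f : ℝ → ℝ) : Prop :=
  HasFPowerSeriesAt f (FormalMultilinearSeries.ofScalars ℝ a) 0

lemma ofScalars_coeff (a : ℕ → ℝ) (n : ℕ) :
    (FormalMultilinearSeries.ofScalars ℝ a).coeff n = a n := by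
  simp [FormalMultilinearSeries.coeff, FormalMultilinearSeries.ofScalars,
    ContinuousMultilinearMap.mkPiAlgebraFin_apply, List.prod_ofFn]

lemma rep_iff (a : ℕ → ℝ) (f : ℝ → ℝ) :
    Rep a f ↔ ∀ᶠ z in 𝓝 (0:ℝ), HasSum (fun n => a n * z ^ n) (f z) := by
  rw [Rep, hasFPowerSeriesAt_iff]
  refine eventually_congr (Eventually.of_forall fun z => ?_)
  simp [ofScalars_coeff, smul_eq_mul, mul_comm]

lemma rep_congr {a b : ℕ → ℝ} {f : ℝ → ℝ} (hab : ∀ n, a n = b n) (h : Rep a f) : Rep b f := by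
  have : a = b := funext hab
  rwa [this] at h

lemma rep_of_hasFPowerSeriesAt {f : ℝ → ℝ} {q : FormalMultilinearSeries ℝ ℝ ℝ}
    (h : HasFPowerSeriesAt f q 0) : Rep (fun n => q.coeff n) f := by
  rw [rep_iff]
  rw [hasFPowerSeriesAt_iff] at h
  refine h.mono fun z hz => ?_
  simpa [smul_eq_mul, mul_comm] using hz

lemma Rep.taylorCoeff_eq {a : ℕ → ℝ} {f : ℝ → ℝ} (h : Rep a f) (n : ℕ) :
    taylorCoeff n f = a n := by
  obtain ⟨r, hr⟩ := h
  have key := hr.factorial_smul (1 : ℝ) n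
  have h1 : (FormalMultilinearSeries.ofScalars ℝ a) n (fun _ => (1:ℝ)) = a n := by
    rw [show (fun _ : Fin n => (1:ℝ)) = 1 from rfl]; exact ofScalars_coeff a n
  rw [h1] at key
  have h2 : iteratedDeriv n f 0 = iteratedFDeriv ℝ n f 0 (fun _ => (1:ℝ)) := by
    rw [iteratedDeriv_eq_iteratedFDeriv]
  rw [taylorCoeff, h2, ← key]
  have : (n.factorial : ℝ) ≠ 0 := Nat.cast_ne_zero.mpr n.factorial_ne_zero
  rw [nsmul_eq_mul]; field_simp

lemma Rep.hasSum_and_summable {a : ℕ → ℝ} {f : ℝ → ℝ} (h : Rep a f) :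
    ∀ᶠ z in 𝓝 (0:ℝ), HasSum (fun n => a n * z ^ n) (f z) ∧
      Summable (fun n => ‖a n * z ^ n‖) := by
  obtain ⟨r, hr⟩ := h
  filter_upwards [EMetric.ball_mem_nhds (0:ℝ) hr.r_pos] with z hz
  constructor
  · have := hr.hasSum hz
    simpa [FormalMultilinearSeries.ofScalars_apply_eq, smul_eq_mul, mul_comm,
      ofScalars_coeff] using this
  · have hrad : (‖z‖₊ : ℝ≥0∞) < (FormalMultilinearSeries.ofScalars ℝ a).radius := by
      refine lt_of_lt_of_le ?_ hr.r_le
      simpa [enorm_eq_nnnorm] using hz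
    have := (FormalMultilinearSeries.ofScalars ℝ a).summable_norm_apply
      (x := z) (by simpa [EMetric.mem_ball, enorm_eq_nnnorm] using hrad)
    convert this using 2 with n
    simp [FormalMultilinearSeries.ofScalars_apply_eq, norm_smul, abs_mul, ofScalars_coeff,
      mul_comm]

lemma Rep.mul {a b : ℕ → ℝ} {f g : ℝ → ℝ} (ha : Rep a f) (hb : Rep b g) :
    Rep (fun n => ∑ p ∈ antidiagonal n, a p.1 * b p.2) (fun x => f x * g x) := by
  rw [rep_iff]
  filter_upwards [ha.hasSum_and_summable, hb.hasSum_and_summable] with z hpa hpb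
  obtain ⟨hsa, hna⟩ := hpa
  obtain ⟨hsb, hnb⟩ := hpb
  have hsum := summable_norm_sum_mul_antidiagonal_of_summable_norm hna hnb
  have htsum := tsum_mul_tsum_eq_tsum_sum_antidiagonal_of_summable_norm hna hnb
  rw [hsa.tsum_eq, hsb.tsum_eq] at htsum
  have hS : Summable (fun n => ∑ p ∈ antidiagonal n,
      (a p.1 * z ^ p.1) * (b p.2 * z ^ p.2)) := hsum.of_norm
  have key : HasSum (fun n => ∑ p ∈ antidiagonal n,
      (a p.1 * z ^ p.1) * (b p.2 * z ^ p.2)) (f z * g z) := by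
    have := hS.hasSum
    rwa [← htsum] at this
  convert key using 2 with n
  rw [Finset.sum_mul]
  refine Finset.sum_congr rfl fun p hp => ?_
  have hpn : p.1 + p.2 = n := Finset.HasAntidiagonal.mem_antidiagonal.mp hp
  rw [← hpn, pow_add]
  ring

/-- `f` is represented near `0` by the formal power series `A`. -/
def RepS (A : ℝ⟦X⟧) (f : ℝ → ℝ) : Prop :=
  Rep (fun n => PowerSeries.coeff n A) f

lemma RepS.taylorCoeff_eq {A : ℝ⟦X⟧} {f : ℝ → ℝ} (h : RepS A f) (n : ℕ) :
    taylorCoeff n f = PowerSeries.coeff n A := Rep.taylorCoeff_eq h n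

lemma RepS.mul {A B : ℝ⟦X⟧} {f g : ℝ → ℝ} (hA : RepS A f) (hB : RepS B g) :
    RepS (A * B) (fun x => f x * g x) := by
  refine rep_congr (fun n => ?_) (Rep.mul hA hB)
  rw [PowerSeries.coeff_mul]

lemma RepS.pow {A : ℝ⟦X⟧} {f : ℝ → ℝ} (hA : RepS A f) (m : ℕ) :
    RepS (A ^ (m + 1)) (fun x => f x ^ (m + 1)) := by
  induction m with
  | zero => simpa [pow_one] using hA
  | succ m ih =>
    have := ih.mul hA
    rw [← pow_succ] at this
    convert this using 2 with x
    exact pow_succ _ _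



noncomputable def pg : FormalMultilinearSeries ℝ ℝ ℝ :=
  FormalMultilinearSeries.ofScalars ℝ fun n => ((n : ℝ) + 1)⁻¹

lemma pg_radius_pos : 0 < pg.radius := by
  have hb : ∀ n : ℕ, ‖pg n‖ * (1 : ℝ≥0) ^ n ≤ 1 := by
    intro n
    rw [pg, FormalMultilinearSeries.ofScalars_norm]
    simp only [NNReal.coe_one, one_pow, mul_one]
    rw [Real.norm_eq_abs, abs_of_pos (by positivity)]
    rw [inv_le_one_iff₀]
    right; push_cast; linarith [Nat.cast_nonneg (α := ℝ) n]
  have := pg.le_radius_of_bound 1 hb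
  exact lt_of_lt_of_le (by norm_num) this

noncomputable def G : ℝ → ℝ := pg.sum

lemma hGat : HasFPowerSeriesAt G pg 0 :=
  (pg.hasFPowerSeriesOnBall pg_radius_pos).hasFPowerSeriesAt

lemma hGrep : RepS gS G := by
  refine rep_congr (fun n => ?_) (rep_of_hasFPowerSeriesAt hGat)
  rw [pg, ofScalars_coeff, gS, PowerSeries.coeff_mk]

lemma hval : ∀ᶠ z in 𝓝 (0:ℝ), gregoryGenNeg z * G z = 1 := by
  filter_upwards [(rep_iff _ _).mp hGrep, Metric.ball_mem_nhds (0:ℝ) one_pos] with z hz hz1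
  have habs : |z| < 1 := by simpa [Real.dist_eq] using hz1
  rcases eq_or_ne z 0 with rfl | hz0
  · have h0 : HasSum (fun n => PowerSeries.coeff n gS * (0:ℝ) ^ n) 1 := by
      have := hasSum_single (f := fun n => PowerSeries.coeff n gS * (0:ℝ) ^ n) 0
        (by intro b hb; simp [zero_pow hb])
      simpa [gS, PowerSeries.coeff_mk] using this
    have hG0 : G 0 = 1 := hz.unique h0
    simp [gregoryGenNeg, hG0]
  · have hlog := Real.hasSum_pow_div_log_of_abs_lt_one habs
    have hmul : HasSum (fun i => z * (PowerSeries.coeff i gS * z ^ i)) (z * G z) := hz.mul_left z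
    have hzsum : HasSum (fun n : ℕ => z ^ (n + 1) / (n + 1)) (z * G z) := by
      convert hmul using 2 with n
      rw [gS, PowerSeries.coeff_mk, pow_succ]
      field_simp
    have hzG : z * G z = -Real.log (1 - z) := hzsum.unique hlog
    have h1z : (0:ℝ) < 1 - z := by cases abs_lt.mp habs; linarith
    have hlogne : Real.log (1 - z) ≠ 0 := by
      intro h
      rcases Real.log_eq_zero.mp h with h' | h' | h' <;> [linarith; exact hz0 (by linarith); linarith]
    have hGz : G z = -Real.log (1 - z) / z := by
      rw [eq_div_iff hz0]
      linear_combination hzG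
    rw [gregoryGenNeg, if_neg hz0, hGz]
    field_simp

lemma gregory_analytic : AnalyticAt ℝ gregoryGenNeg 0 := by
  have hG0 : G 0 = 1 := by
    have := hval.self_of_nhds
    simpa [gregoryGenNeg] using this
  have hinv : AnalyticAt ℝ (fun z => (G z)⁻¹) 0 :=
    (hGat.analyticAt).inv (by rw [hG0]; norm_num)
  refine hinv.congr ?_
  filter_upwards [hval] with z hz
  have : G z * gregoryGenNeg z = 1 := by linarith [hz, mul_comm (gregoryGenNeg z) (G z)]
  exact inv_eq_of_mul_eq_one_right this

theorem main_identity (k : ℕ) (hk : 2 ≤ k) :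
    ((k : ℝ) - 1) * taylorCoeff k (fun x => gregoryGenNeg x ^ k) =
      -taylorCoeff k (fun x => gregoryGenNeg x ^ (k - 1)) := by
  obtain ⟨q, hq⟩ := gregory_analytic
  set A : ℝ⟦X⟧ := PowerSeries.mk fun n => q.coeff n with hAdef
  have hArep : RepS A gregoryGenNeg := by
    refine rep_congr (fun n => ?_) (rep_of_hasFPowerSeriesAt hq)
    rw [hAdef, PowerSeries.coeff_mk]
  -- A * gS = 1
  have hmulrep : RepS (A * gS) (fun x => gregoryGenNeg x * G x) := hArep.mul hGrep
  have honef : RepS (A * gS) (fun _ => (1:ℝ)) := by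
    unfold RepS Rep at hmulrep ⊢
    exact hmulrep.congr hval
  have hone1 : RepS 1 (fun _ => (1:ℝ)) := by
    rw [RepS, rep_iff]
    filter_upwards with z
    have := hasSum_single (f := fun n => PowerSeries.coeff n (1 : ℝ⟦X⟧) * z ^ n) 0
      (by intro b hb; simp [PowerSeries.coeff_one, hb])
    simpa [PowerSeries.coeff_one] using this
  have hAgS : A * gS = 1 := by
    ext n
    rw [← honef.taylorCoeff_eq n, hone1.taylorCoeff_eq n]
  -- powers
  obtain ⟨m, rfl⟩ : ∃ m, k = m + 2 := ⟨k - 2, by omega⟩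
  have hk1 : RepS (A ^ (m + 2)) (fun x => gregoryGenNeg x ^ (m + 2)) := hArep.pow (m + 1)
  have hk2 : RepS (A ^ (m + 1)) (fun x => gregoryGenNeg x ^ (m + 1)) := hArep.pow m
  have e1 := hk1.taylorCoeff_eq (m + 2)
  have e2 := hk2.taylorCoeff_eq (m + 2)
  have hf := formal_identity hAgS (m + 2) (by omega)
  simp only [show m + 2 - 1 = m + 1 from rfl] at hf ⊢
  rw [e1, e2]
  push_cast at hf ⊢
  linear_combination hf


end GregoryAux

theorem gregory_polynomial_diagonal_identity (k : ℕ) (hk : 2 ≤ k) :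
    ((k : ℝ) - 1) * taylorCoeff k (fun x => gregoryGenNeg x ^ k) =
      -taylorCoeff k (fun x => gregoryGenNeg x ^ (k - 1)) :=
  GregoryAux.main_identity k hk
end

section
/- For every integer k ≥ 1, let a_m denote the m-th Taylor coefficient at 0 of the function t ↦ (t/(eᵗ−1))^k · e^{(k−1)t}. Then the limit as x → 1⁻ (x real, 0 < x < 1) of (Σ_{n=0}^∞ C(n+k−1, k−1)·x^{n+1} − Σ_{m=0}^{k−1} a_m·(−log x)^{m−k}) equals (−1)^k · G_k, where C(n+k−1, k−1) is the binomial coefficient and G_k is the k-th Taylor coefficient at 0 of x ↦ x/log(1+x) (the k-th Gregory coefficient). In other words, the Ramanujan smoothed sum of the k-th figurate binomial sequence 1 + C(k,k−1) + C(k+1,k−1) + ⋯ equals (−1)^k G_k. -/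
open Filter Topology

/-- The function `x ↦ x / log (1 + x)`, extended by the value `1` at `x = 0`;
its Taylor coefficients at `0` are the Gregory coefficients. -/
noncomputable def gregoryGen (x : ℝ) : ℝ :=
  if x = 0 then 1 else x / Real.log (1 + x)


open Set MeasureTheory Asymptotics
open scoped ENNReal NNReal

noncomputable def Bc (t : ℂ) : ℂ := if t = 0 then 1 else t / (Complex.exp t - 1)
noncomputable def Gc (x : ℂ) : ℂ := if x = 0 then 1 else x / Complex.log (1 + x)

lemma Bc_zero : Bc 0 = 1 := if_pos rfl
lemma Gc_zero : Gc 0 = 1 := if_pos rfl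

lemma exp_sub_one_ne_zero {t : ℂ} (ht : t ≠ 0) (h1 : ‖t‖ < 1) : Complex.exp t - 1 ≠ 0 := by
  rw [sub_ne_zero]
  intro h
  obtain ⟨n, hn⟩ := Complex.exp_eq_one_iff.mp h
  rcases eq_or_ne n 0 with rfl | hn0
  · simp at hn; exact ht hn
  · have h3 : (1:ℝ) ≤ |(n:ℝ)| := by exact_mod_cast Int.one_le_abs hn0
    have h2 : ‖t‖ = |(n:ℝ)| * (2*Real.pi) := by
      rw [hn]
      rw [norm_mul, norm_mul, norm_mul, Complex.norm_I, Complex.norm_intCast,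
        Complex.norm_ofNat, Complex.norm_real, Real.norm_eq_abs,
        abs_of_pos Real.pi_pos, mul_one]
    rw [h2] at h1
    nlinarith [Real.pi_gt_three]

lemma Bc_eventuallyEq {z : ℂ} (hz : z ≠ 0) :
    Bc =ᶠ[𝓝 z] fun t => t / (Complex.exp t - 1) := by
  filter_upwards [isOpen_ne.mem_nhds (by exact hz : z ≠ 0)] with t ht
  rw [Bc, if_neg ht]

lemma Bc_differentiableAt {z : ℂ} (hz : z ≠ 0) (h1 : ‖z‖ < 1) : DifferentiableAt ℂ Bc z := by
  have h := exp_sub_one_ne_zero hz h1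
  have : DifferentiableAt ℂ (fun t => t / (Complex.exp t - 1)) z :=
    (differentiableAt_id.div ((Complex.differentiable_exp z).sub_const 1) h)
  exact this.congr_of_eventuallyEq (Bc_eventuallyEq hz)

lemma Bc_tendsto : Tendsto Bc (𝓝[≠] (0:ℂ)) (𝓝 1) := by
  have h : Tendsto (fun t : ℂ => (Complex.exp t - 1) / t) (𝓝[≠] 0) (𝓝 1) := by
    have h0 := hasDerivAt_iff_tendsto_slope.mp (Complex.hasDerivAt_exp 0)
    rw [Complex.exp_zero] at h0
    refine h0.congr' ?_
    filter_upwards [self_mem_nhdsWithin] with t (ht : t ≠ 0)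
    rw [slope_def_field, Complex.exp_zero]
    rw [div_eq_div_iff (sub_ne_zero.mpr ht) ht]
    ring
  have h2 := h.inv₀ one_ne_zero
  rw [inv_one] at h2
  refine h2.congr' ?_
  filter_upwards [self_mem_nhdsWithin] with t (ht : t ≠ 0)
  rw [inv_div, Bc, if_neg ht]

lemma analyticAt_Bc : AnalyticAt ℂ Bc 0 := by
  apply Complex.analyticAt_of_differentiable_on_punctured_nhds_of_continuousAt
  · filter_upwards [self_mem_nhdsWithin,
      eventually_nhdsWithin_of_eventually_nhds (Metric.ball_mem_nhds (0:ℂ) one_pos)]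
      with t ht hball
    exact Bc_differentiableAt ht (by simpa using hball)
  · rw [← continuousWithinAt_compl_self, ContinuousWithinAt, Bc_zero]
    exact Bc_tendsto


lemma mem_slitPlane_of_small {z : ℂ} (h : ‖z‖ < 1) : 1 + z ∈ Complex.slitPlane := by
  refine Or.inl ?_
  have := Complex.abs_re_le_norm z
  simp only [Complex.add_re, Complex.one_re]
  have : |z.re| < 1 := lt_of_le_of_lt (Complex.abs_re_le_norm z) h
  have := abs_lt.mp this
  linarith

lemma log_one_add_ne_zero {z : ℂ} (hz : z ≠ 0) (h : ‖z‖ < 1) : Complex.log (1 + z) ≠ 0 := by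
  intro h0
  have hne : (1 : ℂ) + z ≠ 0 := by
    intro h1
    have : ‖z‖ = 1 := by
      have : z = -1 := by linear_combination h1
      simp [this]
    linarith
  have := Complex.exp_log hne
  rw [h0, Complex.exp_zero] at this
  apply hz
  linear_combination - this

lemma Gc_differentiableAt {z : ℂ} (hz : z ≠ 0) (h1 : ‖z‖ < 1) : DifferentiableAt ℂ Gc z := by
  have hlog : DifferentiableAt ℂ (fun x : ℂ => Complex.log (1 + x)) z := by
    have := (Complex.differentiableAt_log (mem_slitPlane_of_small h1))
    exact this.comp z ((differentiableAt_const (1:ℂ)).add differentiableAt_id)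
  have : DifferentiableAt ℂ (fun x => x / Complex.log (1 + x)) z :=
    differentiableAt_id.div hlog (log_one_add_ne_zero hz h1)
  refine this.congr_of_eventuallyEq ?_
  filter_upwards [isOpen_ne.mem_nhds (by exact hz : z ≠ 0)] with t ht
  rw [Gc, if_neg ht]

lemma Gc_tendsto : Tendsto Gc (𝓝[≠] (0:ℂ)) (𝓝 1) := by
  have hd : HasDerivAt (fun x : ℂ => Complex.log (1 + x)) 1 0 := by
    have h1 : HasDerivAt Complex.log 1 (1 + 0 : ℂ) := by
      simpa using Complex.hasDerivAt_log (by simp [Complex.slitPlane] : (1+0:ℂ) ∈ Complex.slitPlane)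
    have h2 : HasDerivAt (fun x : ℂ => 1 + x) 1 0 := by
      simpa using (hasDerivAt_id (0:ℂ)).const_add 1
    have := h1.comp 0 h2; rw [mul_one] at this; exact this
  have h : Tendsto (fun t : ℂ => Complex.log (1 + t) / t) (𝓝[≠] 0) (𝓝 1) := by
    have h0 := hasDerivAt_iff_tendsto_slope.mp hd
    refine h0.congr' ?_
    filter_upwards [self_mem_nhdsWithin] with t (ht : t ≠ 0)
    rw [slope_def_field]
    simp [sub_zero]
  have h2 := h.inv₀ one_ne_zero
  rw [inv_one] at h2
  refine h2.congr' ?_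
  filter_upwards [self_mem_nhdsWithin] with t (ht : t ≠ 0)
  rw [inv_div, Gc, if_neg ht]

lemma analyticAt_Gc : AnalyticAt ℂ Gc 0 := by
  apply Complex.analyticAt_of_differentiable_on_punctured_nhds_of_continuousAt
  · filter_upwards [self_mem_nhdsWithin,
      eventually_nhdsWithin_of_eventually_nhds (Metric.ball_mem_nhds (0:ℂ) one_pos)]
      with t ht hball
    exact Gc_differentiableAt ht (by simpa using hball)
  · rw [← continuousWithinAt_compl_self, ContinuousWithinAt, Gc, if_pos rfl]
    exact Gc_tendsto


lemma Bc_neg (t : ℂ) : Bc (-t) = Bc t * Complex.exp t := by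
  rcases eq_or_ne t 0 with rfl | ht
  · simp [Bc]
  · rw [Bc, Bc, if_neg ht, if_neg (neg_ne_zero.mpr ht), Complex.exp_neg]
    rcases eq_or_ne (Complex.exp t) 1 with h1 | h1
    · rw [h1]; simp
    · have he := Complex.exp_ne_zero t
      rw [div_mul_eq_mul_div, div_eq_div_iff]
      · field_simp
        ring
      · rw [inv_eq_one_div, div_sub' he, div_ne_zero_iff, sub_ne_zero]
        exact ⟨fun h => h1 (by linear_combination h.symm), he⟩
      · rwa [sub_ne_zero]

lemma Gc_phi {t : ℂ} (ht : t ≠ 0) (him1 : -Real.pi < t.im) (him2 : t.im ≤ Real.pi)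
    (hne : Complex.exp t ≠ 1) :
    Gc (Complex.exp t - 1) = (Complex.exp t - 1) / t := by
  rw [Gc, if_neg (sub_ne_zero.mpr hne)]
  rw [show (1 : ℂ) + (Complex.exp t - 1) = Complex.exp t by ring, Complex.log_exp him1 him2]


lemma integral_zpow_deriv (γ Dγ : ℝ → ℂ) (hγ : ∀ θ, HasDerivAt γ (Dγ θ) θ)
    (hD : Continuous Dγ) (hne : ∀ θ, γ θ ≠ 0) (hper : γ 0 = γ (2*Real.pi))
    {n : ℤ} (hn : n ≠ -1) :
    ∫ θ in (0:ℝ)..(2*Real.pi), (γ θ) ^ n * Dγ θ = 0 := by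
  have hcγ : Continuous γ := continuous_iff_continuousAt.mpr fun θ => (hγ θ).continuousAt
  have hn1 : ((n:ℂ)+1) ≠ 0 := by
    intro h; apply hn
    have : (n:ℂ) = -1 := by linear_combination h
    exact_mod_cast this
  have key : ∀ θ, HasDerivAt (fun θ => (γ θ)^(n+1) / ((n:ℂ)+1)) ((γ θ)^n * Dγ θ) θ := by
    intro θ
    have h1 : HasDerivAt (fun z : ℂ => z ^ (n+1)) (((n:ℂ)+1) * (γ θ)^(n+1-1)) (γ θ) := by
      have := hasDerivAt_zpow (n+1) (γ θ) (Or.inl (hne θ))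
      rw [show ((n:ℂ)+1) = ((n+1 : ℤ) : ℂ) by push_cast; ring]
      exact this
    have h2 := (h1.comp θ (hγ θ)).div_const ((n:ℂ)+1)
    rw [show (γ θ)^n * Dγ θ = ((n:ℂ)+1) * (γ θ)^(n+1-1) * Dγ θ / ((n:ℂ)+1) by
      rw [show n + 1 - 1 = n by ring, mul_assoc, mul_div_cancel_left₀ _ hn1]]
    exact h2
  have hcont : Continuous fun θ => (γ θ)^n * Dγ θ := by
    apply Continuous.mul _ hD
    exact hcγ.zpow₀ n fun θ => Or.inl (hne θ)
  rw [intervalIntegral.integral_eq_sub_of_hasDerivAt (fun θ _ => key θ)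
    (hcont.intervalIntegrable _ _)]
  rw [hper, sub_self]


lemma contour_coeff {f : ℂ → ℂ} {p : FormalMultilinearSeries ℂ ℂ ℂ} {r₀ : ENNReal}
    (hf : HasFPowerSeriesOnBall f p 0 r₀)
    (γ Dγ : ℝ → ℂ) (hγ : ∀ θ, HasDerivAt γ (Dγ θ) θ) (hD : Continuous Dγ)
    (hper : γ 0 = γ (2*Real.pi))
    {δ M : ℝ} (hδ : 0 < δ) (hlow : ∀ θ, δ ≤ ‖γ θ‖)
    (hup : ∀ θ, ‖γ θ‖ ≤ M)
    (hmem : ∀ θ, γ θ ∈ EMetric.ball (0:ℂ) r₀)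
    (hsum : Summable fun j => ‖p.coeff j‖ * M ^ j)
    (hwind : ∫ θ in (0:ℝ)..(2*Real.pi), (γ θ)⁻¹ * Dγ θ = 2 * Real.pi * Complex.I)
    (k : ℕ) :
    ∫ θ in (0:ℝ)..(2*Real.pi), (γ θ) ^ (-(k:ℤ)-1) * f (γ θ) * Dγ θ
      = 2 * Real.pi * Complex.I * p.coeff k := by
  have pi_pos := Real.pi_pos
  have h2π : (0:ℝ) ≤ 2*Real.pi := by linarith
  have hne : ∀ θ, γ θ ≠ 0 := fun θ => by
    intro h; have := hlow θ; rw [h] at this; simp at this; linarith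
  have hcγ : Continuous γ := continuous_iff_continuousAt.mpr fun θ => (hγ θ).continuousAt
  set μ : Measure ℝ := volume.restrict (Ioc (0:ℝ) (2*Real.pi)) with hμ
  set F : ℕ → ℝ → ℂ := fun j θ => p.coeff j * ((γ θ) ^ ((j:ℤ) - (k:ℤ) - 1) * Dγ θ) with hF
  -- pointwise sum
  have hptwise : ∀ θ, HasSum (fun j => F j θ) ((γ θ) ^ (-(k:ℤ)-1) * f (γ θ) * Dγ θ) := by
    intro θ
    have h0 := hf.hasSum (hmem θ)
    simp only [FormalMultilinearSeries.apply_eq_pow_smul_coeff, smul_eq_mul, zero_add] at h0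
    have h1 := h0.mul_left ((γ θ) ^ (-(k:ℤ)-1) * Dγ θ)
    rw [show (γ θ) ^ (-(k:ℤ)-1) * f (γ θ) * Dγ θ = (γ θ) ^ (-(k:ℤ)-1) * Dγ θ * f (γ θ) by ring]
    refine h1.congr_fun ?_
    · intro j
      rw [hF]
      simp only []
      rw [show (j:ℤ) - (k:ℤ) - 1 = (j:ℤ) + (-(k:ℤ)-1) by ring,
        zpow_add₀ (hne θ), zpow_natCast]
      ring
  -- integrability
  have hFcont : ∀ j, Continuous (F j) := by
    intro j
    apply continuous_const.mul
    apply Continuous.mul _ hD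
    exact hcγ.zpow₀ _ fun θ => Or.inl (hne θ)
  have hint : ∀ j, Integrable (F j) μ := fun j => (hFcont j).integrableOn_Ioc
  -- norm bound
  obtain ⟨C, hC⟩ : ∃ C, ∀ θ ∈ Icc (0:ℝ) (2*Real.pi), ‖Dγ θ‖ ≤ C :=
    (isCompact_Icc.exists_bound_of_continuousOn hD.continuousOn)
  have hC0 : 0 ≤ C := le_trans (norm_nonneg _) (hC 0 ⟨le_refl _, h2π⟩)
  set c : ℝ := (δ^(k+1))⁻¹ * C with hc
  have hbound : ∀ j, ∀ θ ∈ Ioc (0:ℝ) (2*Real.pi), ‖F j θ‖ ≤ (‖p.coeff j‖ * M ^ j) * c := by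
    intro j θ hθ
    have hγθ : 0 < ‖γ θ‖ := lt_of_lt_of_le hδ (hlow θ)
    rw [hF]
    simp only [norm_mul, norm_zpow]
    rw [show (j:ℤ) - (k:ℤ) - 1 = (j:ℤ) + (-(((k+1:ℕ)):ℤ)) by push_cast; ring,
      zpow_add₀ (ne_of_gt hγθ), zpow_natCast, zpow_neg, zpow_natCast]
    have b1 : ‖γ θ‖ ^ j ≤ M ^ j := pow_le_pow_left₀ (norm_nonneg _) (hup θ) j
    have b2 : (‖γ θ‖ ^ (k+1))⁻¹ ≤ (δ^(k+1))⁻¹ := by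
      apply inv_anti₀ (by positivity)
      exact pow_le_pow_left₀ (le_of_lt hδ) (hlow θ) (k+1)
    have b3 : ‖Dγ θ‖ ≤ C := hC θ ⟨le_of_lt hθ.1, hθ.2⟩
    have hM0 : (0:ℝ) < M := lt_of_lt_of_le hδ (le_trans (hlow 0) (hup 0))
    have key : ‖γ θ‖ ^ j * (‖γ θ‖ ^ (k+1))⁻¹ * ‖Dγ θ‖ ≤ M ^ j * ((δ^(k+1))⁻¹ * C) := by
      rw [← mul_assoc (M^j)]
      apply mul_le_mul (mul_le_mul b1 b2 (by positivity) (by positivity)) b3 (norm_nonneg _)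
      positivity
    calc ‖p.coeff j‖ * (‖γ θ‖ ^ j * (‖γ θ‖ ^ (k+1))⁻¹ * ‖Dγ θ‖)
        ≤ ‖p.coeff j‖ * (M ^ j * ((δ^(k+1))⁻¹ * C)) := mul_le_mul_of_nonneg_left key (norm_nonneg _)
      _ = (‖p.coeff j‖ * M ^ j) * c := by rw [hc]; ring
  -- summability of integrals of norms
  have hμfin : (μ univ).toReal = 2*Real.pi := by
    rw [hμ]
    simp [Real.volume_Ioc, ENNReal.toReal_ofReal h2π, Real.pi_nonneg]
  have hsumnorm : Summable fun j => ∫ θ, ‖F j θ‖ ∂μ := by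
    apply Summable.of_nonneg_of_le (fun j => integral_nonneg fun θ => norm_nonneg _)
      (fun j => ?_) ((hsum.mul_right c).mul_right (2*Real.pi))
    calc ∫ θ, ‖F j θ‖ ∂μ ≤ ∫ _, (‖p.coeff j‖ * M ^ j) * c ∂μ := by
          apply setIntegral_mono_on (hint j).norm (integrableOn_const ?_)
            measurableSet_Ioc (hbound j)
          rw [Real.volume_Ioc]; exact ENNReal.ofReal_ne_top
      _ = (‖p.coeff j‖ * M ^ j) * c * (2*Real.pi) := by
          rw [integral_const, smul_eq_mul, measureReal_def, hμfin]; ring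
  -- swap
  have hswap := MeasureTheory.hasSum_integral_of_summable_integral_norm hint hsumnorm
  have htg : (∫ θ, (∑' j, F j θ) ∂μ) = ∫ θ in (0:ℝ)..(2*Real.pi), (γ θ) ^ (-(k:ℤ)-1) * f (γ θ) * Dγ θ := by
    rw [intervalIntegral.integral_of_le h2π]
    apply integral_congr_ae
    filter_upwards with θ
    exact (hptwise θ).tsum_eq
  rw [htg] at hswap
  -- term values
  have hterm : (fun j => ∫ θ, F j θ ∂μ) = fun j =>
      if j = k then 2 * Real.pi * Complex.I * p.coeff k else 0 := by
    funext j
    have : ∫ θ, F j θ ∂μ = p.coeff j * ∫ θ in (0:ℝ)..(2*Real.pi), (γ θ) ^ ((j:ℤ) - (k:ℤ) - 1) * Dγ θ := by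
      rw [intervalIntegral.integral_of_le h2π, ← integral_const_mul]
    rcases eq_or_ne j k with rfl | hjk
    · rw [if_pos rfl, this]
      rw [show (j:ℤ) - (j:ℤ) - 1 = -1 by ring]
      simp only [zpow_neg_one]
      rw [hwind]; ring
    · rw [if_neg hjk, this, integral_zpow_deriv γ Dγ hγ hD hne hper ?_, mul_zero]
      intro h
      apply hjk
      have : (j:ℤ) = (k:ℤ) := by omega
      exact_mod_cast this
  rw [hterm] at hswap
  exact hswap.unique (hasSum_ite_eq k _)


theorem coeff_eq (k : ℕ) {p q : FormalMultilinearSeries ℂ ℂ ℂ}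
    (hp : HasFPowerSeriesAt (fun t => Bc t ^ k * Complex.exp t) p 0)
    (hq : HasFPowerSeriesAt Gc q 0) : p.coeff k = q.coeff k := by
  obtain ⟨r₀, hball₀⟩ := hp
  obtain ⟨r₁, hball₁⟩ := hq
  have pi_pos := Real.pi_pos
  obtain ⟨a, ha0, halt⟩ := ENNReal.lt_iff_exists_nnreal_btwn.mp
    (lt_min hball₀.r_pos hball₁.r_pos)
  rw [ENNReal.coe_pos] at ha0
  have ha0' : (0:ℝ) < a := ha0
  set ρ : ℝ := min (1/2) ((a:ℝ)/4) with hρ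
  have hρ0 : 0 < ρ := lt_min (by norm_num) (by positivity)
  have hρhalf : ρ ≤ 1/2 := min_le_left _ _
  have hρa : ρ ≤ (a:ℝ)/4 := min_le_right _ _
  have hρ1 : ρ < 1 := lt_of_le_of_lt hρhalf (by norm_num)
  have hρπ : ρ < Real.pi := lt_of_le_of_lt hρhalf (by nlinarith [Real.pi_gt_three])
  set cm : ℝ → ℂ := circleMap 0 ρ with hcm
  have hnorm_c : ∀ θ, ‖cm θ‖ = ρ := fun θ => by
    rw [hcm, norm_circleMap_zero, abs_of_pos hρ0]
  have hc_ne : ∀ θ, cm θ ≠ 0 := fun θ => by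
    intro h; have := hnorm_c θ; rw [h] at this; simp at this; linarith
  have hmemball : ∀ (x : ℂ) (r : ENNReal), ‖x‖ < (a:ℝ) → (a:ℝ≥0∞) ≤ r →
      x ∈ EMetric.ball (0:ℂ) r := by
    intro x r h1 h2
    change edist x 0 < r
    rw [edist_zero_right]
    refine lt_of_lt_of_le ?_ h2
    rw [enorm_eq_nnnorm, ENNReal.coe_lt_coe]
    rwa [← NNReal.coe_lt_coe, coe_nnnorm]
  have hρa' : ρ < (a:ℝ) := lt_of_le_of_lt hρa (by linarith)
  have h2ρa' : 2*ρ < (a:ℝ) := by linarith [hρa]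
  -- App 1 : circle
  set D₁ : ℝ → ℂ := fun θ => cm θ * Complex.I with hD₁def
  have hγ₁ : ∀ θ, HasDerivAt cm (D₁ θ) θ := fun θ => hasDerivAt_circleMap 0 ρ θ
  have hD₁ : Continuous D₁ := (continuous_circleMap 0 ρ).mul continuous_const
  have hper : cm 0 = cm (2*Real.pi) := by
    rw [hcm]; exact (periodic_circleMap 0 ρ 0).symm.trans (by rw [zero_add])
  have hwind₁ : ∫ θ in (0:ℝ)..(2*Real.pi), (cm θ)⁻¹ * D₁ θ = 2 * Real.pi * Complex.I := by
    rw [intervalIntegral.integral_congr (g := fun _ => Complex.I)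
      (fun θ _ => by rw [hD₁def]; exact inv_mul_cancel_left₀ (hc_ne θ) Complex.I)]
    rw [intervalIntegral.integral_const, sub_zero, Complex.real_smul]
    push_cast; ring
  have hsum₁ : Summable fun j => ‖p.coeff j‖ * ρ ^ j := by
    have hrad : (a:ℝ≥0∞) < p.radius :=
      lt_of_lt_of_le halt (le_trans (min_le_left _ _) hball₀.r_le)
    have hs := p.summable_norm_mul_pow hrad
    apply Summable.of_nonneg_of_le (fun j => by positivity) (fun j => ?_) hs
    rw [← p.norm_apply_eq_norm_coef]
    exact mul_le_mul_of_nonneg_left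
      (pow_le_pow_left₀ (le_of_lt hρ0) (le_of_lt hρa') j) (norm_nonneg _)
  have hA := contour_coeff hball₀ cm D₁ hγ₁ hD₁ hper hρ0
    (fun θ => le_of_eq (hnorm_c θ).symm) (fun θ => le_of_eq (hnorm_c θ))
    (fun θ => hmemball _ _ (by rw [hnorm_c]; exact hρa')
      (le_trans (le_of_lt halt) (min_le_left _ _)))
    hsum₁ hwind₁ k
  -- App 2 : image curve
  set γ₂ : ℝ → ℂ := fun θ => Complex.exp (cm θ) - 1 with hγ₂def
  set D₂ : ℝ → ℂ := fun θ => Complex.exp (cm θ) * (cm θ * Complex.I) with hD₂def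
  have hγ₂ : ∀ θ, HasDerivAt γ₂ (D₂ θ) θ := fun θ =>
    ((Complex.hasDerivAt_exp (cm θ)).comp θ (hγ₁ θ)).sub_const 1
  have hD₂ : Continuous D₂ :=
    (Complex.continuous_exp.comp (continuous_circleMap 0 ρ)).mul hD₁
  have hper₂ : γ₂ 0 = γ₂ (2*Real.pi) := by rw [hγ₂def]; simp only []; rw [hper]
  have habs : ∀ θ, ‖cm θ‖ ≤ 1 := fun θ => by
    rw [hnorm_c]; linarith
  have hup₂ : ∀ θ, ‖γ₂ θ‖ ≤ 2*ρ := fun θ => by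
    have := Complex.norm_exp_sub_one_le (habs θ)
    rw [hnorm_c] at this
    exact this
  have hlow₂ : ∀ θ, ρ/2 ≤ ‖γ₂ θ‖ := fun θ => by
    have h1 := Complex.norm_exp_sub_one_sub_id_le (habs θ)
    rw [hnorm_c] at h1
    have h2 : ‖cm θ‖ ≤ ‖γ₂ θ‖ + ‖Complex.exp (cm θ) - 1 - cm θ‖ := by
      have := norm_sub_le (Complex.exp (cm θ) - 1) (Complex.exp (cm θ) - 1 - cm θ)
      simpa using this
    rw [hnorm_c] at h2
    nlinarith
  have hφne : ∀ θ, γ₂ θ ≠ 0 := fun θ => by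
    rw [hγ₂def]
    exact exp_sub_one_ne_zero (hc_ne θ) (by rw [hnorm_c]; exact hρ1)
  -- winding of γ₂
  have hBcm : Continuous fun θ => Bc (cm θ) := by
    apply continuous_iff_continuousAt.mpr fun θ => ?_
    exact (Bc_differentiableAt (hc_ne θ) (by rw [hnorm_c]; exact hρ1)).continuousAt.comp
      (continuous_circleMap 0 ρ).continuousAt
  have hJ : ∫ θ in (0:ℝ)..(2*Real.pi), Bc (cm θ) = 2*Real.pi := by
    have hBcball : DifferentiableOn ℂ Bc (Metric.closedBall 0 ρ) := by
      intro z hz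
      rw [Metric.mem_closedBall, Complex.dist_eq, sub_zero] at hz
      rcases eq_or_ne z 0 with rfl | hz0
      · exact analyticAt_Bc.differentiableAt.differentiableWithinAt
      · exact (Bc_differentiableAt hz0 (lt_of_le_of_lt hz hρ1)).differentiableWithinAt
    have hw : (0:ℂ) ∈ Metric.ball (0:ℂ) ρ := by simp [hρ0]
    have hcauchy := hBcball.circleIntegral_sub_inv_smul hw
    rw [circleIntegral] at hcauchy
    simp only [deriv_circleMap, sub_zero, smul_eq_mul] at hcauchy
    have h2 : (∫ θ in (0:ℝ)..(2*Real.pi),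
        circleMap 0 ρ θ * Complex.I * ((circleMap 0 ρ θ)⁻¹ * Bc (circleMap 0 ρ θ)))
        = ∫ θ in (0:ℝ)..(2*Real.pi), Complex.I * Bc (cm θ) := by
      apply intervalIntegral.integral_congr
      intro θ _
      show circleMap 0 ρ θ * Complex.I * ((circleMap 0 ρ θ)⁻¹ * Bc (circleMap 0 ρ θ))
          = Complex.I * Bc (cm θ)
      have h3 : circleMap 0 ρ θ = cm θ := rfl
      rw [h3, mul_comm (cm θ) Complex.I, mul_assoc, mul_inv_cancel_left₀ (hc_ne θ)]
    rw [h2] at hcauchy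
    rw [intervalIntegral.integral_const_mul] at hcauchy
    have hBc0 : Bc 0 = 1 := if_pos rfl
    rw [hBc0, mul_one] at hcauchy
    have h5 : Complex.I * (∫ θ in (0:ℝ)..(2*Real.pi), Bc (cm θ)) = Complex.I * (2*Real.pi) := by
      rw [hcauchy]; ring
    exact mul_left_cancel₀ Complex.I_ne_zero h5
  have hwind₂ : ∫ θ in (0:ℝ)..(2*Real.pi), (γ₂ θ)⁻¹ * D₂ θ = 2 * Real.pi * Complex.I := by
    have hptw : ∀ θ, (γ₂ θ)⁻¹ * D₂ θ = cm θ * Complex.I + Bc (cm θ) * Complex.I := by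
      intro θ
      rw [hγ₂def, hD₂def]
      simp only []
      rw [Bc, if_neg (hc_ne θ)]
      have hφ := hφne θ
      rw [hγ₂def] at hφ
      field_simp
      try ring
    rw [intervalIntegral.integral_congr (fun θ _ => hptw θ)]
    have hint1 : ∫ θ in (0:ℝ)..(2*Real.pi), cm θ * Complex.I = 0 := by
      rw [intervalIntegral.integral_eq_sub_of_hasDerivAt (fun θ _ => hγ₁ θ)
        (hD₁.intervalIntegrable _ _), hper, sub_self]
    rw [intervalIntegral.integral_add (f := fun θ => cm θ * Complex.I)
      (g := fun θ => Bc (cm θ) * Complex.I) (((continuous_circleMap 0 ρ).mul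
      continuous_const).intervalIntegrable _ _)
      ((hBcm.mul continuous_const).intervalIntegrable _ _), hint1,
      intervalIntegral.integral_mul_const, hJ, zero_add]
  have hsum₂ : Summable fun j => ‖q.coeff j‖ * (2*ρ) ^ j := by
    have hrad : (a:ℝ≥0∞) < q.radius :=
      lt_of_lt_of_le halt (le_trans (min_le_right _ _) hball₁.r_le)
    have hs := q.summable_norm_mul_pow hrad
    apply Summable.of_nonneg_of_le (fun j => by positivity) (fun j => ?_) hs
    rw [← q.norm_apply_eq_norm_coef]
    exact mul_le_mul_of_nonneg_left
      (pow_le_pow_left₀ (by linarith) (le_of_lt h2ρa') j) (norm_nonneg _)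
  have hB := contour_coeff hball₁ γ₂ D₂ hγ₂ hD₂ hper₂ (by positivity : (0:ℝ) < ρ/2)
    hlow₂ hup₂
    (fun θ => hmemball _ _ (lt_of_le_of_lt (hup₂ θ) h2ρa')
      (le_trans (le_of_lt halt) (min_le_right _ _)))
    hsum₂ hwind₂ k
  -- pointwise equality of integrands
  have heq : ∀ θ, (γ₂ θ) ^ (-(k:ℤ)-1) * Gc (γ₂ θ) * D₂ θ
      = (cm θ) ^ (-(k:ℤ)-1) * (Bc (cm θ) ^ k * Complex.exp (cm θ)) * D₁ θ := by
    intro θ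
    have ht := hc_ne θ
    have hφ := hφne θ
    rw [hγ₂def] at hφ
    have him1 : -Real.pi < (cm θ).im := by
      have := Complex.abs_im_le_norm (cm θ)
      rw [hnorm_c] at this
      have := abs_le.mp this
      linarith
    have him2 : (cm θ).im ≤ Real.pi := by
      have := Complex.abs_im_le_norm (cm θ)
      rw [hnorm_c] at this
      have := abs_le.mp this
      linarith
    have hexpne : Complex.exp (cm θ) ≠ 1 := sub_ne_zero.mp hφ
    rw [hγ₂def, hD₂def, hD₁def]
    simp only []
    rw [Gc_phi ht him1 him2 hexpne, Bc, if_neg ht]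
    rw [show (-(k:ℤ)-1) = -(((k+1:ℕ)):ℤ) by push_cast; ring]
    rw [zpow_neg, zpow_natCast, zpow_neg, zpow_natCast]
    have hexp0 := Complex.exp_ne_zero (cm θ)
    have hφ' : (-1 + Complex.exp (cm θ)) ≠ 0 := by rwa [neg_add_eq_sub]
    field_simp
    have hk1 : (-1 + Complex.exp (cm θ))⁻¹ ^ k * (-1 + Complex.exp (cm θ)) ^ k = 1 := by
      rw [← mul_pow, inv_mul_cancel₀ hφ', one_pow]
    linear_combination (-(Complex.exp (cm θ) * cm θ * cm θ ^ k - cm θ * cm θ ^ k)) * hk1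
  rw [intervalIntegral.integral_congr (fun θ _ => heq θ)] at hB
  rw [hA] at hB
  have h2πI : (2*Real.pi*Complex.I : ℂ) ≠ 0 := by
    simp [Complex.I_ne_zero, Real.pi_ne_zero, Complex.ofReal_ne_zero]
  field_simp at hB
  exact hB


/-- iterated deriv of F restricted to ℝ -/
lemma iteratedDeriv_comp_ofReal {F : ℂ → ℂ} (hF : AnalyticAt ℂ F 0) (n : ℕ) :
    ∀ x : ℝ, AnalyticAt ℂ F x →
      iteratedDeriv n (fun y : ℝ => F y) x = iteratedDeriv n F x := by
  set U : Set ℂ := {z | AnalyticAt ℂ F z} with hUdef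
  have hU : IsOpen U := isOpen_analyticAt ℂ F
  have hFU : AnalyticOnNhd ℂ F U := fun z hz => hz
  have hFn : ∀ m, AnalyticOnNhd ℂ (iteratedDeriv m F) U := by
    intro m
    induction m with
    | zero => simpa [iteratedDeriv_zero] using hFU
    | succ m ih => rw [iteratedDeriv_succ]; exact ih.deriv
  induction n with
  | zero => intro x _; simp [iteratedDeriv_zero]
  | succ n ih =>
    intro x hx
    have hev : ∀ᶠ y : ℝ in 𝓝 x, iteratedDeriv n (fun y : ℝ => F y) y = iteratedDeriv n F y := by
      have hmem : ∀ᶠ y : ℝ in 𝓝 x, ((y:ℂ)) ∈ U :=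
        Complex.continuous_ofReal.continuousAt.preimage_mem_nhds (hU.mem_nhds hx)
      filter_upwards [hmem] with y hy
      exact ih y hy
    rw [iteratedDeriv_succ, iteratedDeriv_succ, Filter.EventuallyEq.deriv_eq hev]
    exact (((hFn n) _ hx).differentiableAt.hasDerivAt.comp_ofReal).deriv

lemma iteratedDeriv_re_comp_ofReal {F : ℂ → ℂ} (hF : AnalyticAt ℂ F 0) (n : ℕ) :
    ∀ x : ℝ, AnalyticAt ℂ F x →
      iteratedDeriv n (fun y : ℝ => (F y).re) x = (iteratedDeriv n F x).re := by
  set U : Set ℂ := {z | AnalyticAt ℂ F z} with hUdef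
  have hU : IsOpen U := isOpen_analyticAt ℂ F
  have hFU : AnalyticOnNhd ℂ F U := fun z hz => hz
  have hFn : ∀ m, AnalyticOnNhd ℂ (iteratedDeriv m F) U := by
    intro m
    induction m with
    | zero => simpa [iteratedDeriv_zero] using hFU
    | succ m ih => rw [iteratedDeriv_succ]; exact ih.deriv
  induction n with
  | zero => intro x _; simp [iteratedDeriv_zero]
  | succ n ih =>
    intro x hx
    have hev : ∀ᶠ y : ℝ in 𝓝 x,
        iteratedDeriv n (fun y : ℝ => (F y).re) y = (iteratedDeriv n F y).re := by
      have hmem : ∀ᶠ y : ℝ in 𝓝 x, ((y:ℂ)) ∈ U :=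
        Complex.continuous_ofReal.continuousAt.preimage_mem_nhds (hU.mem_nhds hx)
      filter_upwards [hmem] with y hy
      exact ih y hy
    rw [iteratedDeriv_succ, iteratedDeriv_succ, Filter.EventuallyEq.deriv_eq hev]
    have hd : HasDerivAt (fun y : ℝ => iteratedDeriv n F y)
        (deriv (iteratedDeriv n F) x) x :=
      ((hFn n) _ hx).differentiableAt.hasDerivAt.comp_ofReal
    have hre := (Complex.reCLM.hasFDerivAt.comp_hasDerivAt x hd)
    simpa [Function.comp_def] using hre.deriv

lemma taylor_transfer {F : ℂ → ℂ} {f : ℝ → ℝ} (hF : AnalyticAt ℂ F 0)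
    (h : ∀ᶠ x : ℝ in 𝓝 0, (f x : ℂ) = F x) (n : ℕ) :
    iteratedDeriv n f 0 = (iteratedDeriv n F 0).re := by
  have h2 : f =ᶠ[𝓝 (0:ℝ)] fun x => (F x).re := by
    filter_upwards [h] with x hx
    rw [← hx, Complex.ofReal_re]
  rw [Filter.EventuallyEq.iteratedDeriv_eq n h2]
  have := iteratedDeriv_re_comp_ofReal hF n 0 (by simpa using hF)
  simpa using this


lemma coeff_eq_iteratedDeriv {𝕜 : Type*} [NontriviallyNormedField 𝕜] {f : 𝕜 → 𝕜}
    {p : FormalMultilinearSeries 𝕜 𝕜 𝕜} [CompleteSpace 𝕜]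
    (hp : HasFPowerSeriesAt f p 0) (n : ℕ) :
    iteratedDeriv n f 0 = (n.factorial : 𝕜) * p.coeff n := by
  obtain ⟨r, hball⟩ := hp
  have h := hball.factorial_smul (1 : 𝕜) n
  rw [iteratedDeriv_eq_iteratedFDeriv]
  rw [← h, FormalMultilinearSeries.apply_eq_pow_smul_coeff]
  rw [nsmul_eq_mul]
  simp

lemma tendsto_sub_partial {f : ℝ → ℝ} {pr : FormalMultilinearSeries ℝ ℝ ℝ}
    (hpr : HasFPowerSeriesAt f pr 0) (k : ℕ) :
    Tendsto (fun s : ℝ => (f s - ∑ m ∈ Finset.range k, pr.coeff m * s ^ m) / s ^ k)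
      (𝓝[>] (0:ℝ)) (𝓝 (pr.coeff k)) := by
  have hO := hpr.isBigO_sub_partialSum_pow (k+1)
  simp only [zero_add] at hO
  rw [isBigO_iff] at hO
  obtain ⟨C, hC⟩ := hO
  have hps : ∀ s : ℝ, pr.partialSum (k+1) s
      = (∑ m ∈ Finset.range k, pr.coeff m * s ^ m) + pr.coeff k * s ^ k := by
    intro s
    rw [FormalMultilinearSeries.partialSum, Finset.sum_range_succ]
    congr 1
    · exact Finset.sum_congr rfl fun m _ => by
        rw [FormalMultilinearSeries.apply_eq_pow_smul_coeff, smul_eq_mul]; ring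
    · rw [FormalMultilinearSeries.apply_eq_pow_smul_coeff, smul_eq_mul]; ring
  have key : Tendsto (fun s : ℝ => (f s - pr.partialSum (k+1) s) / s ^ k)
      (𝓝[>] (0:ℝ)) (𝓝 0) := by
    have hbig : (fun s : ℝ => (f s - pr.partialSum (k+1) s) / s ^ k)
        =O[𝓝[>] (0:ℝ)] (fun s : ℝ => s) := by
      rw [isBigO_iff]
      refine ⟨C, ?_⟩
      filter_upwards [eventually_nhdsWithin_of_eventually_nhds hC, self_mem_nhdsWithin]
        with s hs (hs0 : 0 < s)
      have hsn : (0:ℝ) < ‖s‖ := by rw [norm_pos_iff]; exact ne_of_gt hs0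
      rw [norm_div, norm_pow]
      rw [div_le_iff₀ (by positivity)]
      calc ‖f s - pr.partialSum (k+1) s‖ ≤ C * ‖‖s‖^(k+1)‖ := hs
        _ = C * ‖s‖ * ‖s‖ ^ k := by rw [norm_pow, norm_norm]; ring
    exact hbig.trans_tendsto (tendsto_id.mono_left nhdsWithin_le_nhds)
  have := key.const_add (pr.coeff k)
  rw [add_zero] at this
  refine this.congr' ?_
  filter_upwards [self_mem_nhdsWithin] with s (hs : 0 < s)
  have hsk : s ^ k ≠ 0 := by positivity
  rw [hps s]
  field_simp
  ring


lemma ofReal_bernoulliGen (x : ℝ) : ((bernoulliGen x : ℝ) : ℂ) = Bc x := by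
  rcases eq_or_ne x 0 with rfl | hx
  · simp [bernoulliGen, Bc]
  · rw [bernoulliGen, if_neg hx, Bc, if_neg (Complex.ofReal_ne_zero.mpr hx)]
    push_cast [Complex.ofReal_exp]
    rfl

theorem ramanujan_smoothed_sum_figurate (k : ℕ) (hk : 1 ≤ k) :
    Tendsto (fun x : ℝ =>
        (∑' n : ℕ, ((n + k - 1).choose (k - 1) : ℝ) * x ^ (n + 1)) -
          ∑ m ∈ Finset.range k,
            taylorCoeff m (fun t => bernoulliGen t ^ k * Real.exp (((k : ℝ) - 1) * t)) *
              (-Real.log x) ^ ((m : ℤ) - (k : ℤ)))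
      (𝓝[Set.Ioo (0 : ℝ) 1] 1)
      (𝓝 ((-1 : ℝ) ^ k * taylorCoeff k gregoryGen)) := by
  obtain ⟨j, rfl⟩ : ∃ j, k = j + 1 := ⟨k - 1, (Nat.succ_pred_eq_of_pos hk).symm⟩
  set k := j + 1 with hkj
  -- complex functions
  set F₁ : ℂ → ℂ := fun t => Bc t ^ k * Complex.exp (((k:ℂ) - 1) * t) with hF₁def
  set F₂ : ℂ → ℂ := fun t => Bc t ^ k * Complex.exp t with hF₂def
  have hF₂a : AnalyticAt ℂ F₂ 0 :=
    (analyticAt_Bc.pow k).mul (Complex.differentiable_exp.analyticAt 0)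
  have hF₁a : AnalyticAt ℂ F₁ 0 := by
    apply (analyticAt_Bc.pow k).mul
    exact ((Complex.differentiable_exp.comp (differentiable_id.const_mul _)).analyticAt 0)
  obtain ⟨p, hp⟩ := hF₂a
  obtain ⟨q, hq⟩ := analyticAt_Gc
  have hcoeff : p.coeff k = q.coeff k := coeff_eq k hp hq
  -- reflection
  have hrefl : ∀ x : ℂ, F₂ (-x) = F₁ x := by
    intro x
    rw [hF₂def, hF₁def]
    simp only []
    rw [Bc_neg, mul_pow, mul_assoc]
    congr 1
    rw [← Complex.exp_nat_mul, ← Complex.exp_add]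
    congr 1
    push_cast
    ring
  have hiter₁ : iteratedDeriv k F₁ 0 = (-1:ℂ)^k • iteratedDeriv k F₂ 0 := by
    have h0 : F₁ = fun x => F₂ (-x) := funext fun x => (hrefl x).symm
    rw [h0, iteratedDeriv_comp_neg, neg_zero]
  have hd₂ : iteratedDeriv k F₂ 0 = (k.factorial : ℂ) * p.coeff k := coeff_eq_iteratedDeriv hp k
  have hdG : iteratedDeriv k Gc 0 = (k.factorial : ℂ) * q.coeff k := coeff_eq_iteratedDeriv hq k
  -- real function
  set fr : ℝ → ℝ := fun t => bernoulliGen t ^ k * Real.exp (((k:ℝ) - 1) * t) with hfrdef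
  have hfr_c : ∀ x : ℝ, ((fr x : ℝ) : ℂ) = F₁ x := by
    intro x
    rw [hfrdef, hF₁def]
    simp only []
    push_cast [ofReal_bernoulliGen, Complex.ofReal_exp]
    rfl
  have hgreg_c : ∀ᶠ x : ℝ in 𝓝 0, ((gregoryGen x : ℝ) : ℂ) = Gc x := by
    filter_upwards [Metric.ball_mem_nhds (0:ℝ) one_pos] with x hx
    rw [Real.ball_eq_Ioo] at hx
    have h1x : (0:ℝ) < 1 + x := by
      rcases hx with ⟨h1, h2⟩
      simp at h1
      linarith
    rcases eq_or_ne x 0 with rfl | hx0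
    · simp [gregoryGen, Gc]
    · rw [gregoryGen, if_neg hx0, Gc, if_neg (Complex.ofReal_ne_zero.mpr hx0)]
      push_cast [Complex.ofReal_log (le_of_lt h1x)]
      rfl
  -- key Taylor coefficient identity
  have hTk : taylorCoeff k fr = (-1:ℝ)^k * taylorCoeff k gregoryGen := by
    rw [taylorCoeff, taylorCoeff]
    rw [taylor_transfer hF₁a (Filter.Eventually.of_forall hfr_c) k,
        taylor_transfer analyticAt_Gc hgreg_c k]
    rw [hiter₁, hd₂, hdG, hcoeff]
    rw [smul_eq_mul, show ((-1:ℂ))^k = (((-1:ℝ)^k : ℝ) : ℂ) by push_cast; ring,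
      Complex.re_ofReal_mul]
    ring
  -- real analyticity of fr
  have hfra : AnalyticAt ℝ fr 0 := by
    have h1 : AnalyticAt ℝ F₁ 0 := hF₁a.restrictScalars
    have h2 : AnalyticAt ℝ (fun x : ℝ => F₁ (Complex.ofRealCLM x)) 0 := by
      have := AnalyticAt.comp (g := F₁) (by simpa using h1) (Complex.ofRealCLM.analyticAt 0)
      simpa [Function.comp_def] using this
    have h3 : AnalyticAt ℝ (fun x : ℝ => (Complex.reCLM (F₁ (Complex.ofRealCLM x)))) 0 := by
      have := AnalyticAt.comp (g := fun z => Complex.reCLM z) (Complex.reCLM.analyticAt _) h2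
      simpa [Function.comp_def] using this
    apply h3.congr
    filter_upwards with x
    show (F₁ x).re = fr x
    rw [← hfr_c x, Complex.ofReal_re]
  obtain ⟨pr, hpr⟩ := hfra
  have hcoeffr : ∀ m, pr.coeff m = taylorCoeff m fr := by
    intro m
    rw [taylorCoeff, coeff_eq_iteratedDeriv hpr m]
    field_simp
  have hlim := tendsto_sub_partial hpr k
  -- limit of -log
  have hs_tendsto : Tendsto (fun x : ℝ => -Real.log x) (𝓝[Set.Ioo 0 1] 1) (𝓝[>] 0) := by
    apply tendsto_nhdsWithin_of_tendsto_nhds_of_eventually_within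
    · have hc : Tendsto (fun x : ℝ => -Real.log x) (𝓝 1) (𝓝 (-Real.log 1)) :=
        ((Real.continuousAt_log one_ne_zero).neg).tendsto
      rw [Real.log_one, neg_zero] at hc
      exact hc.mono_left nhdsWithin_le_nhds
    · filter_upwards [self_mem_nhdsWithin] with x hx
      simp only [Set.mem_Ioi]
      have := Real.log_neg hx.1 hx.2
      linarith
  have hcomp := hlim.comp hs_tendsto
  -- now identify the functions on Ioo 0 1
  have hfun_eq : ∀ x ∈ Set.Ioo (0:ℝ) 1,
      (∑' n : ℕ, ((n + k - 1).choose (k - 1) : ℝ) * x ^ (n + 1)) -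
        ∑ m ∈ Finset.range k, taylorCoeff m fr * (-Real.log x) ^ ((m : ℤ) - (k : ℤ))
      = (fr (-Real.log x) - ∑ m ∈ Finset.range k, pr.coeff m * (-Real.log x) ^ m)
          / (-Real.log x) ^ k := by
    intro x hx
    obtain ⟨hx0, hx1⟩ := hx
    set s : ℝ := -Real.log x with hsdef
    have hs0 : 0 < s := by
      have := Real.log_neg hx0 hx1
      rw [hsdef]; linarith
    have hxs : x = Real.exp (-s) := by
      rw [hsdef, neg_neg, Real.exp_log hx0]
    set E : ℝ := Real.exp s with hEdef
    have hE1 : 1 < E := by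
      rw [hEdef, show (1:ℝ) = Real.exp 0 by simp]
      exact Real.exp_lt_exp.mpr hs0
    have hE0 : 0 < E := lt_trans one_pos hE1
    have hEs : Real.exp (-s) = E⁻¹ := by rw [hEdef, Real.exp_neg]
    -- tsum value
    have habs : |x| < 1 := by rw [abs_of_pos hx0]; exact hx1
    have htsum : (∑' n : ℕ, ((n + k - 1).choose (k - 1) : ℝ) * x ^ (n + 1))
        = x * (1 / (1-x)^k) := by
      have h1 : ∀ n : ℕ, ((n + k - 1).choose (k - 1) : ℝ) * x ^ (n + 1)
          = x * (((n + j).choose j : ℝ) * x ^ n) := by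
        intro n
        have : n + k - 1 = n + j := by omega
        rw [this, show k - 1 = j by omega, pow_succ]
        ring
      rw [tsum_congr h1, tsum_mul_left,
        tsum_choose_mul_geometric_of_norm_lt_one j (by rwa [Real.norm_eq_abs])]
    -- fr value
    have hfrs : fr s = E^j * (s / (E-1))^k := by
      rw [hfrdef]
      simp only []
      rw [bernoulliGen, if_neg (ne_of_gt hs0)]
      rw [show ((k:ℝ) - 1) * s = (j:ℝ) * s by push_cast [hkj]; ring, Real.exp_nat_mul, ← hEdef]
      rw [div_pow]
      ring
    have hE1' : E - 1 ≠ 0 := by linarith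
    have hsk : s ^ k ≠ 0 := by positivity
    have hmain : x * (1 / (1-x)^k) = fr s / s^k := by
      rw [hfrs, hxs, hEs]
      have h1x : 1 - E⁻¹ = (E-1)/E := by field_simp
      rw [h1x, div_pow, div_pow]
      field_simp
      ring
    rw [htsum, hmain]
    rw [sub_div, Finset.sum_div]
    congr 1
    apply Finset.sum_congr rfl
    intro m hm
    rw [hcoeffr m]
    rw [show (m:ℤ) - (k:ℤ) = (m:ℤ) + (-(k:ℤ)) by ring, zpow_add₀ (ne_of_gt hs0),
      zpow_natCast, zpow_neg, zpow_natCast]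
    rw [div_eq_mul_inv, mul_assoc]
  -- conclude
  rw [show ((-1:ℝ))^k * taylorCoeff k gregoryGen = pr.coeff k by rw [hcoeffr k, hTk]]
  apply hcomp.congr'
  filter_upwards [self_mem_nhdsWithin] with x hx
  exact (hfun_eq x hx).symm
end

section
/- For real x with 0 < x < 1, the series Σ_{n=1}^∞ (n(n+1)/2)·xⁿ of triangular numbers converges, and the limit as x → 1⁻ of (Σ_{n=1}^∞ (n(n+1)/2)·xⁿ − 1/(−log x)³ − 1/(2(−log x)²)) equals −1/24; that is, the Ramanujan smoothed sum of the triangular numbers 1 + 3 + 6 + 10 + 15 + ⋯ is −1/24. -/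
open Filter Topology

set_option maxHeartbeats 2000000

lemma tri_hasSum {x : ℝ} (h1 : -1 < x) (h2 : x < 1) :
    HasSum (fun n : ℕ => ((((n + 1) * (n + 2) : ℕ) : ℝ) / 2) * x ^ (n + 1))
      (x / (1 - x) ^ 3) := by
  have hx : ‖x‖ < 1 := by rw [Real.norm_eq_abs, abs_lt]; exact ⟨h1, h2⟩
  have H := (hasSum_choose_mul_geometric_of_norm_lt_one 2 hx).mul_right x
  convert H using 1 with n
  · rfl
  · funext n
    have hc : (n + 2).choose 2 * 2 = (n + 1) * (n + 2) := by
      rw [Nat.choose_two_right]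
      have hd : 2 ∣ (n + 2) * (n + 2 - 1) := by
        have := Nat.even_mul_succ_self (n + 1)
        simpa [Nat.mul_comm, Nat.mul_succ, Nat.succ_mul] using this.two_dvd
      rw [Nat.div_mul_cancel hd]
      simp [Nat.add_sub_cancel]
      ring
    have hc' : ((n + 2).choose 2 : ℝ) = (((n + 1) * (n + 2) : ℕ) : ℝ) / 2 := by
      field_simp
      exact_mod_cast hc
    rw [hc', pow_succ]
    ring
  · ring

lemma exp_remainder {y : ℝ} (hy : |y| ≤ 1) :
    |Real.exp y - (1 + y + y^2/2 + y^3/6 + y^4/24 + y^5/120 + y^6/720)| ≤ |y|^7 / 4410 := by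
  have H := Real.exp_bound hy (n := 7) (by norm_num)
  have he : ∑ i ∈ Finset.range 7, y ^ i / (Nat.factorial i : ℝ) =
      1 + y + y^2/2 + y^3/6 + y^4/24 + y^5/120 + y^6/720 := by
    simp [Finset.sum_range_succ, Nat.factorial]
  rw [he] at H
  refine H.trans (le_of_eq ?_)
  norm_num [Nat.factorial]
  ring

lemma N_bound {t : ℝ} (ht : 0 < t) (ht3 : t ≤ 1/3) :
    |(2*t^3*Real.exp (-t) - (2+t)*(1-Real.exp (-t))^3) / t^6 + 1/12| ≤ 3*t := by
  set E := Real.exp (-t) with hE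
  set a : ℝ := E - (1 + (-t) + (-t)^2/2 + (-t)^3/6 + (-t)^4/24 + (-t)^5/120 + (-t)^6/720) with ha
  set b : ℝ := Real.exp (-(2*t)) - (1 + (-(2*t)) + (-(2*t))^2/2 + (-(2*t))^3/6 + (-(2*t))^4/24 + (-(2*t))^5/120 + (-(2*t))^6/720) with hb
  set c : ℝ := Real.exp (-(3*t)) - (1 + (-(3*t)) + (-(3*t))^2/2 + (-(3*t))^3/6 + (-(3*t))^4/24 + (-(3*t))^5/120 + (-(3*t))^6/720) with hc
  have habs : |(-t)| ≤ 1 := by rw [abs_neg, abs_of_pos ht]; linarith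
  have habs2 : |(-(2*t))| ≤ 1 := by rw [abs_neg, abs_of_pos (by linarith)]; linarith
  have habs3 : |(-(3*t))| ≤ 1 := by rw [abs_neg, abs_of_pos (by linarith)]; linarith
  have h1 : |a| ≤ t^7/4410 := by
    have := exp_remainder habs
    rwa [abs_neg, abs_of_pos ht] at this
  have h2 : |b| ≤ 128*t^7/4410 := by
    have := exp_remainder habs2
    rw [abs_neg, abs_of_pos (by linarith : (0:ℝ) < 2*t)] at this
    calc |b| ≤ (2*t)^7/4410 := this
      _ = 128*t^7/4410 := by ring
  have h3 : |c| ≤ 2187*t^7/4410 := by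
    have := exp_remainder habs3
    rw [abs_neg, abs_of_pos (by linarith : (0:ℝ) < 3*t)] at this
    calc |c| ≤ (3*t)^7/4410 := this
      _ = 2187*t^7/4410 := by ring
  have hE2 : Real.exp (-(2*t)) = E^2 := by
    rw [hE, ← Real.exp_nat_mul]; norm_num
  have hE3 : Real.exp (-(3*t)) = E^3 := by
    rw [hE, ← Real.exp_nat_mul]; norm_num
  have key : 2*t^3*E - (2+t)*(1-E)^3 + t^6/12 =
      (2*t^3 + 3*(2+t))*a - 3*(2+t)*b + (2+t)*c + (5/6*t^7 - t^8/60 + t^9/360) := by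
    rw [ha, hb, hc, hE2, hE3]
    ring
  have hub : |2*t^3*E - (2+t)*(1-E)^3 + t^6/12| ≤ 3*t^7 := by
    rw [key]
    have t1 : |(2*t^3 + 3*(2+t))*a| ≤ (2*t^3 + 3*(2+t))*(t^7/4410) := by
      rw [abs_mul, abs_of_pos (by nlinarith : (0:ℝ) < 2*t^3 + 3*(2+t))]
      exact mul_le_mul_of_nonneg_left h1 (by nlinarith)
    have t2 : |3*(2+t)*b| ≤ 3*(2+t)*(128*t^7/4410) := by
      rw [abs_mul, abs_of_pos (by nlinarith : (0:ℝ) < 3*(2+t))]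
      exact mul_le_mul_of_nonneg_left h2 (by nlinarith)
    have t3 : |(2+t)*c| ≤ (2+t)*(2187*t^7/4410) := by
      rw [abs_mul, abs_of_pos (by nlinarith : (0:ℝ) < 2+t)]
      exact mul_le_mul_of_nonneg_left h3 (by nlinarith)
    have t4 : |5/6*t^7 - t^8/60 + t^9/360| ≤ 5/6*t^7 + t^8/60 + t^9/360 := by
      rw [abs_le]
      constructor <;> nlinarith [pow_pos ht 7, pow_pos ht 8, pow_pos ht 9]
    have chain : |(2*t^3 + 3*(2+t))*a - 3*(2+t)*b + (2+t)*c + (5/6*t^7 - t^8/60 + t^9/360)| ≤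
        |(2*t^3 + 3*(2+t))*a| + |3*(2+t)*b| + |(2+t)*c| + |5/6*t^7 - t^8/60 + t^9/360| := by
      calc |(2*t^3 + 3*(2+t))*a - 3*(2+t)*b + (2+t)*c + (5/6*t^7 - t^8/60 + t^9/360)|
          ≤ |(2*t^3 + 3*(2+t))*a - 3*(2+t)*b + (2+t)*c| + |5/6*t^7 - t^8/60 + t^9/360| :=
            abs_add_le _ _
        _ ≤ (|(2*t^3 + 3*(2+t))*a - 3*(2+t)*b| + |(2+t)*c|) + |5/6*t^7 - t^8/60 + t^9/360| := by
            gcongr; exact abs_add_le _ _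
        _ ≤ ((|(2*t^3 + 3*(2+t))*a| + |3*(2+t)*b|) + |(2+t)*c|) + |5/6*t^7 - t^8/60 + t^9/360| := by
            gcongr; exact abs_sub _ _
        _ = _ := by ring
    have hmul1 : t^7 * t ≤ t^7 * (1/3) := mul_le_mul_of_nonneg_left ht3 (le_of_lt (pow_pos ht 7))
    have hmul2 : t^8 * t ≤ t^8 * (1/3) := mul_le_mul_of_nonneg_left ht3 (le_of_lt (pow_pos ht 8))
    have hmul3 : t^9 * t ≤ t^9 * (1/3) := mul_le_mul_of_nonneg_left ht3 (le_of_lt (pow_pos ht 9))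
    refine chain.trans ?_
    nlinarith [pow_pos ht 7, pow_pos ht 8, pow_pos ht 9, t1, t2, t3, t4]
  have hre : (2*t^3*E - (2+t)*(1-E)^3)/t^6 + 1/12 =
      (2*t^3*E - (2+t)*(1-E)^3 + t^6/12)/t^6 := by
    field_simp
  rw [hre, abs_div, abs_of_pos (pow_pos ht 6), div_le_iff₀ (pow_pos ht 6)]
  have h36 : 3*t*t^6 = 3*t^7 := by ring
  rw [h36]
  exact hub

lemma tendsto_N : Tendsto (fun t : ℝ =>
    (2*t^3*Real.exp (-t) - (2+t)*(1-Real.exp (-t))^3) / t^6) (𝓝[>] (0:ℝ)) (𝓝 (-1/12)) := by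
  have h0 : Tendsto (fun t : ℝ =>
      (2*t^3*Real.exp (-t) - (2+t)*(1-Real.exp (-t))^3) / t^6 + 1/12) (𝓝[>] (0:ℝ)) (𝓝 0) := by
    apply squeeze_zero_norm' (a := fun t => 3*t)
    · filter_upwards [Ioc_mem_nhdsGT_of_mem (show (0:ℝ) ∈ Set.Ico (0:ℝ) (1/3) from ⟨le_refl 0, by norm_num⟩)] with t ht
      exact N_bound ht.1 ht.2
    · have : Tendsto (fun t : ℝ => 3*t) (𝓝 0) (𝓝 0) := by
        have := (continuous_const.mul continuous_id : Continuous fun t : ℝ => 3*t).tendsto 0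
        simpa [Pi.mul_def] using this
      exact this.mono_left nhdsWithin_le_nhds
  have heq : (fun t : ℝ =>
      (2*t^3*Real.exp (-t) - (2+t)*(1-Real.exp (-t))^3) / t^6) = (fun t : ℝ =>
      ((2*t^3*Real.exp (-t) - (2+t)*(1-Real.exp (-t))^3) / t^6 + 1/12) + (-1/12)) := by
    funext t; ring
  rw [heq]
  have := h0.add_const (-1/12)
  norm_num at this ⊢
  exact this

lemma tendsto_ratio : Tendsto (fun t : ℝ => (1 - Real.exp (-t))/t) (𝓝[>] (0:ℝ)) (𝓝 1) := by
  have hd := Real.hasDerivAt_exp 0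
  rw [hasDerivAt_iff_tendsto_slope] at hd
  have hneg : Tendsto (fun t : ℝ => -t) (𝓝[>] (0:ℝ)) (𝓝[≠] (0:ℝ)) := by
    rw [tendsto_nhdsWithin_iff]
    constructor
    · simpa using (continuous_neg.tendsto (0:ℝ)).mono_left nhdsWithin_le_nhds
    · filter_upwards [self_mem_nhdsWithin] with t ht
      simpa using ne_of_lt (neg_neg_of_pos ht)
  have H := hd.comp hneg
  rw [Real.exp_zero] at H
  refine Tendsto.congr' ?_ H
  filter_upwards [self_mem_nhdsWithin] with t ht
  have ht' : t ≠ 0 := ne_of_gt ht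
  simp only [Function.comp_apply, slope_def_field, Real.exp_zero]
  rw [sub_zero, div_neg, ← neg_div, neg_sub]

lemma tendsto_main_t : Tendsto (fun t : ℝ =>
    Real.exp (-t)/(1-Real.exp (-t))^3 - 1/t^3 - 1/(2*t^2)) (𝓝[>] (0:ℝ)) (𝓝 (-1/24)) := by
  have hden : Tendsto (fun t : ℝ => 2*((1 - Real.exp (-t))/t)^3) (𝓝[>] (0:ℝ)) (𝓝 2) := by
    have := (tendsto_ratio.pow 3).const_mul (2:ℝ)
    simpa using this
  have H := tendsto_N.div hden (by norm_num)
  have : (-1/12 : ℝ) / 2 = -1/24 := by norm_num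
  rw [this] at H
  refine Tendsto.congr' ?_ H
  filter_upwards [self_mem_nhdsWithin] with t ht
  have ht0 : (0:ℝ) < t := ht
  have ht' : (t:ℝ) ≠ 0 := ne_of_gt ht0
  have hE : Real.exp (-t) < 1 := Real.exp_lt_one_iff.mpr (by linarith)
  have h1E : (1:ℝ) - Real.exp (-t) ≠ 0 := by linarith
  simp only [Pi.div_apply]
  field_simp
  ring

theorem ramanujan_sum_of_triangular_numbers :
    (∀ x : ℝ, 0 < x → x < 1 →
      Summable (fun n : ℕ => ((((n + 1) * (n + 2) : ℕ) : ℝ) / 2) * x ^ (n + 1))) ∧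
    Tendsto (fun x : ℝ =>
        (∑' n : ℕ, ((((n + 1) * (n + 2) : ℕ) : ℝ) / 2) * x ^ (n + 1)) -
          1 / (-Real.log x) ^ 3 - 1 / (2 * (-Real.log x) ^ 2))
      (𝓝[Set.Ioo (0 : ℝ) 1] 1) (𝓝 (-1 / 24)) := by
  constructor
  · exact fun x hx0 hx1 => (tri_hasSum (by linarith) hx1).summable
  · have hsub : Tendsto (fun x : ℝ => -Real.log x) (𝓝[Set.Ioo (0:ℝ) 1] 1) (𝓝[>] (0:ℝ)) := by
      rw [tendsto_nhdsWithin_iff]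
      constructor
      · have hlog : Tendsto Real.log (𝓝 1) (𝓝 0) := by
          have := (Real.continuousAt_log (by norm_num : (1:ℝ) ≠ 0)).tendsto
          simpa [Real.log_one] using this
        have := hlog.neg
        simp only [neg_zero] at this
        exact this.mono_left nhdsWithin_le_nhds
      · filter_upwards [self_mem_nhdsWithin] with x hx
        simpa using neg_pos.mpr (Real.log_neg hx.1 hx.2)
    have H := tendsto_main_t.comp hsub
    refine Tendsto.congr' ?_ H
    filter_upwards [self_mem_nhdsWithin] with x hx
    have hx0 : (0:ℝ) < x := hx.1
    have hx1 : x < 1 := hx.2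
    have hexp : Real.exp (-(-Real.log x)) = x := by rw [neg_neg, Real.exp_log hx0]
    have htsum : (∑' n : ℕ, ((((n + 1) * (n + 2) : ℕ) : ℝ) / 2) * x ^ (n + 1)) =
        x / (1 - x) ^ 3 := (tri_hasSum (by linarith) hx1).tsum_eq
    simp only [Function.comp_apply, hexp, htsum]
end
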